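/- arXiv:1602.02063 — 6 statements merged into one kernel-verified Lean document; each statement's English description precedes it below -/
import Mathlib

section
/- Suppose m = n = T (no redundant players). Then the maximin value and the minimax value of the team competition coincide and both equal the uniform average over all matchings: V(∅,∅,0) = W(∅,∅,0) = (1/T!)·Σ_{σ ∈ S_T} Σ_{S ⊆ {1,…,T}} U(|S|)·∏_{i∈S} P i σ(i)·∏_{i∉S} (1 − P i σ(i)), where S_T denotes the set of all bijections σ of {1,…,T}. (Equivalently, playing the remaining players uniformly at random in every round is a subgame perfect equilibrium strategy for both teams.) -/
/-- Value function of the team competition `G(T,P,U)`, by backward induction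
(Team 1 maximizes first, i.e. the maximin value).
`gval m n P U r X Y w` is the value of the state where the players in `X` (Team 1)
and `Y` (Team 2) have already played, Team 1 has won `w` rounds so far, and
`r = T - |X|` rounds remain to be played. -/
noncomputable def gval (m n : ℕ) (P : Fin m → Fin n → ℝ) (U : ℕ → ℝ) :
    ℕ → Finset (Fin m) → Finset (Fin n) → ℕ → ℝ
  | 0, _, _, w => U w
  | r + 1, X, Y, w =>
      sSup {v : ℝ | ∃ p : Fin m → ℝ,
        (∀ i, 0 ≤ p i) ∧ (∀ i ∈ X, p i = 0) ∧ (∑ i, p i) = 1 ∧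
        v = sInf {u : ℝ | ∃ j, j ∉ Y ∧
          u = ∑ i, p i *
            (P i j * gval m n P U r (insert i X) (insert j Y) (w + 1) +
             (1 - P i j) * gval m n P U r (insert i X) (insert j Y) w)}}

/-- The minimax value function: the same backward induction with the roles of the
two teams exchanged (Team 2 minimizes first). -/
noncomputable def wval (m n : ℕ) (P : Fin m → Fin n → ℝ) (U : ℕ → ℝ) :
    ℕ → Finset (Fin m) → Finset (Fin n) → ℕ → ℝ
  | 0, _, _, w => U w
  | r + 1, X, Y, w =>
      sInf {v : ℝ | ∃ q : Fin n → ℝ,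
        (∀ j, 0 ≤ q j) ∧ (∀ j ∈ Y, q j = 0) ∧ (∑ j, q j) = 1 ∧
        v = sSup {u : ℝ | ∃ i, i ∉ X ∧
          u = ∑ j, q j *
            (P i j * wval m n P U r (insert i X) (insert j Y) (w + 1) +
             (1 - P i j) * wval m n P U r (insert i X) (insert j Y) w)}}


open Finset Equiv

/-- Unnormalized sum over all matchings. -/
noncomputable def eSum (r : ℕ) (Q : Fin r → Fin r → ℝ) (V : ℕ → ℝ) : ℝ :=
  ∑ π : Equiv.Perm (Fin r), ∑ S : Finset (Fin r),
    V S.card * (∏ x ∈ S, Q x (π x)) * ∏ x ∈ Sᶜ, (1 - Q x (π x))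

/-- Minor of a matrix obtained by deleting row `a` and column `b`. -/
def minor {r : ℕ} (Q : Fin (r+1) → Fin (r+1) → ℝ) (a b : Fin (r+1)) :
    Fin r → Fin r → ℝ :=
  fun x y => Q (a.succAbove x) (b.succAbove y)

/-- The permutation of `Fin (r+1)` sending `a` to `b` and `a.succAbove x` to
`b.succAbove (π x)`. -/
def permExt {r : ℕ} (a b : Fin (r+1)) (π : Equiv.Perm (Fin r)) : Equiv.Perm (Fin (r+1)) :=
  ((finSuccEquiv' a).trans π.optionCongr).trans (finSuccEquiv' b).symm

@[simp] lemma permExt_apply_self {r : ℕ} (a b : Fin (r+1)) (π : Equiv.Perm (Fin r)) :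
    permExt a b π a = b := by
  simp [permExt, finSuccEquiv'_symm_none]

@[simp] lemma permExt_apply_succAbove {r : ℕ} (a b : Fin (r+1)) (π : Equiv.Perm (Fin r))
    (x : Fin r) : permExt a b π (a.succAbove x) = b.succAbove (π x) := by
  simp [permExt, finSuccEquiv'_succAbove, finSuccEquiv'_symm_some]

lemma permExt_bijective {r : ℕ} (b : Fin (r+1)) :
    Function.Bijective (fun q : Fin (r+1) × Equiv.Perm (Fin r) => permExt q.1 b q.2) := by
  rw [Fintype.bijective_iff_injective_and_card]
  constructor
  · rintro ⟨a, π⟩ ⟨a', π'⟩ h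
    simp only at h
    have ha : a = a' := by
      have h1 : permExt a b π a = b := permExt_apply_self a b π
      have h2 : permExt a' b π' a' = b := permExt_apply_self a' b π'
      rw [h] at h1
      exact (permExt a' b π').injective (h1.trans h2.symm)
    subst ha
    have hπ : π = π' := by
      ext x
      have := congrArg (fun σ : Equiv.Perm (Fin (r+1)) => σ (a.succAbove x)) h
      simp only [permExt_apply_succAbove] at this
      exact congrArg _ (Fin.succAbove_right_injective this)
    rw [hπ]
  · simp [Fintype.card_perm, Nat.factorial_succ]

/-- Decomposition of a sum over permutations of `Fin (r+1)` by the preimage of `b`. -/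
lemma sum_perm_decomp {r : ℕ} (b : Fin (r+1)) (f : Equiv.Perm (Fin (r+1)) → ℝ) :
    ∑ σ : Equiv.Perm (Fin (r+1)), f σ =
      ∑ a : Fin (r+1), ∑ π : Equiv.Perm (Fin r), f (permExt a b π) := by
  rw [← (Function.Bijective.sum_comp (permExt_bijective b) f), Fintype.sum_prod_type]

lemma compl_map_succAbove {r : ℕ} (a : Fin (r+1)) (S : Finset (Fin r)) :
    (S.map (a.succAboveOrderEmb).toEmbedding)ᶜ =
      insert a (Sᶜ.map (a.succAboveOrderEmb).toEmbedding) := by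
  ext x
  simp only [Finset.mem_compl, Finset.mem_map, Finset.mem_insert,
    Fin.succAboveOrderEmb, OrderEmbedding.coe_ofStrictMono, Function.Embedding.coeFn_mk]
  constructor
  · intro hx
    by_cases hxa : x = a
    · exact Or.inl hxa
    · obtain ⟨z, hz⟩ := Fin.exists_succAbove_eq (Ne.symm (Ne.symm hxa))
      refine Or.inr ⟨z, ?_, hz⟩
      intro hzS
      exact hx ⟨z, hzS, hz⟩
  · rintro (rfl | ⟨z, hzS, rfl⟩)
    · rintro ⟨y, _, hy⟩
      exact Fin.succAbove_ne _ y hy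
    · rintro ⟨y, hyS, hy⟩
      have : y = z := Fin.succAbove_right_injective hy
      exact hzS (this ▸ hyS)

lemma a_notMem_map_succAbove {r : ℕ} (a : Fin (r+1)) (S : Finset (Fin r)) :
    a ∉ S.map (a.succAboveOrderEmb).toEmbedding := by
  simp only [Finset.mem_map, Fin.succAboveOrderEmb, OrderEmbedding.coe_ofStrictMono,
    Function.Embedding.coeFn_mk]
  rintro ⟨y, _, hy⟩
  exact Fin.succAbove_ne a y hy

lemma sum_finset_decomp {r : ℕ} (a : Fin (r+1)) (h : Finset (Fin (r+1)) → ℝ) :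
    ∑ S : Finset (Fin (r+1)), h S =
      ∑ S : Finset (Fin r), (h (S.map (a.succAboveOrderEmb).toEmbedding)
        + h (insert a (S.map (a.succAboveOrderEmb).toEmbedding))) := by
  have hbij : Function.Bijective (fun q : Bool × Finset (Fin r) =>
      cond q.1 (insert a (q.2.map (a.succAboveOrderEmb).toEmbedding))
      (q.2.map (a.succAboveOrderEmb).toEmbedding)) := by
    rw [Fintype.bijective_iff_injective_and_card]
    constructor
    · rintro ⟨c, S⟩ ⟨c', S'⟩ hq
      simp only at hq
      have hmapinj : Function.Injective
          (fun S : Finset (Fin r) => S.map (a.succAboveOrderEmb).toEmbedding) :=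
        fun u v huv => Finset.map_injective _ huv
      match c, c' with
      | false, false =>
        simp only [Bool.cond_false] at hq
        exact Prod.ext rfl (hmapinj hq)
      | true, true =>
        simp only [Bool.cond_true] at hq
        have : S.map (a.succAboveOrderEmb).toEmbedding
            = S'.map (a.succAboveOrderEmb).toEmbedding := by
          have h1 := a_notMem_map_succAbove a S
          have h2 := a_notMem_map_succAbove a S'
          rw [← Finset.erase_insert h1, ← Finset.erase_insert h2, hq]
        exact Prod.ext rfl (hmapinj this)
      | false, true =>
        simp only [Bool.cond_true, Bool.cond_false] at hq
        exact absurd (hq ▸ Finset.mem_insert_self a _) (a_notMem_map_succAbove a S)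
      | true, false =>
        simp only [Bool.cond_true, Bool.cond_false] at hq
        exact absurd (hq.symm ▸ Finset.mem_insert_self a _) (a_notMem_map_succAbove a S')
    · simp [Fintype.card_finset, pow_succ, mul_comm]
  rw [← Function.Bijective.sum_comp hbij h, Fintype.sum_prod_type, Fintype.sum_bool]
  rw [← Finset.sum_add_distrib]
  simp [add_comm]
lemma term_map {r : ℕ} (Q : Fin (r+1) → Fin (r+1) → ℝ) (V : ℕ → ℝ) (a b : Fin (r+1))
    (π : Equiv.Perm (Fin r)) (S' : Finset (Fin r)) :
    V (S'.map (a.succAboveOrderEmb).toEmbedding).card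
      * (∏ x ∈ S'.map (a.succAboveOrderEmb).toEmbedding, Q x (permExt a b π x))
      * ∏ x ∈ (S'.map (a.succAboveOrderEmb).toEmbedding)ᶜ, (1 - Q x (permExt a b π x))
    = (1 - Q a b) * (V S'.card * (∏ y ∈ S', minor Q a b y (π y))
        * ∏ y ∈ S'ᶜ, (1 - minor Q a b y (π y))) := by
  rw [Finset.card_map, Finset.prod_map, compl_map_succAbove,
    Finset.prod_insert (a_notMem_map_succAbove a S'ᶜ), Finset.prod_map, permExt_apply_self]
  simp only [RelEmbedding.coe_toEmbedding, Fin.succAboveOrderEmb, OrderEmbedding.coe_ofStrictMono,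
    Function.Embedding.coeFn_mk, permExt_apply_succAbove, minor]
  ring

lemma term_insert {r : ℕ} (Q : Fin (r+1) → Fin (r+1) → ℝ) (V : ℕ → ℝ) (a b : Fin (r+1))
    (π : Equiv.Perm (Fin r)) (S' : Finset (Fin r)) :
    V (insert a (S'.map (a.succAboveOrderEmb).toEmbedding)).card
      * (∏ x ∈ insert a (S'.map (a.succAboveOrderEmb).toEmbedding), Q x (permExt a b π x))
      * ∏ x ∈ (insert a (S'.map (a.succAboveOrderEmb).toEmbedding))ᶜ, (1 - Q x (permExt a b π x))
    = Q a b * (V (S'.card + 1) * (∏ y ∈ S', minor Q a b y (π y))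
        * ∏ y ∈ S'ᶜ, (1 - minor Q a b y (π y))) := by
  rw [Finset.card_insert_of_notMem (a_notMem_map_succAbove a S'), Finset.card_map,
    Finset.prod_insert (a_notMem_map_succAbove a S'), Finset.prod_map,
    Finset.compl_insert, compl_map_succAbove,
    Finset.erase_insert (a_notMem_map_succAbove a S'ᶜ), Finset.prod_map, permExt_apply_self]
  simp only [RelEmbedding.coe_toEmbedding, Fin.succAboveOrderEmb, OrderEmbedding.coe_ofStrictMono,
    Function.Embedding.coeFn_mk, permExt_apply_succAbove, minor]
  ring

/-- Row decomposition of the matching sum: condition on the opponent of column `b`. -/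
lemma eSum_row {r : ℕ} (Q : Fin (r+1) → Fin (r+1) → ℝ) (V : ℕ → ℝ) (b : Fin (r+1)) :
    eSum (r+1) Q V = ∑ a : Fin (r+1),
      (Q a b * eSum r (minor Q a b) (fun t => V (t+1))
        + (1 - Q a b) * eSum r (minor Q a b) V) := by
  rw [eSum, sum_perm_decomp b]
  refine Finset.sum_congr rfl fun a _ => ?_
  have step : ∀ π : Equiv.Perm (Fin r),
      (∑ S : Finset (Fin (r+1)), V S.card * (∏ x ∈ S, Q x (permExt a b π x))
        * ∏ x ∈ Sᶜ, (1 - Q x (permExt a b π x)))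
      = ∑ S' : Finset (Fin r),
          (Q a b * (V (S'.card + 1) * (∏ y ∈ S', minor Q a b y (π y))
              * ∏ y ∈ S'ᶜ, (1 - minor Q a b y (π y)))
           + (1 - Q a b) * (V S'.card * (∏ y ∈ S', minor Q a b y (π y))
              * ∏ y ∈ S'ᶜ, (1 - minor Q a b y (π y)))) := by
    intro π
    rw [sum_finset_decomp a (fun S => V S.card * (∏ x ∈ S, Q x (permExt a b π x))
      * ∏ x ∈ Sᶜ, (1 - Q x (permExt a b π x)))]
    refine Finset.sum_congr rfl fun S' _ => ?_
    rw [term_map Q V a b π S', term_insert Q V a b π S']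
    ring
  calc ∑ π : Equiv.Perm (Fin r), ∑ S : Finset (Fin (r+1)),
        V S.card * (∏ x ∈ S, Q x (permExt a b π x)) * ∏ x ∈ Sᶜ, (1 - Q x (permExt a b π x))
      = ∑ π : Equiv.Perm (Fin r), ∑ S' : Finset (Fin r),
          (Q a b * (V (S'.card + 1) * (∏ y ∈ S', minor Q a b y (π y))
              * ∏ y ∈ S'ᶜ, (1 - minor Q a b y (π y)))
           + (1 - Q a b) * (V S'.card * (∏ y ∈ S', minor Q a b y (π y))
              * ∏ y ∈ S'ᶜ, (1 - minor Q a b y (π y)))) :=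
        Finset.sum_congr rfl fun π _ => step π
    _ = Q a b * eSum r (minor Q a b) (fun t => V (t+1))
        + (1 - Q a b) * eSum r (minor Q a b) V := by
        rw [eSum, eSum]
        simp only [Finset.sum_add_distrib, Finset.mul_sum]
lemma compl_map_equiv {α : Type*} [Fintype α] [DecidableEq α] (τ : α ≃ α) (S : Finset α) :
    (S.map τ.toEmbedding)ᶜ = Sᶜ.map τ.toEmbedding := by
  ext x
  simp [Finset.mem_map_equiv]

lemma eSum_transpose {r : ℕ} (Q : Fin r → Fin r → ℝ) (V : ℕ → ℝ) :
    eSum r (fun x y => Q y x) V = eSum r Q V := by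
  rw [eSum, eSum]
  rw [← Equiv.sum_comp (Equiv.inv (Equiv.Perm (Fin r)))
    (fun σ : Equiv.Perm (Fin r) => ∑ S : Finset (Fin r),
      V S.card * (∏ x ∈ S, Q (σ x) x) * ∏ x ∈ Sᶜ, (1 - Q (σ x) x))]
  refine Fintype.sum_congr _ _ fun τ => ?_
  rw [← Equiv.sum_comp τ.finsetCongr (fun S : Finset (Fin r) =>
    V S.card * (∏ x ∈ S, Q ((Equiv.inv (Equiv.Perm (Fin r)) τ) x) x)
      * ∏ x ∈ Sᶜ, (1 - Q ((Equiv.inv (Equiv.Perm (Fin r)) τ) x) x))]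
  refine Fintype.sum_congr _ _ fun S => ?_
  simp only [Equiv.finsetCongr_apply, Finset.card_map, compl_map_equiv, Finset.prod_map,
    Equiv.coe_toEmbedding, Equiv.inv_apply, Equiv.Perm.inv_def, Equiv.symm_apply_apply]

/-- Column decomposition of the matching sum: condition on the opponent of row `a`. -/
lemma eSum_col {r : ℕ} (Q : Fin (r+1) → Fin (r+1) → ℝ) (V : ℕ → ℝ) (a : Fin (r+1)) :
    eSum (r+1) Q V = ∑ b : Fin (r+1),
      (Q a b * eSum r (minor Q a b) (fun t => V (t+1))
        + (1 - Q a b) * eSum r (minor Q a b) V) := by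
  have h := eSum_row (fun x y => Q y x) V a
  rw [eSum_transpose] at h
  rw [h]
  refine Finset.sum_congr rfl fun b _ => ?_
  have h1 : eSum r (minor (fun x y => Q y x) b a) (fun t => V (t+1))
      = eSum r (minor Q a b) (fun t => V (t+1)) := eSum_transpose (minor Q a b) _
  have h2 : eSum r (minor (fun x y => Q y x) b a) V
      = eSum r (minor Q a b) V := eSum_transpose (minor Q a b) V
  rw [h1, h2]

/-- Normalized average over all matchings. -/
noncomputable def EV (r : ℕ) (Q : Fin r → Fin r → ℝ) (V : ℕ → ℝ) : ℝ :=
  (r.factorial : ℝ)⁻¹ * eSum r Q V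

lemma EV_row {r : ℕ} (Q : Fin (r+1) → Fin (r+1) → ℝ) (V : ℕ → ℝ) (b : Fin (r+1)) :
    EV (r+1) Q V = ∑ a : Fin (r+1), ((r+1 : ℝ))⁻¹ *
      (Q a b * EV r (minor Q a b) (fun t => V (t+1))
        + (1 - Q a b) * EV r (minor Q a b) V) := by
  rw [EV, eSum_row Q V b, Finset.mul_sum]
  refine Finset.sum_congr rfl fun a _ => ?_
  rw [EV, EV, Nat.factorial_succ]
  push_cast
  have h1 : ((r.factorial : ℝ)) ≠ 0 := Nat.cast_ne_zero.2 (Nat.factorial_ne_zero r)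
  have h2 : ((r : ℝ) + 1) ≠ 0 := by positivity
  field_simp
  try ring

lemma EV_col {r : ℕ} (Q : Fin (r+1) → Fin (r+1) → ℝ) (V : ℕ → ℝ) (a : Fin (r+1)) :
    EV (r+1) Q V = ∑ b : Fin (r+1), ((r+1 : ℝ))⁻¹ *
      (Q a b * EV r (minor Q a b) (fun t => V (t+1))
        + (1 - Q a b) * EV r (minor Q a b) V) := by
  rw [EV, eSum_col Q V a, Finset.mul_sum]
  refine Finset.sum_congr rfl fun b _ => ?_
  rw [EV, EV, Nat.factorial_succ]
  push_cast
  have h1 : ((r.factorial : ℝ)) ≠ 0 := Nat.cast_ne_zero.2 (Nat.factorial_ne_zero r)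
  have h2 : ((r : ℝ) + 1) ≠ 0 := by positivity
  field_simp
  try ring
lemma sum_orderEmbOfFin {T k : ℕ} (s : Finset (Fin T)) (hs : s.card = k) (f : Fin T → ℝ) :
    ∑ i ∈ s, f i = ∑ a : Fin k, f (s.orderEmbOfFin hs a) := by
  refine (Finset.sum_bij (fun (a : Fin k) _ => s.orderEmbOfFin hs a) ?_ ?_ ?_ ?_).symm
  · intro a _; exact Finset.orderEmbOfFin_mem s hs a
  · intro a _ b _ h; exact (s.orderEmbOfFin hs).injective h
  · intro i hi
    have : i ∈ Set.range (s.orderEmbOfFin hs) := by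
      rw [Finset.range_orderEmbOfFin]; exact hi
    obtain ⟨a, ha⟩ := this
    exact ⟨a, Finset.mem_univ a, ha⟩
  · intros; rfl

lemma erase_orderEmbOfFin {T r : ℕ} (s : Finset (Fin T)) (hs : s.card = r + 1)
    (a : Fin (r+1)) (he : (s.erase (s.orderEmbOfFin hs a)).card = r) (u : Fin r) :
    (s.erase (s.orderEmbOfFin hs a)).orderEmbOfFin he u
      = s.orderEmbOfFin hs (a.succAbove u) := by
  have hmem : ∀ v : Fin r, s.orderEmbOfFin hs (a.succAbove v)
      ∈ s.erase (s.orderEmbOfFin hs a) := by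
    intro v
    refine Finset.mem_erase.2 ⟨?_, Finset.orderEmbOfFin_mem s hs _⟩
    intro hcontra
    exact Fin.succAbove_ne a v ((s.orderEmbOfFin hs).injective hcontra)
  have hmono : StrictMono (fun v : Fin r => s.orderEmbOfFin hs (a.succAbove v)) :=
    (s.orderEmbOfFin hs).strictMono.comp (Fin.strictMono_succAbove a)
  have := Finset.orderEmbOfFin_unique he hmem hmono
  exact (congrFun this u).symm

lemma orderEmbOfFin_congr {T k : ℕ} {s t : Finset (Fin T)} (h : s = t) (hs : s.card = k)
    (u : Fin k) : s.orderEmbOfFin hs u = t.orderEmbOfFin (h ▸ hs) u := by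
  subst h; rfl

lemma EV_zero (Q : Fin 0 → Fin 0 → ℝ) (V : ℕ → ℝ) : EV 0 Q V = V 0 := by
  rw [EV, eSum, Fintype.sum_unique, Fintype.sum_unique,
    show (default : Finset (Fin 0)) = ∅ from Finset.eq_empty_of_isEmpty _]
  simp [Nat.factorial]

lemma univ_orderEmbOfFin {T : ℕ} (h : (Finset.univ : Finset (Fin T)).card = T) (a : Fin T) :
    (Finset.univ : Finset (Fin T)).orderEmbOfFin h a = a := by
  have := Finset.orderEmbOfFin_unique h (f := fun x : Fin T => x)
    (fun x => Finset.mem_univ x) strictMono_id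
  exact (congrFun this a).symm
lemma inner_bddBelow {m : ℕ} (Y : Finset (Fin m)) (e : Fin m → ℝ) :
    BddBelow {u : ℝ | ∃ j, j ∉ Y ∧ u = e j} := by
  have himg : {u : ℝ | ∃ j, j ∉ Y ∧ u = e j} = e '' {j | j ∉ Y} := by
    ext u
    constructor
    · rintro ⟨j, hj, rfl⟩; exact ⟨j, hj, rfl⟩
    · rintro ⟨j, hj, rfl⟩; exact ⟨j, hj, rfl⟩
  rw [himg]
  exact ((Set.toFinite _).image e).bddBelow

lemma inner_bddAbove {m : ℕ} (Y : Finset (Fin m)) (e : Fin m → ℝ) :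
    BddAbove {u : ℝ | ∃ j, j ∉ Y ∧ u = e j} := by
  have himg : {u : ℝ | ∃ j, j ∉ Y ∧ u = e j} = e '' {j | j ∉ Y} := by
    ext u
    constructor
    · rintro ⟨j, hj, rfl⟩; exact ⟨j, hj, rfl⟩
    · rintro ⟨j, hj, rfl⟩; exact ⟨j, hj, rfl⟩
  rw [himg]
  exact ((Set.toFinite _).image e).bddAbove

lemma game_sSup_eq {m : ℕ} (X Y : Finset (Fin m)) (A : Fin m → Fin m → ℝ) (F : ℝ)
    (hXne : Xᶜ.Nonempty) (hYne : Yᶜ.Nonempty)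
    (huni : ∀ j ∉ Y, ∑ i ∈ Xᶜ, ((Xᶜ.card : ℝ))⁻¹ * A i j = F)
    (hcol : ∀ i ∈ Xᶜ, ∑ j ∈ Yᶜ, A i j = (Yᶜ.card : ℝ) * F) :
    sSup {v : ℝ | ∃ p : Fin m → ℝ, (∀ i, 0 ≤ p i) ∧ (∀ i ∈ X, p i = 0) ∧ (∑ i, p i) = 1 ∧
      v = sInf {u : ℝ | ∃ j, j ∉ Y ∧ u = ∑ i, p i * A i j}} = F := by
  have hcardX : (Xᶜ.card : ℝ) ≠ 0 := Nat.cast_ne_zero.2 (Finset.card_pos.2 hXne).ne'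
  -- sums of feasible strategies restrict to `Xᶜ`
  have hsupp : ∀ (p : Fin m → ℝ), (∀ i ∈ X, p i = 0) → ∀ g : Fin m → ℝ,
      ∑ i, p i * g i = ∑ i ∈ Xᶜ, p i * g i := by
    intro p hpX g
    refine (Finset.sum_subset (Finset.subset_univ Xᶜ) ?_).symm
    intro i _ hi
    rw [hpX i (by simpa using hi), zero_mul]
  have hsupp1 : ∀ (p : Fin m → ℝ), (∀ i ∈ X, p i = 0) →
      ∑ i ∈ Xᶜ, p i = ∑ i, p i := by
    intro p hpX
    refine Finset.sum_subset (Finset.subset_univ Xᶜ) ?_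
    intro i _ hi
    exact hpX i (by simpa using hi)
  -- the uniform strategy
  set p₀ : Fin m → ℝ := fun i => if i ∈ X then 0 else ((Xᶜ.card : ℝ))⁻¹ with hp₀
  have hp₀X : ∀ i ∈ X, p₀ i = 0 := fun i hi => by simp [hp₀, hi]
  have hp₀pos : ∀ i, 0 ≤ p₀ i := by
    intro i
    by_cases h : i ∈ X <;> simp [hp₀, h]
  have hp₀sum : ∑ i, p₀ i = 1 := by
    have h1 : ∀ i : Fin m, p₀ i = if i ∈ Xᶜ then ((Xᶜ.card : ℝ))⁻¹ else 0 := by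
      intro i
      by_cases h : i ∈ X <;> simp [hp₀, h]
    rw [Finset.sum_congr rfl fun i _ => h1 i, Finset.sum_ite_mem, Finset.univ_inter,
      Finset.sum_const, nsmul_eq_mul, mul_inv_cancel₀ hcardX]
  have hval0 : ∀ j, j ∉ Y → ∑ i, p₀ i * A i j = F := by
    intro j hj
    rw [hsupp p₀ hp₀X]
    rw [Finset.sum_congr rfl (fun i hi => by
      rw [show p₀ i = ((Xᶜ.card : ℝ))⁻¹ from by simp [hp₀, Finset.mem_compl.1 hi]])]
    exact huni j hj
  have hset0 : {u : ℝ | ∃ j, j ∉ Y ∧ u = ∑ i, p₀ i * A i j} = {F} := by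
    ext u
    simp only [Set.mem_setOf_eq, Set.mem_singleton_iff]
    constructor
    · rintro ⟨j, hj, rfl⟩
      exact hval0 j hj
    · rintro rfl
      obtain ⟨j₀, hj₀⟩ := hYne
      exact ⟨j₀, Finset.mem_compl.1 hj₀, (hval0 j₀ (Finset.mem_compl.1 hj₀)).symm⟩
  have Fmem : F ∈ {v : ℝ | ∃ p : Fin m → ℝ, (∀ i, 0 ≤ p i) ∧ (∀ i ∈ X, p i = 0) ∧
      (∑ i, p i) = 1 ∧ v = sInf {u : ℝ | ∃ j, j ∉ Y ∧ u = ∑ i, p i * A i j}} :=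
    ⟨p₀, hp₀pos, hp₀X, hp₀sum, by rw [hset0, csInf_singleton]⟩
  have hupper : ∀ v ∈ {v : ℝ | ∃ p : Fin m → ℝ, (∀ i, 0 ≤ p i) ∧ (∀ i ∈ X, p i = 0) ∧
      (∑ i, p i) = 1 ∧ v = sInf {u : ℝ | ∃ j, j ∉ Y ∧ u = ∑ i, p i * A i j}}, v ≤ F := by
    rintro v ⟨p, hp0, hpX, hp1, rfl⟩
    have hkey : ∑ j ∈ Yᶜ, (∑ i, p i * A i j) = ∑ j ∈ Yᶜ, F := by
      calc ∑ j ∈ Yᶜ, (∑ i, p i * A i j) = ∑ j ∈ Yᶜ, ∑ i ∈ Xᶜ, p i * A i j :=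
            Finset.sum_congr rfl fun j _ => hsupp p hpX _
        _ = ∑ i ∈ Xᶜ, ∑ j ∈ Yᶜ, p i * A i j := Finset.sum_comm
        _ = ∑ i ∈ Xᶜ, p i * ((Yᶜ.card : ℝ) * F) := by
            refine Finset.sum_congr rfl fun i hi => ?_
            rw [← Finset.mul_sum, hcol i hi]
        _ = (∑ i ∈ Xᶜ, p i) * ((Yᶜ.card : ℝ) * F) := by rw [Finset.sum_mul]
        _ = ∑ j ∈ Yᶜ, F := by
            rw [hsupp1 p hpX, hp1, one_mul, Finset.sum_const, nsmul_eq_mul]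
    obtain ⟨j₀, hj₀, hle⟩ := Finset.exists_le_of_sum_le hYne (le_of_eq hkey)
    exact le_trans (csInf_le (inner_bddBelow Y _) ⟨j₀, Finset.mem_compl.1 hj₀, rfl⟩) hle
  exact le_antisymm (csSup_le ⟨F, Fmem⟩ hupper) (le_csSup ⟨F, hupper⟩ Fmem)

lemma game_sInf_eq {m : ℕ} (X Y : Finset (Fin m)) (A : Fin m → Fin m → ℝ) (F : ℝ)
    (hXne : Xᶜ.Nonempty) (hYne : Yᶜ.Nonempty)
    (huni : ∀ i ∉ X, ∑ j ∈ Yᶜ, ((Yᶜ.card : ℝ))⁻¹ * A i j = F)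
    (hrow : ∀ j ∈ Yᶜ, ∑ i ∈ Xᶜ, A i j = (Xᶜ.card : ℝ) * F) :
    sInf {v : ℝ | ∃ q : Fin m → ℝ, (∀ j, 0 ≤ q j) ∧ (∀ j ∈ Y, q j = 0) ∧ (∑ j, q j) = 1 ∧
      v = sSup {u : ℝ | ∃ i, i ∉ X ∧ u = ∑ j, q j * A i j}} = F := by
  have hcardY : (Yᶜ.card : ℝ) ≠ 0 := Nat.cast_ne_zero.2 (Finset.card_pos.2 hYne).ne'
  have hsupp : ∀ (q : Fin m → ℝ), (∀ j ∈ Y, q j = 0) → ∀ g : Fin m → ℝ,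
      ∑ j, q j * g j = ∑ j ∈ Yᶜ, q j * g j := by
    intro q hqY g
    refine (Finset.sum_subset (Finset.subset_univ Yᶜ) ?_).symm
    intro j _ hj
    rw [hqY j (by simpa using hj), zero_mul]
  have hsupp1 : ∀ (q : Fin m → ℝ), (∀ j ∈ Y, q j = 0) →
      ∑ j ∈ Yᶜ, q j = ∑ j, q j := by
    intro q hqY
    refine Finset.sum_subset (Finset.subset_univ Yᶜ) ?_
    intro j _ hj
    exact hqY j (by simpa using hj)
  set q₀ : Fin m → ℝ := fun j => if j ∈ Y then 0 else ((Yᶜ.card : ℝ))⁻¹ with hq₀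
  have hq₀Y : ∀ j ∈ Y, q₀ j = 0 := fun j hj => by simp [hq₀, hj]
  have hq₀pos : ∀ j, 0 ≤ q₀ j := by
    intro j
    by_cases h : j ∈ Y <;> simp [hq₀, h]
  have hq₀sum : ∑ j, q₀ j = 1 := by
    have h1 : ∀ j : Fin m, q₀ j = if j ∈ Yᶜ then ((Yᶜ.card : ℝ))⁻¹ else 0 := by
      intro j
      by_cases h : j ∈ Y <;> simp [hq₀, h]
    rw [Finset.sum_congr rfl fun j _ => h1 j, Finset.sum_ite_mem, Finset.univ_inter,
      Finset.sum_const, nsmul_eq_mul, mul_inv_cancel₀ hcardY]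
  have hval0 : ∀ i, i ∉ X → ∑ j, q₀ j * A i j = F := by
    intro i hi
    rw [hsupp q₀ hq₀Y]
    rw [Finset.sum_congr rfl (fun j hj => by
      rw [show q₀ j = ((Yᶜ.card : ℝ))⁻¹ from by simp [hq₀, Finset.mem_compl.1 hj]])]
    exact huni i hi
  have hset0 : {u : ℝ | ∃ i, i ∉ X ∧ u = ∑ j, q₀ j * A i j} = {F} := by
    ext u
    simp only [Set.mem_setOf_eq, Set.mem_singleton_iff]
    constructor
    · rintro ⟨i, hi, rfl⟩
      exact hval0 i hi
    · rintro rfl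
      obtain ⟨i₀, hi₀⟩ := hXne
      exact ⟨i₀, Finset.mem_compl.1 hi₀, (hval0 i₀ (Finset.mem_compl.1 hi₀)).symm⟩
  have Fmem : F ∈ {v : ℝ | ∃ q : Fin m → ℝ, (∀ j, 0 ≤ q j) ∧ (∀ j ∈ Y, q j = 0) ∧
      (∑ j, q j) = 1 ∧ v = sSup {u : ℝ | ∃ i, i ∉ X ∧ u = ∑ j, q j * A i j}} :=
    ⟨q₀, hq₀pos, hq₀Y, hq₀sum, by rw [hset0, csSup_singleton]⟩
  have hlower : ∀ v ∈ {v : ℝ | ∃ q : Fin m → ℝ, (∀ j, 0 ≤ q j) ∧ (∀ j ∈ Y, q j = 0) ∧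
      (∑ j, q j) = 1 ∧ v = sSup {u : ℝ | ∃ i, i ∉ X ∧ u = ∑ j, q j * A i j}}, F ≤ v := by
    rintro v ⟨q, hq0, hqY, hq1, rfl⟩
    have hkey : ∑ i ∈ Xᶜ, F = ∑ i ∈ Xᶜ, (∑ j, q j * A i j) := by
      calc ∑ i ∈ Xᶜ, F = (∑ j ∈ Yᶜ, q j) * ((Xᶜ.card : ℝ) * F) := by
            rw [hsupp1 q hqY, hq1, one_mul, Finset.sum_const, nsmul_eq_mul]
        _ = ∑ j ∈ Yᶜ, q j * ((Xᶜ.card : ℝ) * F) := by rw [Finset.sum_mul]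
        _ = ∑ j ∈ Yᶜ, ∑ i ∈ Xᶜ, q j * A i j := by
            refine Finset.sum_congr rfl fun j hj => ?_
            rw [← Finset.mul_sum, hrow j hj]
        _ = ∑ i ∈ Xᶜ, ∑ j ∈ Yᶜ, q j * A i j := Finset.sum_comm
        _ = ∑ i ∈ Xᶜ, (∑ j, q j * A i j) :=
            Finset.sum_congr rfl fun i _ => (hsupp q hqY _).symm
    obtain ⟨i₀, hi₀, hle⟩ := Finset.exists_le_of_sum_le hXne (le_of_eq hkey)
    exact le_trans hle (le_csSup (inner_bddAbove X _) ⟨i₀, Finset.mem_compl.1 hi₀, rfl⟩)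
  exact le_antisymm (csInf_le ⟨F, hlower⟩ Fmem) (le_csInf ⟨F, Fmem⟩ hlower)
lemma main_val {T : ℕ} (P : Fin T → Fin T → ℝ) (U : ℕ → ℝ) :
    ∀ (r : ℕ) (X Y : Finset (Fin T)) (hX : Xᶜ.card = r) (hY : Yᶜ.card = r) (w : ℕ),
      gval T T P U r X Y w = EV r
          (fun a b => P (Xᶜ.orderEmbOfFin hX a) (Yᶜ.orderEmbOfFin hY b)) (fun t => U (w + t))
      ∧ wval T T P U r X Y w = EV r
          (fun a b => P (Xᶜ.orderEmbOfFin hX a) (Yᶜ.orderEmbOfFin hY b)) (fun t => U (w + t)) := by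
  intro r
  induction r with
  | zero =>
      intro X Y hX hY w
      rw [gval, wval, EV_zero]
      constructor <;> · congr 1
  | succ r IH =>
      intro X Y hX hY w
      have hXne : Xᶜ.Nonempty := Finset.card_pos.1 (by omega)
      have hYne : Yᶜ.Nonempty := Finset.card_pos.1 (by omega)
      have hcX : ((Xᶜ.card : ℝ)) = ((r : ℝ) + 1) := by rw [hX]; push_cast; ring
      have hcY : ((Yᶜ.card : ℝ)) = ((r : ℝ) + 1) := by rw [hY]; push_cast; ring
      have hr1 : ((r : ℝ) + 1) ≠ 0 := by positivity
      -- child states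
      have child : ∀ (a b : Fin (r+1)) (w' : ℕ),
          gval T T P U r (insert (Xᶜ.orderEmbOfFin hX a) X) (insert (Yᶜ.orderEmbOfFin hY b) Y) w'
            = EV r (minor (fun a b => P (Xᶜ.orderEmbOfFin hX a) (Yᶜ.orderEmbOfFin hY b)) a b)
                (fun t => U (w' + t))
          ∧ wval T T P U r (insert (Xᶜ.orderEmbOfFin hX a) X) (insert (Yᶜ.orderEmbOfFin hY b) Y) w'
            = EV r (minor (fun a b => P (Xᶜ.orderEmbOfFin hX a) (Yᶜ.orderEmbOfFin hY b)) a b)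
                (fun t => U (w' + t)) := by
        intro a b w'
        have hXe : (insert (Xᶜ.orderEmbOfFin hX a) X)ᶜ = Xᶜ.erase (Xᶜ.orderEmbOfFin hX a) :=
          Finset.compl_insert
        have hYe : (insert (Yᶜ.orderEmbOfFin hY b) Y)ᶜ = Yᶜ.erase (Yᶜ.orderEmbOfFin hY b) :=
          Finset.compl_insert
        have hXc : (insert (Xᶜ.orderEmbOfFin hX a) X)ᶜ.card = r := by
          rw [hXe, Finset.card_erase_of_mem (Finset.orderEmbOfFin_mem _ hX a), hX]
          omega
        have hYc : (insert (Yᶜ.orderEmbOfFin hY b) Y)ᶜ.card = r := by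
          rw [hYe, Finset.card_erase_of_mem (Finset.orderEmbOfFin_mem _ hY b), hY]
          omega
        have heq : (fun u v => P ((insert (Xᶜ.orderEmbOfFin hX a) X)ᶜ.orderEmbOfFin hXc u)
              ((insert (Yᶜ.orderEmbOfFin hY b) Y)ᶜ.orderEmbOfFin hYc v))
            = minor (fun a b => P (Xᶜ.orderEmbOfFin hX a) (Yᶜ.orderEmbOfFin hY b)) a b := by
          funext u v
          rw [orderEmbOfFin_congr hXe hXc u, orderEmbOfFin_congr hYe hYc v,
            erase_orderEmbOfFin Xᶜ hX a _ u, erase_orderEmbOfFin Yᶜ hY b _ v]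
          rfl
        obtain ⟨h1, h2⟩ := IH (insert (Xᶜ.orderEmbOfFin hX a) X)
          (insert (Yᶜ.orderEmbOfFin hY b) Y) hXc hYc w'
        rw [h1, h2, heq]
        exact ⟨rfl, rfl⟩
      -- summand identities
      have expr_g : ∀ (a b : Fin (r+1)),
          P (Xᶜ.orderEmbOfFin hX a) (Yᶜ.orderEmbOfFin hY b)
              * gval T T P U r (insert (Xᶜ.orderEmbOfFin hX a) X)
                  (insert (Yᶜ.orderEmbOfFin hY b) Y) (w+1)
            + (1 - P (Xᶜ.orderEmbOfFin hX a) (Yᶜ.orderEmbOfFin hY b))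
              * gval T T P U r (insert (Xᶜ.orderEmbOfFin hX a) X)
                  (insert (Yᶜ.orderEmbOfFin hY b) Y) w
          = P (Xᶜ.orderEmbOfFin hX a) (Yᶜ.orderEmbOfFin hY b)
              * EV r (minor (fun a b => P (Xᶜ.orderEmbOfFin hX a) (Yᶜ.orderEmbOfFin hY b)) a b)
                  (fun t => U (w + (t+1)))
            + (1 - P (Xᶜ.orderEmbOfFin hX a) (Yᶜ.orderEmbOfFin hY b))
              * EV r (minor (fun a b => P (Xᶜ.orderEmbOfFin hX a) (Yᶜ.orderEmbOfFin hY b)) a b)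
                  (fun t => U (w + t)) := by
        intro a b
        rw [(child a b (w+1)).1, (child a b w).1]
        have hsh : (fun t => U (w + 1 + t)) = (fun t => U (w + (t+1))) := by
          funext t; congr 1; omega
        rw [hsh]
      have expr_w : ∀ (a b : Fin (r+1)),
          P (Xᶜ.orderEmbOfFin hX a) (Yᶜ.orderEmbOfFin hY b)
              * wval T T P U r (insert (Xᶜ.orderEmbOfFin hX a) X)
                  (insert (Yᶜ.orderEmbOfFin hY b) Y) (w+1)
            + (1 - P (Xᶜ.orderEmbOfFin hX a) (Yᶜ.orderEmbOfFin hY b))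
              * wval T T P U r (insert (Xᶜ.orderEmbOfFin hX a) X)
                  (insert (Yᶜ.orderEmbOfFin hY b) Y) w
          = P (Xᶜ.orderEmbOfFin hX a) (Yᶜ.orderEmbOfFin hY b)
              * EV r (minor (fun a b => P (Xᶜ.orderEmbOfFin hX a) (Yᶜ.orderEmbOfFin hY b)) a b)
                  (fun t => U (w + (t+1)))
            + (1 - P (Xᶜ.orderEmbOfFin hX a) (Yᶜ.orderEmbOfFin hY b))
              * EV r (minor (fun a b => P (Xᶜ.orderEmbOfFin hX a) (Yᶜ.orderEmbOfFin hY b)) a b)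
                  (fun t => U (w + t)) := by
        intro a b
        rw [(child a b (w+1)).2, (child a b w).2]
        have hsh : (fun t => U (w + 1 + t)) = (fun t => U (w + (t+1))) := by
          funext t; congr 1; omega
        rw [hsh]
      constructor
      · rw [gval]
        refine game_sSup_eq X Y
          (fun i j => P i j * gval T T P U r (insert i X) (insert j Y) (w+1)
            + (1 - P i j) * gval T T P U r (insert i X) (insert j Y) w)
          _ hXne hYne ?_ ?_
        · -- uniform row strategy is equalizing
          intro j hj
          beta_reduce
          obtain ⟨b, hb⟩ : ∃ b, Yᶜ.orderEmbOfFin hY b = j := by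
            have hjm : j ∈ Set.range (Yᶜ.orderEmbOfFin hY) := by
              rw [Finset.range_orderEmbOfFin]
              exact Finset.mem_compl.2 hj
            exact hjm
          subst hb
          rw [sum_orderEmbOfFin Xᶜ hX, EV_row
            (fun a b => P (Xᶜ.orderEmbOfFin hX a) (Yᶜ.orderEmbOfFin hY b))
            (fun t => U (w + t)) b]
          refine Finset.sum_congr rfl fun a _ => ?_
          rw [hcX, expr_g a b]
        · -- column sums
          intro i hi
          beta_reduce
          obtain ⟨a, ha⟩ : ∃ a, Xᶜ.orderEmbOfFin hX a = i := by
            have him : i ∈ Set.range (Xᶜ.orderEmbOfFin hX) := by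
              rw [Finset.range_orderEmbOfFin]
              exact hi
            exact him
          subst ha
          rw [sum_orderEmbOfFin Yᶜ hY, Finset.sum_congr rfl fun b _ => expr_g a b]
          have hcol := EV_col (fun a b => P (Xᶜ.orderEmbOfFin hX a) (Yᶜ.orderEmbOfFin hY b))
            (fun t => U (w + t)) a
          rw [← Finset.mul_sum] at hcol
          rw [hcY, hcol, ← mul_assoc, mul_inv_cancel₀ hr1, one_mul]
      · rw [wval]
        refine game_sInf_eq X Y
          (fun i j => P i j * wval T T P U r (insert i X) (insert j Y) (w+1)
            + (1 - P i j) * wval T T P U r (insert i X) (insert j Y) w)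
          _ hXne hYne ?_ ?_
        · -- uniform column strategy is equalizing
          intro i hi
          beta_reduce
          obtain ⟨a, ha⟩ : ∃ a, Xᶜ.orderEmbOfFin hX a = i := by
            have him : i ∈ Set.range (Xᶜ.orderEmbOfFin hX) := by
              rw [Finset.range_orderEmbOfFin]
              exact Finset.mem_compl.2 hi
            exact him
          subst ha
          rw [sum_orderEmbOfFin Yᶜ hY, EV_col
            (fun a b => P (Xᶜ.orderEmbOfFin hX a) (Yᶜ.orderEmbOfFin hY b))
            (fun t => U (w + t)) a]
          refine Finset.sum_congr rfl fun b _ => ?_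
          rw [hcY, expr_w a b]
        · -- row sums
          intro j hj
          beta_reduce
          obtain ⟨b, hb⟩ : ∃ b, Yᶜ.orderEmbOfFin hY b = j := by
            have hjm : j ∈ Set.range (Yᶜ.orderEmbOfFin hY) := by
              rw [Finset.range_orderEmbOfFin]
              exact hj
            exact hjm
          subst hb
          rw [sum_orderEmbOfFin Xᶜ hX, Finset.sum_congr rfl fun a _ => expr_w a b]
          have hrow := EV_row (fun a b => P (Xᶜ.orderEmbOfFin hX a) (Yᶜ.orderEmbOfFin hY b))
            (fun t => U (w + t)) b
          rw [← Finset.mul_sum] at hrow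
          rw [hcX, hrow, ← mul_assoc, mul_inv_cancel₀ hr1, one_mul]

/-- When `m = n = T` (no redundant players), the maximin and minimax
values of the competition coincide and both equal the uniform average over all
matchings `σ` between the two teams of the expected utility, i.e. playing uniformly
at random is a subgame perfect equilibrium strategy for both teams. -/
theorem uniform_random_is_SPE (T : ℕ) (hT : 1 ≤ T)
    (P : Fin T → Fin T → ℝ) (hP : ∀ i j, P i j ∈ Set.Icc (0 : ℝ) 1) (U : ℕ → ℝ) :
    gval T T P U T ∅ ∅ 0 =
      (T.factorial : ℝ)⁻¹ * ∑ σ : Equiv.Perm (Fin T), ∑ S : Finset (Fin T),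
        U S.card * (∏ i ∈ S, P i (σ i)) * ∏ i ∈ Sᶜ, (1 - P i (σ i)) ∧
    wval T T P U T ∅ ∅ 0 =
      (T.factorial : ℝ)⁻¹ * ∑ σ : Equiv.Perm (Fin T), ∑ S : Finset (Fin T),
        U S.card * (∏ i ∈ S, P i (σ i)) * ∏ i ∈ Sᶜ, (1 - P i (σ i)) := by
  have hX : ((∅ : Finset (Fin T))ᶜ).card = T := by simp
  obtain ⟨h1, h2⟩ := main_val P U T ∅ ∅ hX hX 0
  have he : ∀ a : Fin T, ((∅ : Finset (Fin T))ᶜ).orderEmbOfFin hX a = a := by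
    intro a
    rw [orderEmbOfFin_congr Finset.compl_empty hX a]
    exact univ_orderEmbOfFin _ a
  have hQ : (fun a b => P (((∅ : Finset (Fin T))ᶜ).orderEmbOfFin hX a)
      (((∅ : Finset (Fin T))ᶜ).orderEmbOfFin hX b)) = P := by
    funext a b
    rw [he a, he b]
  have hU : (fun t => U (0 + t)) = U := by
    funext t
    rw [Nat.zero_add]
  rw [hQ, hU] at h1 h2
  rw [h1, h2, EV, eSum]
  exact ⟨rfl, rfl⟩
end

section
/- If Team 1 plays uniformly at random, then for every adaptive pure strategy g of Team 2 and every bijection s of {1,…,T}, the probability that the final matching M equals s is exactly 1/T!. -/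
def histUpTo (T : ℕ) (g : List (Fin T × Fin T × Bool) → Fin T)
    (a : ℕ → Fin T) (c : ℕ → Bool) : ℕ → List (Fin T × Fin T × Bool)
  | 0 => []
  | k + 1 =>
      histUpTo T g a c k ++
        [(g (histUpTo T g a c k), a k, c k)]

def bpick (T : ℕ) (g : List (Fin T × Fin T × Bool) → Fin T)
    (a : ℕ → Fin T) (c : ℕ → Bool) (k : ℕ) : Fin T :=
  g (histUpTo T g a c k)

def natify {β : Type*} {T : ℕ} (hT : 0 < T) (f : Fin T → β) : ℕ → β :=
  fun k => f ⟨k % T, Nat.mod_lt _ hT⟩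

def Hc (T : ℕ) (g : List (Fin T × Fin T × Bool) → Fin T) (s : Equiv.Perm (Fin T))
    (c : ℕ → Bool) : ℕ → List (Fin T × Fin T × Bool)
  | 0 => []
  | k + 1 => Hc T g s c k ++ [(g (Hc T g s c k), s (g (Hc T g s c k)), c k)]

section
variable {T : ℕ} {g : List (Fin T × Fin T × Bool) → Fin T} {s : Equiv.Perm (Fin T)}

lemma Hc_congr {c c' : ℕ → Bool} : ∀ k, (∀ j, j < k → c j = c' j) →
    Hc T g s c k = Hc T g s c' k
  | 0, _ => rfl
  | k + 1, h => by
    have ih := Hc_congr k (fun j hj => h j (Nat.lt_succ_of_lt hj))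
    simp [Hc, ih, h k (Nat.lt_succ_self k)]

lemma length_Hc (c : ℕ → Bool) : ∀ k, (Hc T g s c k).length = k
  | 0 => rfl
  | k + 1 => by simp [Hc, length_Hc c k]

lemma mapSnd_Hc (c : ℕ → Bool) : ∀ k,
    (Hc T g s c k).map (fun x => x.2.1) = ((Hc T g s c k).map (fun x => x.1)).map s
  | 0 => rfl
  | k + 1 => by simp [Hc, mapSnd_Hc c k]

lemma mem_mapFst_Hc (c : ℕ → Bool) : ∀ k i, i < k →
    g (Hc T g s c i) ∈ (Hc T g s c k).map (fun x => x.1)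
  | k + 1, i, hi => by
    rcases Nat.lt_succ_iff_lt_or_eq.mp hi with h | h
    · simp only [Hc, List.map_append, List.mem_append]
      exact Or.inl (mem_mapFst_Hc c k i h)
    · subst h; simp [Hc]

lemma nodup_mapFst_Hc
    (hg : ∀ h : List (Fin T × Fin T × Bool), h.length < T →
      (h.map fun x => x.1).Nodup → (h.map fun x => x.2.1).Nodup →
      g h ∉ h.map fun x => x.1) (c : ℕ → Bool) :
    ∀ k, k ≤ T → ((Hc T g s c k).map (fun x => x.1)).Nodup
  | 0, _ => List.nodup_nil
  | k + 1, h => by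
    have ih := nodup_mapFst_Hc hg c k (Nat.le_of_succ_le h)
    have hlen : (Hc T g s c k).length < T := by rw [length_Hc]; omega
    have hsnd : ((Hc T g s c k).map fun x => x.2.1).Nodup := by
      rw [mapSnd_Hc]; exact ih.map s.injective
    have hnm := hg _ hlen ih hsnd
    simp [Hc, List.nodup_append, ih, hnm]
    intro a x hx heq
    subst heq
    rcases hx with hx | hx <;> exact hnm (List.mem_map.mpr ⟨_, hx, rfl⟩)

lemma histUpTo_eq_Hc (a : ℕ → Fin T) (c : ℕ → Bool) : ∀ k,
    (∀ j, j < k → a j = s (g (Hc T g s c j))) → histUpTo T g a c k = Hc T g s c k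
  | 0, _ => rfl
  | k + 1, h => by
    have ih := histUpTo_eq_Hc a c k (fun j hj => h j (Nat.lt_succ_of_lt hj))
    simp [histUpTo, Hc, ih, h k (Nat.lt_succ_self k)]

end

lemma treeSum : ∀ (n : ℕ) (p : Fin n → (Fin n → Bool) → ℝ),
    (∀ (k : Fin n) (c c' : Fin n → Bool), (∀ j, j < k → c j = c' j) → p k c = p k c') →
    ∑ c : Fin n → Bool, ∏ k, (if c k then p k c else 1 - p k c) = 1 := by
  intro n
  induction n with
  | zero => intro p _; simp
  | succ n ih =>
    intro p hp
    rw [← Equiv.sum_comp (Fin.consEquiv fun _ => Bool), Fintype.sum_prod_type]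
    have hq : ∀ c, p 0 c = p 0 (fun _ => false) :=
      fun c => hp 0 c _ (fun j hj => absurd hj (Fin.not_lt_zero j))
    set q : ℝ := p 0 (fun _ => false) with hqdef
    have step : ∀ b : Bool, ∑ c' : Fin n → Bool,
        (∏ k : Fin (n+1),
          (if Fin.cons (α := fun _ => Bool) b c' k then p k (Fin.cons (α := fun _ => Bool) b c')
            else 1 - p k (Fin.cons (α := fun _ => Bool) b c')))
        = (if b then q else 1 - q) := by
      intro b
      have hdep : ∀ (k : Fin n) (c c' : Fin n → Bool), (∀ j, j < k → c j = c' j) →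
          p k.succ (Fin.cons (α := fun _ => Bool) b c) = p k.succ (Fin.cons (α := fun _ => Bool) b c') := by
        intro k c c' h
        apply hp
        intro j hj
        rcases Fin.eq_zero_or_eq_succ j with rfl | ⟨i, rfl⟩
        · simp
        · simp only [Fin.cons_succ]
          exact h i (by simpa [Fin.succ_lt_succ_iff] using hj)
      calc ∑ c' : Fin n → Bool, (∏ k : Fin (n+1),
              (if Fin.cons (α := fun _ => Bool) b c' k then p k (Fin.cons (α := fun _ => Bool) b c')
                else 1 - p k (Fin.cons (α := fun _ => Bool) b c')))
          = ∑ c' : Fin n → Bool, (if b then q else 1 - q) *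
              ∏ k : Fin n, (if c' k then p k.succ (Fin.cons (α := fun _ => Bool) b c')
                else 1 - p k.succ (Fin.cons (α := fun _ => Bool) b c')) := by
            refine Finset.sum_congr rfl fun c' _ => ?_
            rw [Fin.prod_univ_succ, ← hq (Fin.cons (α := fun _ => Bool) b c')]
            simp [Fin.cons_succ, Fin.cons_zero]
        _ = (if b then q else 1 - q) := by
            rw [← Finset.mul_sum,
              ih (fun k c' => p k.succ (Fin.cons (α := fun _ => Bool) b c')) hdep, mul_one]
    calc ∑ b : Bool, ∑ c' : Fin n → Bool,
            ∏ k : Fin (n+1), (if (Fin.consEquiv fun _ => Bool) (b, c') k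
              then p k ((Fin.consEquiv fun _ => Bool) (b, c'))
              else 1 - p k ((Fin.consEquiv fun _ => Bool) (b, c')))
        = ∑ b : Bool, (if b then q else 1 - q) := by
          refine Finset.sum_congr rfl fun b _ => ?_
          exact step b
      _ = 1 := by simp

/-- Suppose Team 1 selects its player uniformly at random among the
remaining ones in every round (encoded by a uniformly random order `α` of its `T`
players, each order having probability `1/T!`), while Team 2 plays an arbitrary
adaptive pure strategy `g` (which never reuses a player on any valid history).
The outcome of round `k` is `1` with probability `P a_k b_k`, conditionally
independently given the history.  Then for every bijection `s` of `{1,…,T}`,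
the probability that the final matching `M` (defined by `M b_k = a_k`) equals `s`
is exactly `1/T!`. -/
theorem uniform_matching_prob (T : ℕ) (hT : 0 < T)
    (P : Fin T → Fin T → ℝ) (hP : ∀ i j, P i j ∈ Set.Icc (0 : ℝ) 1)
    (g : List (Fin T × Fin T × Bool) → Fin T)
    (hg : ∀ h : List (Fin T × Fin T × Bool), h.length < T →
      (h.map fun x => x.1).Nodup → (h.map fun x => x.2.1).Nodup →
      g h ∉ h.map fun x => x.1)
    (s : Equiv.Perm (Fin T)) :
    ∑ α : Equiv.Perm (Fin T), ∑ c : Fin T → Bool,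
      (if ∀ k : Fin T,
            s (bpick T g (natify hT α) (natify hT c) k) = α k then
        (T.factorial : ℝ)⁻¹ *
          ∏ k : Fin T,
            (if c k then
              P (α k) (bpick T g (natify hT α) (natify hT c) k)
            else
              1 - P (α k) (bpick T g (natify hT α) (natify hT c) k))
      else 0) = (T.factorial : ℝ)⁻¹ := by
  have hnat : ∀ {β : Type} (f : Fin T → β) (j : ℕ) (hj : j < T),
      natify hT f j = f ⟨j, hj⟩ := by
    intro β f j hj
    unfold natify
    congr 1
    exact Fin.ext (Nat.mod_eq_of_lt hj)
  have key : ∀ c : Fin T → Bool,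
      (∑ α : Equiv.Perm (Fin T),
        if ∀ k : Fin T, s (bpick T g (natify hT ⇑α) (natify hT c) ↑k) = α k then
          (T.factorial : ℝ)⁻¹ *
            ∏ k : Fin T,
              (if c k then P (α k) (bpick T g (natify hT ⇑α) (natify hT c) ↑k)
                else 1 - P (α k) (bpick T g (natify hT ⇑α) (natify hT c) ↑k))
        else 0)
      = (T.factorial : ℝ)⁻¹ *
          ∏ k : Fin T,
            (if c k then P (s (g (Hc T g s (natify hT c) ↑k))) (g (Hc T g s (natify hT c) ↑k))
              else 1 - P (s (g (Hc T g s (natify hT c) ↑k))) (g (Hc T g s (natify hT c) ↑k))) := by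
    intro c
    set c' : ℕ → Bool := natify hT c with hc'
    have hne2 : ∀ i j : Fin T, (i : ℕ) < (j : ℕ) →
        g (Hc T g s c' (i : ℕ)) ≠ g (Hc T g s c' (j : ℕ)) := by
      intro i j hij heq
      have hmem : g (Hc T g s c' (i : ℕ)) ∈ (Hc T g s c' (j : ℕ)).map (fun x => x.1) :=
        mem_mapFst_Hc c' _ _ hij
      rw [heq] at hmem
      have hlen : (Hc T g s c' (j : ℕ)).length < T := by rw [length_Hc]; exact j.isLt
      have hnodup := nodup_mapFst_Hc (s := s) hg c' (j : ℕ) (le_of_lt j.isLt)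
      have hsnd : ((Hc T g s c' (j : ℕ)).map fun x => x.2.1).Nodup := by
        rw [mapSnd_Hc]; exact hnodup.map s.injective
      exact hg _ hlen hnodup hsnd hmem
    have hinj : Function.Injective (fun k : Fin T => s (g (Hc T g s c' (k : ℕ)))) := by
      intro i j hij
      have hgij : g (Hc T g s c' (i : ℕ)) = g (Hc T g s c' (j : ℕ)) := s.injective hij
      rcases lt_trichotomy ((i : ℕ)) ((j : ℕ)) with h | h | h
      · exact absurd hgij (hne2 i j h)
      · exact Fin.ext h
      · exact absurd hgij.symm (hne2 j i h)
    set α₀ : Equiv.Perm (Fin T) :=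
      Equiv.ofBijective _ ((Finite.injective_iff_bijective).mp hinj) with hα₀def
    have hα₀ : ∀ k : Fin T, α₀ k = s (g (Hc T g s c' (k : ℕ))) := fun k => rfl
    have hist0 : ∀ j, j ≤ T → histUpTo T g (natify hT ⇑α₀) c' j = Hc T g s c' j := by
      intro j hj
      apply histUpTo_eq_Hc
      intro i hi
      have hiT : i < T := lt_of_lt_of_le hi hj
      rw [hnat ⇑α₀ i hiT]
      exact hα₀ ⟨i, hiT⟩
    have hcond0 : ∀ k : Fin T, s (bpick T g (natify hT ⇑α₀) c' ↑k) = α₀ k := by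
      intro k
      unfold bpick
      rw [hist0 (k : ℕ) (le_of_lt k.isLt)]
      exact (hα₀ k).symm
    have huniq : ∀ α : Equiv.Perm (Fin T),
        (∀ k : Fin T, s (bpick T g (natify hT ⇑α) c' ↑k) = α k) → α = α₀ := by
      intro α hcond
      have hist : ∀ j, j ≤ T → histUpTo T g (natify hT ⇑α) c' j = Hc T g s c' j := by
        intro j
        induction j with
        | zero => intro _; rfl
        | succ j ih =>
          intro hj
          have hjT : j < T := hj
          have ihe := ih (Nat.le_of_lt hjT)
          have hαj : natify hT ⇑α j = s (g (Hc T g s c' j)) := by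
            rw [hnat ⇑α j hjT]
            have hc := hcond ⟨j, hjT⟩
            rw [← hc]
            show s (g (histUpTo T g (natify hT ⇑α) c' j)) = _
            rw [ihe]
          show histUpTo T g (natify hT ⇑α) c' (j + 1) = Hc T g s c' (j + 1)
          simp [histUpTo, Hc, ihe, hαj]
      apply Equiv.ext
      intro k
      rw [← hcond k]
      show s (g (histUpTo T g (natify hT ⇑α) c' (k : ℕ))) = α₀ k
      rw [hist (k : ℕ) (le_of_lt k.isLt)]
      exact (hα₀ k).symm
    have hiff : ∀ α : Equiv.Perm (Fin T),
        (∀ k : Fin T, s (bpick T g (natify hT ⇑α) c' ↑k) = α k) ↔ α = α₀ :=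
      fun α => ⟨huniq α, by rintro rfl; exact hcond0⟩
    calc (∑ α : Equiv.Perm (Fin T),
          if ∀ k : Fin T, s (bpick T g (natify hT ⇑α) c' ↑k) = α k then
            (T.factorial : ℝ)⁻¹ *
              ∏ k : Fin T,
                (if c k then P (α k) (bpick T g (natify hT ⇑α) c' ↑k)
                  else 1 - P (α k) (bpick T g (natify hT ⇑α) c' ↑k))
          else 0)
        = ∑ α : Equiv.Perm (Fin T),
            if α = α₀ then
              (T.factorial : ℝ)⁻¹ *
                ∏ k : Fin T,
                  (if c k then P (α k) (bpick T g (natify hT ⇑α) c' ↑k)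
                    else 1 - P (α k) (bpick T g (natify hT ⇑α) c' ↑k))
            else 0 := Finset.sum_congr rfl fun α _ => if_congr (hiff α) rfl rfl
      _ = (T.factorial : ℝ)⁻¹ *
            ∏ k : Fin T,
              (if c k then P (α₀ k) (bpick T g (natify hT ⇑α₀) c' ↑k)
                else 1 - P (α₀ k) (bpick T g (natify hT ⇑α₀) c' ↑k)) := by
          rw [Finset.sum_ite_eq' Finset.univ α₀]; simp
      _ = (T.factorial : ℝ)⁻¹ *
            ∏ k : Fin T,
              (if c k then P (s (g (Hc T g s c' ↑k))) (g (Hc T g s c' ↑k))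
                else 1 - P (s (g (Hc T g s c' ↑k))) (g (Hc T g s c' ↑k))) := by
          refine congrArg _ (Finset.prod_congr rfl fun k _ => ?_)
          have hb : bpick T g (natify hT ⇑α₀) c' ↑k = g (Hc T g s c' ↑k) := by
            unfold bpick
            rw [hist0 (k : ℕ) (le_of_lt k.isLt)]
          rw [hb, hα₀ k]
  rw [Finset.sum_comm]
  have hdep : ∀ (k : Fin T) (c c'' : Fin T → Bool), (∀ j, j < k → c j = c'' j) →
      P (s (g (Hc T g s (natify hT c) ↑k))) (g (Hc T g s (natify hT c) ↑k))
        = P (s (g (Hc T g s (natify hT c'') ↑k))) (g (Hc T g s (natify hT c'') ↑k)) := by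
    intro k c c'' h
    have : Hc T g s (natify hT c) (k : ℕ) = Hc T g s (natify hT c'') (k : ℕ) := by
      apply Hc_congr
      intro j hj
      have hjT : j < T := lt_trans hj k.isLt
      rw [hnat c j hjT, hnat c'' j hjT]
      exact h ⟨j, hjT⟩ hj
    rw [this]
  calc ∑ c : Fin T → Bool, ∑ α : Equiv.Perm (Fin T),
        (if ∀ k : Fin T, s (bpick T g (natify hT ⇑α) (natify hT c) ↑k) = α k then
          (T.factorial : ℝ)⁻¹ *
            ∏ k : Fin T,
              (if c k then P (α k) (bpick T g (natify hT ⇑α) (natify hT c) ↑k)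
                else 1 - P (α k) (bpick T g (natify hT ⇑α) (natify hT c) ↑k))
        else 0)
      = ∑ c : Fin T → Bool, (T.factorial : ℝ)⁻¹ *
          ∏ k : Fin T,
            (if c k then P (s (g (Hc T g s (natify hT c) ↑k))) (g (Hc T g s (natify hT c) ↑k))
              else 1 - P (s (g (Hc T g s (natify hT c) ↑k))) (g (Hc T g s (natify hT c) ↑k))) :=
        Finset.sum_congr rfl fun c _ => key c
    _ = (T.factorial : ℝ)⁻¹ := by
        rw [← Finset.mul_sum,
          treeSum T (fun k c => P (s (g (Hc T g s (natify hT c) ↑k)))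
            (g (Hc T g s (natify hT c) ↑k))) hdep, mul_one]
end

section
/- Assume U is monotone and the rows of P are sorted by strength: P i l ≥ P j l for all 1 ≤ i ≤ j ≤ m and all 1 ≤ l ≤ n (player j of Team 1 is weaker than player i whenever i ≤ j). Then V(G(T,P,U)) = V(G(T,P',U)), where P' is the T×n matrix consisting of the first T rows of P; i.e., Team 1 can abandon its m−T weakest players without changing the value of the game. -/
namespace AbandonAux

open Finset

/-- The expected one-step payoff of strategy `p` against opponent `j`. -/
noncomputable def term (m n : ℕ) (P : Fin m → Fin n → ℝ) (U : ℕ → ℝ) (r : ℕ)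
    (X : Finset (Fin m)) (Y : Finset (Fin n)) (w : ℕ) (p : Fin m → ℝ) (j : Fin n) : ℝ :=
  ∑ i, p i *
    (P i j * gval m n P U r (insert i X) (insert j Y) (w + 1) +
     (1 - P i j) * gval m n P U r (insert i X) (insert j Y) w)

/-- Values achievable against the various opponents. -/
noncomputable def iset (m n : ℕ) (P : Fin m → Fin n → ℝ) (U : ℕ → ℝ) (r : ℕ)
    (X : Finset (Fin m)) (Y : Finset (Fin n)) (w : ℕ) (p : Fin m → ℝ) : Set ℝ :=
  {u : ℝ | ∃ j, j ∉ Y ∧ u = term m n P U r X Y w p j}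

/-- Guaranteed values of the available strategies. -/
noncomputable def sset (m n : ℕ) (P : Fin m → Fin n → ℝ) (U : ℕ → ℝ) (r : ℕ)
    (X : Finset (Fin m)) (Y : Finset (Fin n)) (w : ℕ) : Set ℝ :=
  {v : ℝ | ∃ p : Fin m → ℝ,
    (∀ i, 0 ≤ p i) ∧ (∀ i ∈ X, p i = 0) ∧ (∑ i, p i) = 1 ∧
    v = sInf (iset m n P U r X Y w p)}

lemma gval_zero (m n : ℕ) (P : Fin m → Fin n → ℝ) (U : ℕ → ℝ) (X Y w) :
    gval m n P U 0 X Y w = U w := rfl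

lemma gval_succ (m n : ℕ) (P : Fin m → Fin n → ℝ) (U : ℕ → ℝ) (r X Y w) :
    gval m n P U (r + 1) X Y w = sSup (sset m n P U r X Y w) := rfl

variable {m n : ℕ} {P : Fin m → Fin n → ℝ} {U : ℕ → ℝ}

lemma iset_finite (r X Y w p) : (iset m n P U r X Y w p).Finite := by
  have : iset m n P U r X Y w p = (term m n P U r X Y w p) '' {j | j ∉ Y} := by
    ext u; simp [iset, eq_comm]
  rw [this]
  exact (Set.toFinite _).image _

lemma exists_not_mem {N : ℕ} {Z : Finset (Fin N)} (h : Z.card < N) : ∃ j, j ∉ Z := by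
  by_contra hc
  push_neg at hc
  have : Z = univ := eq_univ_iff_forall.2 hc
  rw [this, card_univ, Fintype.card_fin] at h
  omega

lemma iset_nonempty (r X w p) {Y : Finset (Fin n)} (hY : Y.card < n) :
    (iset m n P U r X Y w p).Nonempty := by
  obtain ⟨j, hj⟩ := exists_not_mem hY
  exact ⟨_, j, hj, rfl⟩


/-- If `U` lies in `[L, M]` on the reachable window, so does the game value. -/
lemma gval_bounds (hP : ∀ i j, P i j ∈ Set.Icc (0 : ℝ) 1) {L M : ℝ} :
    ∀ (r : ℕ) (X : Finset (Fin m)) (Y : Finset (Fin n)) (w : ℕ),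
      X.card + r ≤ m → Y.card + r ≤ n →
      (∀ t, w ≤ t → t ≤ w + r → L ≤ U t ∧ U t ≤ M) →
      L ≤ gval m n P U r X Y w ∧ gval m n P U r X Y w ≤ M := by
  intro r
  induction r with
  | zero => intro X Y w _ _ hwin; exact hwin w le_rfl (by omega)
  | succ r ih =>
    intro X Y w hX hY hwin
    have hXm : X.card < m := by omega
    have hYn : Y.card < n := by omega
    -- bounds on individual terms
    have hterm : ∀ (p : Fin m → ℝ), (∀ i, 0 ≤ p i) → (∑ i, p i) = 1 →
        ∀ j, L ≤ term m n P U r X Y w p j ∧ term m n P U r X Y w p j ≤ M := by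
      intro p hp0 hps j
      have hc : ∀ i : Fin m,
          L ≤ P i j * gval m n P U r (insert i X) (insert j Y) (w + 1) +
              (1 - P i j) * gval m n P U r (insert i X) (insert j Y) w ∧
          P i j * gval m n P U r (insert i X) (insert j Y) (w + 1) +
              (1 - P i j) * gval m n P U r (insert i X) (insert j Y) w ≤ M := by
        intro i
        have hX' : (insert i X).card + r ≤ m :=
          le_trans (by have := card_insert_le i X; omega) hX
        have hY' : (insert j Y).card + r ≤ n :=
          le_trans (by have := card_insert_le j Y; omega) hY
        have h1 := ih (insert i X) (insert j Y) (w + 1) hX' hY'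
          (fun t ht1 ht2 => hwin t (by omega) (by omega))
        have h0 := ih (insert i X) (insert j Y) w hX' hY'
          (fun t ht1 ht2 => hwin t (by omega) (by omega))
        obtain ⟨hPij0, hPij1⟩ := hP i j
        constructor <;> nlinarith [h1.1, h1.2, h0.1, h0.2]
      constructor
      · calc L = ∑ i, p i * L := by rw [← Finset.sum_mul, hps, one_mul]
          _ ≤ term m n P U r X Y w p j := by
              apply Finset.sum_le_sum
              intro i _
              exact mul_le_mul_of_nonneg_left (hc i).1 (hp0 i)
      · calc term m n P U r X Y w p j ≤ ∑ i, p i * M := by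
              apply Finset.sum_le_sum
              intro i _
              exact mul_le_mul_of_nonneg_left (hc i).2 (hp0 i)
          _ = M := by rw [← Finset.sum_mul, hps, one_mul]
    -- bounds on elements of sset
    have hmem : ∀ v ∈ sset m n P U r X Y w, L ≤ v ∧ v ≤ M := by
      rintro v ⟨p, hp0, hpX, hps, rfl⟩
      constructor
      · exact le_csInf (iset_nonempty r X w p hYn)
          (by rintro u ⟨j, hj, rfl⟩; exact (hterm p hp0 hps j).1)
      · obtain ⟨j0, hj0⟩ := exists_not_mem hYn
        calc sInf (iset m n P U r X Y w p) ≤ term m n P U r X Y w p j0 :=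
              csInf_le (iset_finite r X Y w p).bddBelow ⟨j0, hj0, rfl⟩
          _ ≤ M := (hterm p hp0 hps j0).2
    -- a canonical element of sset
    obtain ⟨i0, hi0⟩ := exists_not_mem hXm
    have hmem0 : sInf (iset m n P U r X Y w (fun i => if i = i0 then 1 else 0))
        ∈ sset m n P U r X Y w := by
      refine ⟨_, ?_, ?_, ?_, rfl⟩
      · intro i; positivity
      · intro i hi
        have : i ≠ i0 := fun h => hi0 (h ▸ hi)
        simp [this]
      · simp
    rw [gval_succ]
    constructor
    · calc L ≤ sInf (iset m n P U r X Y w (fun i => if i = i0 then 1 else 0)) :=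
            (hmem _ hmem0).1
        _ ≤ sSup (sset m n P U r X Y w) :=
            le_csSup ⟨M, fun v hv => (hmem v hv).2⟩ hmem0
    · exact csSup_le ⟨_, hmem0⟩ fun v hv => (hmem v hv).2

lemma term_bounds (hP : ∀ i j, P i j ∈ Set.Icc (0 : ℝ) 1) {L M : ℝ} {r X Y w}
    (hX : X.card + (r + 1) ≤ m) (hY : Y.card + (r + 1) ≤ n)
    (hwin : ∀ t, w ≤ t → t ≤ w + (r + 1) → L ≤ U t ∧ U t ≤ M)
    (p : Fin m → ℝ) (hp0 : ∀ i, 0 ≤ p i) (hps : (∑ i, p i) = 1) (j : Fin n) :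
    L ≤ term m n P U r X Y w p j ∧ term m n P U r X Y w p j ≤ M := by
  have hc : ∀ i : Fin m,
      L ≤ P i j * gval m n P U r (insert i X) (insert j Y) (w + 1) +
          (1 - P i j) * gval m n P U r (insert i X) (insert j Y) w ∧
      P i j * gval m n P U r (insert i X) (insert j Y) (w + 1) +
          (1 - P i j) * gval m n P U r (insert i X) (insert j Y) w ≤ M := by
    intro i
    have hX' : (insert i X).card + r ≤ m :=
      le_trans (by have := card_insert_le i X; omega) hX
    have hY' : (insert j Y).card + r ≤ n :=
      le_trans (by have := card_insert_le j Y; omega) hY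
    have h1 := gval_bounds hP r (insert i X) (insert j Y) (w + 1) hX' hY'
      (fun t ht1 ht2 => hwin t (by omega) (by omega))
    have h0 := gval_bounds hP r (insert i X) (insert j Y) w hX' hY'
      (fun t ht1 ht2 => hwin t (by omega) (by omega))
    obtain ⟨hPij0, hPij1⟩ := hP i j
    constructor <;> nlinarith [h1.1, h1.2, h0.1, h0.2]
  constructor
  · calc L = ∑ i, p i * L := by rw [← Finset.sum_mul, hps, one_mul]
      _ ≤ term m n P U r X Y w p j := by
          apply Finset.sum_le_sum
          intro i _
          exact mul_le_mul_of_nonneg_left (hc i).1 (hp0 i)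
  · calc term m n P U r X Y w p j ≤ ∑ i, p i * M := by
          apply Finset.sum_le_sum
          intro i _
          exact mul_le_mul_of_nonneg_left (hc i).2 (hp0 i)
      _ = M := by rw [← Finset.sum_mul, hps, one_mul]

lemma sset_mem_bounds (hP : ∀ i j, P i j ∈ Set.Icc (0 : ℝ) 1) {L M : ℝ} {r X Y w}
    (hX : X.card + (r + 1) ≤ m) (hY : Y.card + (r + 1) ≤ n)
    (hwin : ∀ t, w ≤ t → t ≤ w + (r + 1) → L ≤ U t ∧ U t ≤ M) :
    ∀ v ∈ sset m n P U r X Y w, L ≤ v ∧ v ≤ M := by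
  have hYn : Y.card < n := by omega
  rintro v ⟨p, hp0, hpX, hps, rfl⟩
  constructor
  · exact le_csInf (iset_nonempty r X w p hYn)
      (by rintro u ⟨j, hj, rfl⟩; exact (term_bounds hP hX hY hwin p hp0 hps j).1)
  · obtain ⟨j0, hj0⟩ := exists_not_mem hYn
    calc sInf (iset m n P U r X Y w p) ≤ term m n P U r X Y w p j0 :=
          csInf_le (iset_finite r X Y w p).bddBelow ⟨j0, hj0, rfl⟩
      _ ≤ M := (term_bounds hP hX hY hwin p hp0 hps j0).2

lemma window_of_mono (hUm : ∀ t, U t ≤ U (t + 1)) (w r : ℕ) :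
    ∀ t, w ≤ t → t ≤ w + r → U w ≤ U t ∧ U t ≤ U (w + r) :=
  fun t h1 h2 => ⟨monotone_nat_of_le_succ hUm h1, monotone_nat_of_le_succ hUm h2⟩

lemma bddAbove_sset (hP : ∀ i j, P i j ∈ Set.Icc (0 : ℝ) 1)
    (hUm : ∀ t, U t ≤ U (t + 1)) {r X Y w}
    (hX : X.card + (r + 1) ≤ m) (hY : Y.card + (r + 1) ≤ n) :
    BddAbove (sset m n P U r X Y w) :=
  ⟨U (w + (r + 1)), fun v hv =>
    (sset_mem_bounds hP hX hY (window_of_mono hUm w (r + 1)) v hv).2⟩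

lemma sset_nonempty {r X Y w} (hX : X.card < m) :
    (sset m n P U r X Y w).Nonempty := by
  obtain ⟨i0, hi0⟩ := exists_not_mem hX
  refine ⟨_, (fun i => if i = i0 then 1 else 0), ?_, ?_, ?_, rfl⟩
  · intro i; positivity
  · intro i hi
    have : i ≠ i0 := fun h => hi0 (h ▸ hi)
    simp [this]
  · simp

/-- The value only depends on the values of `U` in the reachable window. -/
lemma gval_congrU {U₁ U₂ : ℕ → ℝ} :
    ∀ (r : ℕ) (X : Finset (Fin m)) (Y : Finset (Fin n)) (w : ℕ),
      (∀ t, w ≤ t → t ≤ w + r → U₁ t = U₂ t) →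
      gval m n P U₁ r X Y w = gval m n P U₂ r X Y w := by
  intro r
  induction r with
  | zero => intro X Y w h; exact h w le_rfl (by omega)
  | succ r ih =>
    intro X Y w h
    have hterm : ∀ p j, term m n P U₁ r X Y w p j = term m n P U₂ r X Y w p j := by
      intro p j
      apply Finset.sum_congr rfl
      intro i _
      rw [ih (insert i X) (insert j Y) (w + 1) (fun t h1 h2 => h t (by omega) (by omega)),
        ih (insert i X) (insert j Y) w (fun t h1 h2 => h t (by omega) (by omega))]
    have hiset : ∀ p, iset m n P U₁ r X Y w p = iset m n P U₂ r X Y w p := by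
      intro p
      ext u
      simp only [iset, Set.mem_setOf_eq, hterm]
    rw [gval_succ, gval_succ]
    congr 1
    ext v
    constructor
    · rintro ⟨p, h1, h2, h3, rfl⟩; exact ⟨p, h1, h2, h3, by rw [hiset]⟩
    · rintro ⟨p, h1, h2, h3, rfl⟩; exact ⟨p, h1, h2, h3, by rw [hiset]⟩

/-- For monotone `U`, the value is monotone in the number of wins so far. -/
lemma gval_mono_w (hP : ∀ i j, P i j ∈ Set.Icc (0 : ℝ) 1)
    (hUm : ∀ t, U t ≤ U (t + 1)) :
    ∀ (r : ℕ) (X : Finset (Fin m)) (Y : Finset (Fin n)) (w : ℕ),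
      X.card + r ≤ m → Y.card + r ≤ n →
      gval m n P U r X Y w ≤ gval m n P U r X Y (w + 1) := by
  intro r
  induction r with
  | zero => intro X Y w _ _; exact hUm w
  | succ r ih =>
    intro X Y w hX hY
    have hXm : X.card < m := by omega
    have hYn : Y.card < n := by omega
    have hterm : ∀ p, (∀ i, 0 ≤ p i) → ∀ j,
        term m n P U r X Y w p j ≤ term m n P U r X Y (w + 1) p j := by
      intro p hp0 j
      apply Finset.sum_le_sum
      intro i _
      have hX' : (insert i X).card + r ≤ m :=
        le_trans (by have := card_insert_le i X; omega) hX
      have hY' : (insert j Y).card + r ≤ n :=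
        le_trans (by have := card_insert_le j Y; omega) hY
      have h1 := ih (insert i X) (insert j Y) (w + 1) hX' hY'
      have h0 := ih (insert i X) (insert j Y) w hX' hY'
      obtain ⟨hPij0, hPij1⟩ := hP i j
      have inner :
          P i j * gval m n P U r (insert i X) (insert j Y) (w + 1) +
            (1 - P i j) * gval m n P U r (insert i X) (insert j Y) w ≤
          P i j * gval m n P U r (insert i X) (insert j Y) (w + 1 + 1) +
            (1 - P i j) * gval m n P U r (insert i X) (insert j Y) (w + 1) := by
        nlinarith
      exact mul_le_mul_of_nonneg_left inner (hp0 i)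
    rw [gval_succ, gval_succ]
    apply csSup_le (sset_nonempty hXm)
    rintro v ⟨p, hp0, hpX, hps, rfl⟩
    have hle : sInf (iset m n P U r X Y w p) ≤ sInf (iset m n P U r X Y (w + 1) p) := by
      have hmem := (iset_nonempty (P := P) (U := U) r X (w + 1) p hYn).csInf_mem
        (iset_finite (P := P) (U := U) r X Y (w + 1) p)
      obtain ⟨j, hj, hjeq⟩ := hmem
      calc sInf (iset m n P U r X Y w p) ≤ term m n P U r X Y w p j :=
            csInf_le (iset_finite r X Y w p).bddBelow ⟨j, hj, rfl⟩
        _ ≤ term m n P U r X Y (w + 1) p j := hterm p hp0 j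
        _ = sInf (iset m n P U r X Y (w + 1) p) := hjeq.symm
    calc sInf (iset m n P U r X Y w p) ≤ sInf (iset m n P U r X Y (w + 1) p) := hle
      _ ≤ sSup (sset m n P U r X Y (w + 1)) :=
          le_csSup (bddAbove_sset hP hUm hX hY) ⟨p, hp0, hpX, hps, rfl⟩

/-! ### Rank machinery: the `r` strongest (smallest-index) available players -/

/-- Number of elements of `A` smaller than `x` (the rank of `x` in `A`). -/
def cnt (A : Finset (Fin m)) (x : Fin m) : ℕ := (A.filter (fun y => y < x)).card

/-- The `k` smallest elements of `A` (all of `A` if `A.card ≤ k`). -/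
def top (k : ℕ) (A : Finset (Fin m)) : Finset (Fin m) :=
  A.filter (fun x => cnt A x < k)

lemma mem_top {k : ℕ} {A : Finset (Fin m)} {x : Fin m} :
    x ∈ top k A ↔ x ∈ A ∧ cnt A x < k := mem_filter

lemma top_subset {k : ℕ} {A : Finset (Fin m)} : top k A ⊆ A := filter_subset _ _

lemma cnt_strictmono {A : Finset (Fin m)} {x y : Fin m} (hx : x ∈ A) (hxy : x < y) :
    cnt A x < cnt A y := by
  apply card_lt_card
  rw [Finset.ssubset_iff_of_subset
    (Finset.monotone_filter_right _ (fun z _ hz => lt_trans hz hxy))]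
  exact ⟨x, mem_filter.2 ⟨hx, hxy⟩, fun hmem => lt_irrefl x (mem_filter.1 hmem).2⟩

lemma cnt_mono {A : Finset (Fin m)} {x y : Fin m} (hxy : x ≤ y) :
    cnt A x ≤ cnt A y :=
  card_le_card (Finset.monotone_filter_right _ (fun z _ hz => lt_of_lt_of_le hz hxy))

lemma cnt_inj {A : Finset (Fin m)} {x y : Fin m} (hx : x ∈ A) (hy : y ∈ A)
    (h : cnt A x = cnt A y) : x = y := by
  rcases lt_trichotomy x y with hlt | heq | hlt
  · exact absurd h (Nat.ne_of_lt (cnt_strictmono hx hlt))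
  · exact heq
  · exact absurd h.symm (Nat.ne_of_lt (cnt_strictmono hy hlt))

lemma cnt_lt_card {A : Finset (Fin m)} {x : Fin m} (hx : x ∈ A) : cnt A x < A.card := by
  apply card_lt_card
  rw [Finset.ssubset_iff_of_subset (filter_subset _ _)]
  exact ⟨x, hx, fun hmem => lt_irrefl x (mem_filter.1 hmem).2⟩

lemma top_eq_self {k : ℕ} {A : Finset (Fin m)} (h : A.card ≤ k) : top k A = A :=
  Finset.filter_true_of_mem (fun x hx => lt_of_lt_of_le (cnt_lt_card hx) h)

lemma cnt_erase (A : Finset (Fin m)) (a x : Fin m) :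
    cnt (A.erase a) x = if a ∈ A ∧ a < x then cnt A x - 1 else cnt A x := by
  unfold cnt
  have hset : (A.erase a).filter (fun y => y < x) = (A.filter (fun y => y < x)).erase a := by
    ext z
    simp only [mem_filter, mem_erase]
    tauto
  rw [hset]
  by_cases h : a ∈ A ∧ a < x
  · rw [if_pos h, card_erase_of_mem
      (show a ∈ A.filter (fun y => y < x) from mem_filter.2 ⟨h.1, h.2⟩)]
  · rw [if_neg h, erase_eq_of_notMem]
    intro hmem
    exact h ⟨(mem_filter.1 hmem).1, (mem_filter.1 hmem).2⟩

lemma cnt_orderIsoOfFin (A : Finset (Fin m)) (k : Fin A.card) :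
    cnt A ((A.orderIsoOfFin rfl k : A) : Fin m) = (k : ℕ) := by
  set f := A.orderIsoOfFin rfl with hf
  have himg : A.filter (fun y => y < ((f k : A) : Fin m)) =
      (univ.filter (fun j : Fin A.card => j < k)).image (fun j => ((f j : A) : Fin m)) := by
    ext x
    simp only [mem_filter, mem_image, mem_univ, true_and]
    constructor
    · rintro ⟨hxA, hx⟩
      refine ⟨f.symm ⟨x, hxA⟩, ?_, by simp⟩
      rw [← f.lt_iff_lt]
      simpa using (show (⟨x, hxA⟩ : A) < f k from hx)
    · rintro ⟨j, hj, rfl⟩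
      exact ⟨(f j).2, Subtype.coe_lt_coe.2 (f.lt_iff_lt.2 hj)⟩
  rw [cnt, himg, card_image_of_injective _
    (show Function.Injective (fun j : Fin A.card => ((f j : A) : Fin m)) from
      fun a b h => f.injective (Subtype.ext h))]
  have : (univ.filter (fun j : Fin A.card => j < k)) = Finset.Iio k := by
    ext j; simp
  rw [this, Fin.card_Iio]

lemma exists_cnt_eq {A : Finset (Fin m)} {k : ℕ} (h : k < A.card) :
    ∃ s ∈ A, cnt A s = k :=
  ⟨((A.orderIsoOfFin rfl ⟨k, h⟩ : A) : Fin m), (A.orderIsoOfFin rfl ⟨k, h⟩).2,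
    cnt_orderIsoOfFin A ⟨k, h⟩⟩

lemma top_card {k : ℕ} {A : Finset (Fin m)} (h : k ≤ A.card) : (top k A).card = k := by
  apply le_antisymm
  · calc (top k A).card ≤ (Finset.range k).card := by
          apply Finset.card_le_card_of_injOn (fun x => cnt A x)
          · intro x hx
            exact Finset.mem_range.2 (mem_top.1 hx).2
          · intro x hx y hy hxy
            exact cnt_inj (mem_top.1 hx).1 (mem_top.1 hy).1 hxy
      _ = k := Finset.card_range k
  · calc k = (univ : Finset (Fin k)).card := by rw [card_univ, Fintype.card_fin]
      _ ≤ (top k A).card := by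
          apply Finset.card_le_card_of_injOn
            (fun j : Fin k => ((A.orderIsoOfFin rfl ⟨j, lt_of_lt_of_le j.2 h⟩ : A) : Fin m))
          · intro j _
            exact mem_top.2 ⟨(A.orderIsoOfFin rfl ⟨j, lt_of_lt_of_le j.2 h⟩).2,
              by rw [cnt_orderIsoOfFin]; exact j.2⟩
          · intro j1 _ j2 _ hj
            have := congrArg (cnt A) hj
            rw [cnt_orderIsoOfFin, cnt_orderIsoOfFin] at this
            exact Fin.ext this

lemma top_erase_of_mem {A : Finset (Fin m)} {r : ℕ} {b : Fin m} (hb : b ∈ top (r + 1) A) :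
    top r (A.erase b) = (top (r + 1) A).erase b := by
  obtain ⟨hbA, hcb⟩ := mem_top.1 hb
  ext x
  rw [mem_top, mem_erase, mem_erase, mem_top]
  constructor
  · rintro ⟨⟨hxb, hxA⟩, hcx⟩
    rw [cnt_erase] at hcx
    refine ⟨hxb, hxA, ?_⟩
    by_cases hblt : b < x
    · rw [if_pos ⟨hbA, hblt⟩] at hcx
      omega
    · rw [if_neg (fun hc => hblt hc.2)] at hcx
      omega
  · rintro ⟨hxb, hxA, hcx⟩
    refine ⟨⟨hxb, hxA⟩, ?_⟩
    rw [cnt_erase]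
    by_cases hblt : b < x
    · rw [if_pos ⟨hbA, hblt⟩]
      have h1 : 1 ≤ cnt A x := by
        rw [cnt]
        exact Finset.card_pos.2 ⟨b, mem_filter.2 ⟨hbA, hblt⟩⟩ 
      omega
    · rw [if_neg (fun hc => hblt hc.2)]
      have hxltb : x < b := by
        rcases lt_trichotomy x b with h | h | h
        · exact h
        · exact absurd h hxb
        · exact absurd h hblt
      have := cnt_strictmono hxA hxltb
      omega

lemma top_erase_of_not_mem {A : Finset (Fin m)} {r : ℕ} {a s : Fin m}
    (haA : a ∈ A) (hna : a ∉ top (r + 1) A) (hsA : s ∈ A) (hcs : cnt A s = r) :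
    top r (A.erase a) = (top (r + 1) A).erase s := by
  have hca : r + 1 ≤ cnt A a := by
    by_contra hc
    exact hna (mem_top.2 ⟨haA, by omega⟩)
  ext x
  rw [mem_top, mem_erase, mem_erase, mem_top]
  constructor
  · rintro ⟨⟨hxa, hxA⟩, hcx⟩
    rw [cnt_erase] at hcx
    by_cases halt : a < x
    · rw [if_pos ⟨haA, halt⟩] at hcx
      have := cnt_strictmono haA halt
      omega
    · rw [if_neg (fun hc => halt hc.2)] at hcx
      refine ⟨fun h => ?_, hxA, by omega⟩
      rw [h, hcs] at hcx
      omega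
  · rintro ⟨hxs, hxA, hcx⟩
    have hxa : x ≠ a := by
      intro h
      rw [h] at hcx
      omega
    have hnalt : ¬ a < x := by
      intro halt
      have := cnt_strictmono haA halt
      omega
    refine ⟨⟨hxa, hxA⟩, ?_⟩
    rw [cnt_erase, if_neg (fun hc => hnalt hc.2)]
    have hne : cnt A x ≠ r := fun h => hxs (cnt_inj hxA hsA (h.trans hcs.symm))
    omega

/-- **Key lemma**: the value only depends on the `r` strongest available players:
forbidding everybody outside the `r` strongest available players does not change
the value. -/
lemma gval_top (hP : ∀ i j, P i j ∈ Set.Icc (0 : ℝ) 1)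
    (hUm : ∀ t, U t ≤ U (t + 1))
    (hsorted : ∀ i j : Fin m, i ≤ j → ∀ l : Fin n, P j l ≤ P i l) :
    ∀ (r : ℕ) (X : Finset (Fin m)) (Y : Finset (Fin n)) (w : ℕ),
      X.card + r ≤ m → Y.card + r ≤ n →
      gval m n P U r X Y w = gval m n P U r (top r Xᶜ)ᶜ Y w := by
  intro r
  induction r with
  | zero =>
    intro X Y w _ _
    rw [gval_zero, gval_zero]
  | succ r ih =>
    intro X Y w hX hY
    have hXm : X.card < m := by omega
    have hYn : Y.card < n := by omega
    set A : Finset (Fin m) := Xᶜ with hA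
    have hcardA : r + 1 ≤ A.card := by
      have h1 : X.card ≤ m := by
        have := card_le_univ X
        simpa [Fintype.card_fin] using this
      rw [hA, card_compl, Fintype.card_fin]
      omega
    obtain ⟨s, hsA, hcs⟩ := exists_cnt_eq (show r < A.card by omega)
    set A' : Finset (Fin m) := top (r + 1) A with hA'
    have hs' : s ∈ A' := mem_top.2 ⟨hsA, by omega⟩
    set X' : Finset (Fin m) := A'ᶜ with hX'
    have hA'sub : A' ⊆ A := top_subset
    have hA'card : A'.card = r + 1 := top_card hcardA
    have hmm : r + 1 ≤ m := by omega
    have hX'card : X'.card = m - (r + 1) := by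
      rw [hX', card_compl, Fintype.card_fin, hA'card]
    have hX'le : X'.card + (r + 1) ≤ m := by omega
    have hXsub : X ⊆ X' := by
      intro x hx
      rw [hX', mem_compl]
      intro hxA'
      have hxA : x ∈ A := hA'sub hxA'
      rw [hA, mem_compl] at hxA
      exact hxA hx
    have hcompl : ∀ b : Fin m, (insert b X)ᶜ = A.erase b := by
      intro b; rw [compl_insert, ← hA]
    have hcompl' : ∀ b : Fin m, (insert b X')ᶜ = A'.erase b := by
      intro b; rw [compl_insert, hX', compl_compl]
    -- the continuation value is the same from `X` and from `X'` for strong players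
    have hcont : ∀ b ∈ A', ∀ (j : Fin n) (w' : ℕ), (insert j Y).card + r ≤ n →
        gval m n P U r (insert b X) (insert j Y) w'
          = gval m n P U r (insert b X') (insert j Y) w' := by
      intro b hb j w' hjY
      have hbX : (insert b X).card + r ≤ m :=
        le_trans (by have := card_insert_le b X; omega) hX
      have hbX' : (insert b X').card + r ≤ m := by
        have := card_insert_le b X'; omega
      have e1 : top r ((insert b X)ᶜ) = A'.erase b := by
        rw [hcompl b]
        exact top_erase_of_mem (hA' ▸ hb)
      have e2 : top r ((insert b X')ᶜ) = A'.erase b := by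
        rw [hcompl' b]
        apply top_eq_self
        rw [card_erase_of_mem hb, hA'card]
        omega
      rw [ih _ _ _ hbX hjY, ih _ _ _ hbX' hjY, e1, e2]
    -- replacing a weak player by the `r+1`-st strongest leads to the same continuation
    have hconts : ∀ a, a ∈ A → a ∉ A' → ∀ (j : Fin n) (w' : ℕ), (insert j Y).card + r ≤ n →
        gval m n P U r (insert a X) (insert j Y) w'
          = gval m n P U r (insert s X') (insert j Y) w' := by
      intro a haA haA' j w' hjY
      have haX : (insert a X).card + r ≤ m :=
        le_trans (by have := card_insert_le a X; omega) hX
      have hsX' : (insert s X').card + r ≤ m := by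
        have := card_insert_le s X'; omega
      have e1 : top r ((insert a X)ᶜ) = A'.erase s := by
        rw [hcompl a]
        exact top_erase_of_not_mem haA (hA' ▸ haA') hsA hcs
      have e2 : top r ((insert s X')ᶜ) = A'.erase s := by
        rw [hcompl' s]
        apply top_eq_self
        rw [card_erase_of_mem hs', hA'card]
        omega
      rw [ih _ _ _ haX hjY, ih _ _ _ hsX' hjY, e1, e2]
    rw [gval_succ, gval_succ]
    apply le_antisymm
    · -- transport a strategy from `X` to `X'`
      apply csSup_le (sset_nonempty hXm)
      rintro v ⟨p, hp0, hpX, hps, rfl⟩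
      set q : Fin m → ℝ := fun b => ∑ a, if (if a ∈ A' then a else s) = b then p a else 0
        with hq
      have hq0 : ∀ b, 0 ≤ q b := by
        intro b
        apply Finset.sum_nonneg
        intro a _
        by_cases h : (if a ∈ A' then a else s) = b <;> simp [h, hp0 a]
      have hqX' : ∀ b ∈ X', q b = 0 := by
        intro b hb
        apply Finset.sum_eq_zero
        intro a _
        have hne : (if a ∈ A' then a else s) ≠ b := by
          intro h
          apply mem_compl.1 (hX' ▸ hb)
          rw [← h]
          by_cases ha : a ∈ A'
          · rw [if_pos ha]; exact ha
          · rw [if_neg ha]; exact hs'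
        rw [if_neg hne]
      have hqs : (∑ b, q b) = 1 := by
        calc (∑ b, q b)
            = ∑ a, ∑ b, if (if a ∈ A' then a else s) = b then p a else 0 :=
              Finset.sum_comm
          _ = ∑ a, p a := by
              apply Finset.sum_congr rfl
              intro a _
              rw [Finset.sum_ite_eq univ (if a ∈ A' then a else s) (fun _ => p a)]
              simp
          _ = 1 := hps
      have hterm' : ∀ j : Fin n, term m n P U r X' Y w q j
          = ∑ a, p a *
              (P (if a ∈ A' then a else s) j *
                gval m n P U r (insert (if a ∈ A' then a else s) X') (insert j Y) (w + 1) +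
               (1 - P (if a ∈ A' then a else s) j) *
                gval m n P U r (insert (if a ∈ A' then a else s) X') (insert j Y) w) := by
        intro j
        have h0 : term m n P U r X' Y w q j
            = ∑ b, q b *
                (P b j * gval m n P U r (insert b X') (insert j Y) (w + 1) +
                 (1 - P b j) * gval m n P U r (insert b X') (insert j Y) w) := rfl
        rw [h0]
        calc (∑ b, q b *
                (P b j * gval m n P U r (insert b X') (insert j Y) (w + 1) +
                 (1 - P b j) * gval m n P U r (insert b X') (insert j Y) w))
            = ∑ b, ∑ a, (if (if a ∈ A' then a else s) = b then p a else 0) *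
                (P b j * gval m n P U r (insert b X') (insert j Y) (w + 1) +
                 (1 - P b j) * gval m n P U r (insert b X') (insert j Y) w) := by
              apply Finset.sum_congr rfl
              intro b _
              rw [hq, Finset.sum_mul]
          _ = ∑ a, ∑ b, (if (if a ∈ A' then a else s) = b then p a else 0) *
                (P b j * gval m n P U r (insert b X') (insert j Y) (w + 1) +
                 (1 - P b j) * gval m n P U r (insert b X') (insert j Y) w) :=
              Finset.sum_comm
          _ = _ := by
              apply Finset.sum_congr rfl
              intro a _
              rw [Finset.sum_eq_single (if a ∈ A' then a else s)]
              · rw [if_pos rfl]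
              · intro b _ hb
                rw [if_neg (Ne.symm hb), zero_mul]
              · intro hmem
                exact absurd (mem_univ _) hmem
      have hle : ∀ j : Fin n, term m n P U r X Y w p j ≤ term m n P U r X' Y w q j := by
        intro j
        rw [hterm' j]
        apply Finset.sum_le_sum
        intro a _
        by_cases hpa : p a = 0
        · simp [hpa]
        · have haX : a ∉ X := fun h => hpa (hpX a h)
          have haA : a ∈ A := by rw [hA, mem_compl]; exact haX
          have hjY : (insert j Y).card + r ≤ n :=
            le_trans (by have := card_insert_le j Y; omega) hY
          by_cases haA' : a ∈ A'
          · rw [if_pos haA', hcont a haA' j (w + 1) hjY, hcont a haA' j w hjY]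
          · rw [if_neg haA', hconts a haA haA' j (w + 1) hjY, hconts a haA haA' j w hjY]
            have hslta : s < a := by
              have hca : r + 1 ≤ cnt A a := by
                by_contra hc
                exact haA' (mem_top.2 ⟨haA, by omega⟩)
              rcases lt_trichotomy s a with h | h | h
              · exact h
              · exfalso; rw [h] at hcs; omega
              · exfalso; have := cnt_mono (A := A) (le_of_lt h); omega
            have hPle : P a j ≤ P s j := hsorted s a (le_of_lt hslta) j
            have hsX' : (insert s X').card + r ≤ m := by
              have := card_insert_le s X'; omega
            have hD := gval_mono_w hP hUm r (insert s X') (insert j Y) w hsX' hjY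
            obtain ⟨ha0, ha1⟩ := hP a j
            obtain ⟨hs0, hs1⟩ := hP s j
            apply mul_le_mul_of_nonneg_left _ (hp0 a)
            nlinarith [mul_nonneg (sub_nonneg.2 hPle) (sub_nonneg.2 hD)]
      have hv : sInf (iset m n P U r X Y w p) ≤ sInf (iset m n P U r X' Y w q) := by
        apply le_csInf (iset_nonempty (P := P) (U := U) r X' w q hYn)
        rintro u ⟨j, hj, rfl⟩
        calc sInf (iset m n P U r X Y w p) ≤ term m n P U r X Y w p j :=
              csInf_le (iset_finite r X Y w p).bddBelow ⟨j, hj, rfl⟩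
          _ ≤ term m n P U r X' Y w q j := hle j
      calc sInf (iset m n P U r X Y w p) ≤ sInf (iset m n P U r X' Y w q) := hv
        _ ≤ sSup (sset m n P U r X' Y w) :=
            le_csSup (bddAbove_sset hP hUm hX'le hY) ⟨q, hq0, hqX', hqs, rfl⟩
    · -- a strategy for `X'` is already a strategy for `X`, with the same value
      apply csSup_le (sset_nonempty (show X'.card < m by omega))
      rintro v ⟨p, hp0, hpX', hps, rfl⟩
      have hpX : ∀ i ∈ X, p i = 0 := fun i hi => hpX' i (hXsub hi)
      have htermeq : ∀ j : Fin n, term m n P U r X' Y w p j = term m n P U r X Y w p j := by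
        intro j
        apply Finset.sum_congr rfl
        intro a _
        by_cases hpa : p a = 0
        · simp [hpa]
        · have haA' : a ∈ A' := by
            by_contra hc
            exact hpa (hpX' a (hX' ▸ mem_compl.2 hc))
          have hjY : (insert j Y).card + r ≤ n :=
            le_trans (by have := card_insert_le j Y; omega) hY
          rw [← hcont a haA' j (w + 1) hjY, ← hcont a haA' j w hjY]
      have hiseteq : iset m n P U r X' Y w p = iset m n P U r X Y w p := by
        ext u
        exact exists_congr fun j => and_congr_right fun hj => by rw [htermeq j]
      rw [hiseteq]
      exact le_csSup (bddAbove_sset hP hUm hX hY) ⟨p, hp0, hpX, hps, rfl⟩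

/-- Relabeling lemma: the game on `Fin m` in which only the first `T` players are
ever available is the game on `Fin T`. -/
lemma gval_castLE {T : ℕ} (hm : T ≤ m) :
    ∀ (r : ℕ) (X : Finset (Fin T)) (Y : Finset (Fin n)) (w : ℕ),
      gval m n P U r ((Xᶜ.map (Fin.castLEEmb hm))ᶜ) Y w
        = gval T n (fun i j => P (Fin.castLE hm i) j) U r X Y w := by
  intro r
  induction r with
  | zero => intro X Y w; rw [gval_zero, gval_zero]
  | succ r ih =>
    intro X Y w
    set e : Fin T ↪ Fin m := Fin.castLEEmb hm with he
    have hek : ∀ k : Fin T, (e k : Fin m) = Fin.castLE hm k := fun k => rfl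
    set XB : Finset (Fin m) := (Xᶜ.map e)ᶜ with hXB
    have hstate : ∀ k : Fin T,
        insert (e k) XB = (((insert k X)ᶜ).map e)ᶜ := by
      intro k
      have h1 : (insert (e k) XB)ᶜ = ((insert k X)ᶜ).map e := by
        rw [compl_insert, hXB, compl_compl, ← map_erase, compl_insert]
      calc insert (e k) XB = ((insert (e k) XB)ᶜ)ᶜ := (compl_compl _).symm
        _ = _ := by rw [h1]
    -- any strategy supported away from XB lives on the image of `e`
    have hoff : ∀ (p : Fin m → ℝ), (∀ i ∈ XB, p i = 0) → ∀ i, i ∉ univ.map e → p i = 0 := by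
      intro p hp i hi
      apply hp
      rw [hXB, mem_compl]
      intro hmem
      exact hi (map_subset_map.2 (subset_univ _) hmem)
    have hsum : ∀ (p : Fin m → ℝ), (∀ i ∈ XB, p i = 0) →
        (∑ i, p i) = ∑ k, p (e k) := by
      intro p hp
      rw [← Finset.sum_map univ e p]
      exact (Finset.sum_subset (subset_univ _) (fun i _ hi => hoff p hp i hi)).symm
    have hterm : ∀ (p : Fin m → ℝ), (∀ i ∈ XB, p i = 0) → ∀ j : Fin n,
        term m n P U r XB Y w p j
          = term T n (fun i j => P (Fin.castLE hm i) j) U r X Y w (fun k => p (e k)) j := by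
      intro p hp j
      have h0 : term m n P U r XB Y w p j = ∑ i, p i *
          (P i j * gval m n P U r (insert i XB) (insert j Y) (w + 1) +
           (1 - P i j) * gval m n P U r (insert i XB) (insert j Y) w) := rfl
      rw [h0]
      rw [← Finset.sum_subset (subset_univ (univ.map e))
        (fun i _ hi => by rw [hoff p hp i hi, zero_mul]),
        Finset.sum_map univ e]
      apply Finset.sum_congr rfl
      intro k _
      rw [hstate k, ih (insert k X) (insert j Y) (w + 1), ih (insert k X) (insert j Y) w,
        hek k]
      rfl
    have hiset : ∀ (p : Fin m → ℝ), (∀ i ∈ XB, p i = 0) →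
        iset m n P U r XB Y w p
          = iset T n (fun i j => P (Fin.castLE hm i) j) U r X Y w (fun k => p (e k)) := by
      intro p hp
      ext u
      exact exists_congr fun j => and_congr_right fun _ => by rw [hterm p hp j]
    rw [gval_succ, gval_succ]
    congr 1
    ext v
    constructor
    · rintro ⟨p, hp0, hpXB, hps, rfl⟩
      refine ⟨fun k => p (e k), fun k => hp0 (e k), ?_, ?_, ?_⟩
      · intro k hk
        apply hpXB
        rw [hXB, mem_compl, mem_map]
        rintro ⟨a, ha, hae⟩
        rw [mem_compl] at ha
        exact ha (e.injective hae ▸ hk)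
      · rw [← hsum p hpXB, hps]
      · rw [hiset p hpXB]
    · rintro ⟨q, hq0, hqX, hqs, rfl⟩
      classical
      set p : Fin m → ℝ := fun i => if h : (i : ℕ) < T then q ⟨i, h⟩ else 0 with hpdef
      have hpe : ∀ k : Fin T, p (e k) = q k := by
        intro k
        have hk : ((e k : Fin m) : ℕ) < T := by
          rw [hek k]
          exact k.2
        rw [hpdef]
        simp only
        rw [dif_pos hk]
        exact congrArg q (Fin.ext rfl)
      have hpXB : ∀ i ∈ XB, p i = 0 := by
        intro i hi
        rw [hXB, mem_compl] at hi
        by_cases h : (i : ℕ) < T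
        · rw [hpdef]
          simp only
          rw [dif_pos h]
          have hie : i = e ⟨i, h⟩ := Fin.ext rfl
          apply hqX
          by_contra hc
          exact hi (hie ▸ mem_map' e |>.2 (mem_compl.2 hc))
        · rw [hpdef]; simp only; rw [dif_neg h]
      have hfun : (fun k => p (e k)) = q := funext hpe
      refine ⟨p, ?_, hpXB, ?_, ?_⟩
      · intro i
        rw [hpdef]
        simp only
        by_cases h : (i : ℕ) < T
        · rw [dif_pos h]; exact hq0 _
        · rw [dif_neg h]
      · rw [hsum p hpXB, hfun, hqs]
      · rw [hiset p hpXB, hfun]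

end AbandonAux

/-- If the utility function is monotone and the rows of `P` are
sorted by strength (`P i l ≥ P j l` whenever `i ≤ j`), then the value of the game
is unchanged when Team 1 abandons its `m - T` weakest players, i.e. it equals the
value of the game played with only the first `T` rows of `P`. -/
theorem abandon_weakest_transitive (T m n : ℕ) (hT : 1 ≤ T) (hm : T ≤ m) (hn : T ≤ n)
    (P : Fin m → Fin n → ℝ) (hP : ∀ i j, P i j ∈ Set.Icc (0 : ℝ) 1)
    (U : ℕ → ℝ) (hU : ∀ t < T, U t ≤ U (t + 1))
    (hsorted : ∀ i j : Fin m, i ≤ j → ∀ l : Fin n, P j l ≤ P i l) :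
    gval m n P U T ∅ ∅ 0 =
      gval T n (fun i j => P (Fin.castLE hm i) j) U T ∅ ∅ 0 := by
  classical
  set U' : ℕ → ℝ := fun t => U (min t T) with hU'
  have hU'm : ∀ t, U' t ≤ U' (t + 1) := by
    intro t
    show U (min t T) ≤ U (min (t + 1) T)
    by_cases h : t < T
    · rw [min_eq_left (by omega), min_eq_left (by omega)]
      exact hU t h
    · rw [min_eq_right (by omega), min_eq_right (by omega)]
  have hwin : ∀ t, 0 ≤ t → t ≤ 0 + T → U t = U' t := by
    intro t _ h2
    show U t = U (min t T)
    rw [min_eq_left (by omega)]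
  rw [AbandonAux.gval_congrU T ∅ ∅ 0 hwin,
    AbandonAux.gval_congrU (P := fun i j => P (Fin.castLE hm i) j) T ∅ ∅ 0 hwin,
    AbandonAux.gval_top hP hU'm hsorted T ∅ ∅ 0 (by simpa using hm) (by simpa using hn)]
  have hset : AbandonAux.top T (∅ᶜ : Finset (Fin m))
      = (∅ᶜ : Finset (Fin T)).map (Fin.castLEEmb hm) := by
    rw [Finset.compl_empty, Finset.compl_empty]
    ext x
    rw [AbandonAux.mem_top]
    simp only [Finset.mem_univ, true_and, Finset.mem_map]
    have hcnt : AbandonAux.cnt Finset.univ x = (x : ℕ) := by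
      rw [AbandonAux.cnt]
      have h : (Finset.univ.filter (fun y => y < x)) = Finset.Iio x := by
        ext z; simp
      rw [h, Fin.card_Iio]
    rw [hcnt]
    constructor
    · intro hx
      exact ⟨⟨x, hx⟩, Fin.ext rfl⟩
    · rintro ⟨k, rfl⟩
      exact k.2
  rw [hset]
  exact AbandonAux.gval_castLE hm T ∅ ∅ 0
end

section
/- Assume U is monotone, P i l ≥ P j l for all i ≤ j and all l (Team 1's players are sorted by strength), and P l i ≤ P l j for all i ≤ j and all l (Team 2's players are sorted by strength, player j of Team 2 being weaker than player i whenever i ≤ j). Then V(G(T,P,U)) = (1/T!)·Σ_{σ ∈ S_T} Σ_{S ⊆ {1,…,T}} U(|S|)·∏_{i∈S} P i σ(i)·∏_{i∉S} (1 − P i σ(i)), where S_T is the set of all bijections σ of {1,…,T}; i.e., under transitive strengths the value equals that of the competition among the top T players of each team, in which uniformly random play is optimal. -/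
section AuxTeamComp
open Equiv Finset


/-- permutation of `Fin (r+1)` sending `k ↦ j` and `k.succAbove i ↦ j.succAbove (τ i)`. -/
def mkPerm {r : ℕ} (k j : Fin (r+1)) (τ : Perm (Fin r)) : Perm (Fin (r+1)) :=
  ((finSuccEquiv' k).trans (Equiv.optionCongr τ)).trans (finSuccEquiv' j).symm

@[simp] lemma mkPerm_self {r : ℕ} (k j : Fin (r+1)) (τ : Perm (Fin r)) :
    mkPerm k j τ k = j := by
  simp [mkPerm, finSuccEquiv'_at, finSuccEquiv'_symm_none]

@[simp] lemma mkPerm_succAbove {r : ℕ} (k j : Fin (r+1)) (τ : Perm (Fin r)) (i : Fin r) :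
    mkPerm k j τ (k.succAbove i) = j.succAbove (τ i) := by
  simp [mkPerm, finSuccEquiv'_succAbove, finSuccEquiv'_symm_some]

lemma mkPerm_inj1 {r : ℕ} (j : Fin (r+1)) :
    Function.Injective (fun kt : Fin (r+1) × Perm (Fin r) => mkPerm kt.1 j kt.2) := by
  rintro ⟨k, τ⟩ ⟨k', τ'⟩ h
  simp only at h
  have hk : k = k' := by
    have h1 : (mkPerm k j τ).symm j = k :=
      (Equiv.symm_apply_eq _).2 (mkPerm_self k j τ).symm
    have h2 : (mkPerm k' j τ').symm j = k' :=
      (Equiv.symm_apply_eq _).2 (mkPerm_self k' j τ').symm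
    rw [← h1, ← h2, h]
  subst hk
  have hτ : τ = τ' := by
    ext i
    have := congrArg (fun σ : Perm (Fin (r+1)) => σ (k.succAbove i)) h
    simp only [mkPerm_succAbove] at this
    have h2 : τ i = τ' i := Fin.succAbove_right_injective this
    exact congrArg Fin.val h2
  rw [hτ]

lemma mkPerm_inj2 {r : ℕ} (k : Fin (r+1)) :
    Function.Injective (fun kt : Fin (r+1) × Perm (Fin r) => mkPerm k kt.1 kt.2) := by
  rintro ⟨j, τ⟩ ⟨j', τ'⟩ h
  simp only at h
  have hj : j = j' := by
    have := congrArg (fun σ : Perm (Fin (r+1)) => σ k) h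
    simpa using this
  subst hj
  have hτ : τ = τ' := by
    ext i
    have := congrArg (fun σ : Perm (Fin (r+1)) => σ (k.succAbove i)) h
    simp only [mkPerm_succAbove] at this
    have h2 : τ i = τ' i := Fin.succAbove_right_injective this
    exact congrArg Fin.val h2
  rw [hτ]

lemma card_eq_perm {r : ℕ} :
    Fintype.card (Fin (r+1) × Perm (Fin r)) = Fintype.card (Perm (Fin (r+1))) := by
  simp [Fintype.card_perm, Nat.factorial_succ]

lemma sum_perm_decomp1 {r : ℕ} (j : Fin (r+1)) (g : Perm (Fin (r+1)) → ℝ) :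
    ∑ σ : Perm (Fin (r+1)), g σ =
      ∑ k : Fin (r+1), ∑ τ : Perm (Fin r), g (mkPerm k j τ) := by
  rw [show (∑ k : Fin (r+1), ∑ τ : Perm (Fin r), g (mkPerm k j τ))
      = ∑ kt : Fin (r+1) × Perm (Fin r), g (mkPerm kt.1 j kt.2) from
    (Fintype.sum_prod_type (f := fun kt : Fin (r+1) × Perm (Fin r) => g (mkPerm kt.1 j kt.2))).symm]
  have hbij : Function.Bijective (fun kt : Fin (r+1) × Perm (Fin r) => mkPerm kt.1 j kt.2) :=
    (Fintype.bijective_iff_injective_and_card _).2 ⟨mkPerm_inj1 j, card_eq_perm⟩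
  exact (hbij.sum_comp g).symm

lemma sum_perm_decomp2 {r : ℕ} (k : Fin (r+1)) (g : Perm (Fin (r+1)) → ℝ) :
    ∑ σ : Perm (Fin (r+1)), g σ =
      ∑ j : Fin (r+1), ∑ τ : Perm (Fin r), g (mkPerm k j τ) := by
  rw [show (∑ j : Fin (r+1), ∑ τ : Perm (Fin r), g (mkPerm k j τ))
      = ∑ jt : Fin (r+1) × Perm (Fin r), g (mkPerm k jt.1 jt.2) from
    (Fintype.sum_prod_type (f := fun jt : Fin (r+1) × Perm (Fin r) => g (mkPerm k jt.1 jt.2))).symm]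
  have hbij : Function.Bijective (fun jt : Fin (r+1) × Perm (Fin r) => mkPerm k jt.1 jt.2) :=
    (Fintype.bijective_iff_injective_and_card _).2 ⟨mkPerm_inj2 k, card_eq_perm⟩
  exact (hbij.sum_comp g).symm

/-- split a sum over all subsets of `Fin (r+1)` according to whether `k` belongs. -/
lemma sum_finset_split {r : ℕ} (k : Fin (r+1)) (φ : Finset (Fin (r+1)) → ℝ) :
    ∑ S : Finset (Fin (r+1)), φ S =
      ∑ S : Finset (Fin r),
        (φ (S.map k.succAboveEmb) + φ (insert k (S.map k.succAboveEmb))) := by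
  have hnot : ∀ S : Finset (Fin r), k ∉ S.map k.succAboveEmb := by
    intro S hk
    rcases Finset.mem_map.1 hk with ⟨i, _, hi⟩
    exact Fin.succAbove_ne k i hi
  have hinj : Function.Injective (fun Sb : Finset (Fin r) × Bool =>
      if Sb.2 then insert k (Sb.1.map k.succAboveEmb) else Sb.1.map k.succAboveEmb) := by
    rintro ⟨S, b⟩ ⟨S', b'⟩ h
    simp only at h
    have hmapinj : S.map k.succAboveEmb = S'.map k.succAboveEmb → S = S' :=
      fun hh => Finset.map_injective _ hh
    cases b <;> cases b'
    · have h' : S.map k.succAboveEmb = S'.map k.succAboveEmb := by simpa using h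
      exact congrArg (·, false) (hmapinj h')
    · exfalso
      have h' : S.map k.succAboveEmb = insert k (S'.map k.succAboveEmb) := by simpa using h
      have : k ∈ S.map k.succAboveEmb := by rw [h']; exact Finset.mem_insert_self k _
      exact hnot S this
    · exfalso
      have h' : insert k (S.map k.succAboveEmb) = S'.map k.succAboveEmb := by simpa using h
      have : k ∈ S'.map k.succAboveEmb := by rw [← h']; exact Finset.mem_insert_self k _
      exact hnot S' this
    · have h' : insert k (S.map k.succAboveEmb) = insert k (S'.map k.succAboveEmb) := by
        simpa using h
      have : S.map k.succAboveEmb = S'.map k.succAboveEmb := by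
        have h1 := congrArg (Finset.erase · k) h'
        simpa [Finset.erase_insert (hnot S), Finset.erase_insert (hnot S')] using h1
      exact congrArg (·, true) (hmapinj this)
  have hbij : Function.Bijective (fun Sb : Finset (Fin r) × Bool =>
      if Sb.2 then insert k (Sb.1.map k.succAboveEmb) else Sb.1.map k.succAboveEmb) := by
    refine (Fintype.bijective_iff_injective_and_card _).2 ⟨hinj, ?_⟩
    simp [Fintype.card_finset, pow_succ]
  rw [← hbij.sum_comp φ]
  rw [show (∑ Sb : Finset (Fin r) × Bool, φ (if Sb.2 then insert k (Sb.1.map k.succAboveEmb)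
        else Sb.1.map k.succAboveEmb))
      = ∑ S : Finset (Fin r), ∑ b : Bool, φ (if b then insert k (S.map k.succAboveEmb)
        else S.map k.succAboveEmb) from
    Fintype.sum_prod_type (f := fun Sb : Finset (Fin r) × Bool =>
      φ (if Sb.2 then insert k (Sb.1.map k.succAboveEmb) else Sb.1.map k.succAboveEmb))]
  refine Finset.sum_congr rfl fun S _ => ?_
  rw [Fintype.sum_bool]
  simp [add_comm]

/-- Average over all matchings of `a`-players vs `b`-players of the expected utility. -/
noncomputable def Fval {m n : ℕ} (P : Fin m → Fin n → ℝ) (U : ℕ → ℝ) (r : ℕ)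
    (a : Fin r → Fin m) (b : Fin r → Fin n) (w : ℕ) : ℝ :=
  (r.factorial : ℝ)⁻¹ * ∑ σ : Perm (Fin r), ∑ S : Finset (Fin r),
    U (w + S.card) * ∏ i, (if i ∈ S then P (a i) (b (σ i)) else 1 - P (a i) (b (σ i)))

lemma Fval_key {m n : ℕ} (P : Fin m → Fin n → ℝ) (U : ℕ → ℝ) {r : ℕ}
    (a : Fin (r+1) → Fin m) (b : Fin (r+1) → Fin n) (w : ℕ) (k j₀ : Fin (r+1)) :
    ∑ τ : Perm (Fin r), ∑ S : Finset (Fin (r+1)),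
      U (w + S.card) * ∏ i, (if i ∈ S then P (a i) (b (mkPerm k j₀ τ i))
        else 1 - P (a i) (b (mkPerm k j₀ τ i)))
    = (r.factorial : ℝ) *
        (P (a k) (b j₀) * Fval P U r (a ∘ k.succAbove) (b ∘ j₀.succAbove) (w+1)
         + (1 - P (a k) (b j₀)) * Fval P U r (a ∘ k.succAbove) (b ∘ j₀.succAbove) w) := by
  have hfac : (r.factorial : ℝ) ≠ 0 := Nat.cast_ne_zero.2 r.factorial_ne_zero
  have hnot : ∀ S : Finset (Fin r), k ∉ S.map k.succAboveEmb := by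
    intro S hk
    rcases Finset.mem_map.1 hk with ⟨i, _, hi⟩
    exact Fin.succAbove_ne k i hi
  have hstep : ∀ τ : Perm (Fin r),
      (∑ S : Finset (Fin (r+1)), U (w + S.card) *
        ∏ i, (if i ∈ S then P (a i) (b (mkPerm k j₀ τ i))
          else 1 - P (a i) (b (mkPerm k j₀ τ i))))
      = ∑ S : Finset (Fin r),
          ((1 - P (a k) (b j₀)) * (U (w + S.card) *
            ∏ i, (if i ∈ S then P ((a ∘ k.succAbove) i) ((b ∘ j₀.succAbove) (τ i))
              else 1 - P ((a ∘ k.succAbove) i) ((b ∘ j₀.succAbove) (τ i))))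
          + P (a k) (b j₀) * (U ((w+1) + S.card) *
            ∏ i, (if i ∈ S then P ((a ∘ k.succAbove) i) ((b ∘ j₀.succAbove) (τ i))
              else 1 - P ((a ∘ k.succAbove) i) ((b ∘ j₀.succAbove) (τ i))))) := by
    intro τ
    rw [sum_finset_split k]
    refine Finset.sum_congr rfl fun S _ => ?_
    have hprod : ∀ T : Finset (Fin (r+1)),
        (∏ i, (if i ∈ T then P (a i) (b (mkPerm k j₀ τ i))
          else 1 - P (a i) (b (mkPerm k j₀ τ i))))
        = (if k ∈ T then P (a k) (b j₀) else 1 - P (a k) (b j₀)) *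
          ∏ i : Fin r, (if k.succAbove i ∈ T then P (a (k.succAbove i)) (b (j₀.succAbove (τ i)))
            else 1 - P (a (k.succAbove i)) (b (j₀.succAbove (τ i)))) := by
      intro T
      rw [Fin.prod_univ_succAbove (fun i => (if i ∈ T then P (a i) (b (mkPerm k j₀ τ i))
          else 1 - P (a i) (b (mkPerm k j₀ τ i)))) k]
      simp only [mkPerm_self, mkPerm_succAbove]
    have hmem1 : ∀ i : Fin r, (k.succAbove i ∈ S.map k.succAboveEmb) ↔ i ∈ S := by
      intro i
      constructor
      · intro hi
        rcases Finset.mem_map.1 hi with ⟨i', hi', he⟩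
        have : i' = i := Fin.succAbove_right_injective he
        exact this ▸ hi'
      · intro hi; exact Finset.mem_map_of_mem _ hi
    have hmem2 : ∀ i : Fin r, (k.succAbove i ∈ insert k (S.map k.succAboveEmb)) ↔ i ∈ S := by
      intro i
      rw [Finset.mem_insert]
      constructor
      · rintro (he | hi)
        · exact absurd he (Fin.succAbove_ne k i)
        · exact (hmem1 i).1 hi
      · intro hi; exact Or.inr ((hmem1 i).2 hi)
    rw [hprod, hprod]
    rw [if_neg (hnot S), if_pos (Finset.mem_insert_self k _)]
    rw [Finset.card_map, Finset.card_insert_of_notMem (hnot S), Finset.card_map]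
    have hc : w + (S.card + 1) = (w + 1) + S.card := by omega
    rw [hc]
    have hpr : ∀ T : Finset (Fin (r+1)), (∀ i : Fin r, (k.succAbove i ∈ T) ↔ i ∈ S) →
        (∏ i : Fin r, (if k.succAbove i ∈ T then P (a (k.succAbove i)) (b (j₀.succAbove (τ i)))
          else 1 - P (a (k.succAbove i)) (b (j₀.succAbove (τ i)))))
        = ∏ i : Fin r, (if i ∈ S then P ((a ∘ k.succAbove) i) ((b ∘ j₀.succAbove) (τ i))
            else 1 - P ((a ∘ k.succAbove) i) ((b ∘ j₀.succAbove) (τ i))) := by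
      intro T hT
      refine Finset.prod_congr rfl fun i _ => ?_
      simp only [Function.comp_apply]
      exact if_congr (hT i) rfl rfl
    rw [hpr _ hmem1, hpr _ hmem2]
    ring
  calc (∑ τ : Perm (Fin r), ∑ S : Finset (Fin (r+1)), U (w + S.card) *
        ∏ i, (if i ∈ S then P (a i) (b (mkPerm k j₀ τ i))
          else 1 - P (a i) (b (mkPerm k j₀ τ i))))
      = ∑ τ : Perm (Fin r), ∑ S : Finset (Fin r),
          ((1 - P (a k) (b j₀)) * (U (w + S.card) *
            ∏ i, (if i ∈ S then P ((a ∘ k.succAbove) i) ((b ∘ j₀.succAbove) (τ i))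
              else 1 - P ((a ∘ k.succAbove) i) ((b ∘ j₀.succAbove) (τ i))))
          + P (a k) (b j₀) * (U ((w+1) + S.card) *
            ∏ i, (if i ∈ S then P ((a ∘ k.succAbove) i) ((b ∘ j₀.succAbove) (τ i))
              else 1 - P ((a ∘ k.succAbove) i) ((b ∘ j₀.succAbove) (τ i))))) :=
        Finset.sum_congr rfl fun τ _ => hstep τ
    _ = (1 - P (a k) (b j₀)) * (∑ τ : Perm (Fin r), ∑ S : Finset (Fin r), U (w + S.card) *
            ∏ i, (if i ∈ S then P ((a ∘ k.succAbove) i) ((b ∘ j₀.succAbove) (τ i))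
              else 1 - P ((a ∘ k.succAbove) i) ((b ∘ j₀.succAbove) (τ i))))
        + P (a k) (b j₀) * (∑ τ : Perm (Fin r), ∑ S : Finset (Fin r), U ((w+1) + S.card) *
            ∏ i, (if i ∈ S then P ((a ∘ k.succAbove) i) ((b ∘ j₀.succAbove) (τ i))
              else 1 - P ((a ∘ k.succAbove) i) ((b ∘ j₀.succAbove) (τ i)))) := by
        simp only [Finset.sum_add_distrib, Finset.mul_sum]
    _ = (r.factorial : ℝ) *
        (P (a k) (b j₀) * Fval P U r (a ∘ k.succAbove) (b ∘ j₀.succAbove) (w+1)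
         + (1 - P (a k) (b j₀)) * Fval P U r (a ∘ k.succAbove) (b ∘ j₀.succAbove) w) := by
        unfold Fval
        field_simp
        ring

lemma Fval_rec1 {m n : ℕ} (P : Fin m → Fin n → ℝ) (U : ℕ → ℝ) {r : ℕ}
    (a : Fin (r+1) → Fin m) (b : Fin (r+1) → Fin n) (w : ℕ) (j₀ : Fin (r+1)) :
    Fval P U (r+1) a b w = ((r : ℝ)+1)⁻¹ * ∑ k : Fin (r+1),
      (P (a k) (b j₀) * Fval P U r (a ∘ k.succAbove) (b ∘ j₀.succAbove) (w+1)
       + (1 - P (a k) (b j₀)) * Fval P U r (a ∘ k.succAbove) (b ∘ j₀.succAbove) w) := by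
  have hfac : (r.factorial : ℝ) ≠ 0 := Nat.cast_ne_zero.2 r.factorial_ne_zero
  have hr1 : ((r : ℝ) + 1) ≠ 0 := by positivity
  conv_lhs => unfold Fval
  rw [sum_perm_decomp1 j₀ (fun σ => ∑ S : Finset (Fin (r+1)),
    U (w + S.card) * ∏ i, (if i ∈ S then P (a i) (b (σ i)) else 1 - P (a i) (b (σ i))))]
  rw [Finset.sum_congr rfl (fun k _ => Fval_key P U a b w k j₀)]
  rw [← Finset.mul_sum, Nat.factorial_succ]
  push_cast
  rw [mul_inv, mul_assoc, inv_mul_cancel_left₀ hfac]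

lemma Fval_rec2 {m n : ℕ} (P : Fin m → Fin n → ℝ) (U : ℕ → ℝ) {r : ℕ}
    (a : Fin (r+1) → Fin m) (b : Fin (r+1) → Fin n) (w : ℕ) (k₀ : Fin (r+1)) :
    Fval P U (r+1) a b w = ((r : ℝ)+1)⁻¹ * ∑ j : Fin (r+1),
      (P (a k₀) (b j) * Fval P U r (a ∘ k₀.succAbove) (b ∘ j.succAbove) (w+1)
       + (1 - P (a k₀) (b j)) * Fval P U r (a ∘ k₀.succAbove) (b ∘ j.succAbove) w) := by
  have hfac : (r.factorial : ℝ) ≠ 0 := Nat.cast_ne_zero.2 r.factorial_ne_zero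
  have hr1 : ((r : ℝ) + 1) ≠ 0 := by positivity
  conv_lhs => unfold Fval
  rw [sum_perm_decomp2 k₀ (fun σ => ∑ S : Finset (Fin (r+1)),
    U (w + S.card) * ∏ i, (if i ∈ S then P (a i) (b (σ i)) else 1 - P (a i) (b (σ i))))]
  rw [Finset.sum_congr rfl (fun j _ => Fval_key P U a b w k₀ j)]
  rw [← Finset.mul_sum, Nat.factorial_succ]
  push_cast
  rw [mul_inv, mul_assoc, inv_mul_cancel_left₀ hfac]

lemma prod_ite_nonneg {m n r : ℕ} (P : Fin m → Fin n → ℝ) (hP : ∀ i j, P i j ∈ Set.Icc (0:ℝ) 1)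
    (a : Fin r → Fin m) (b : Fin r → Fin n) (σ : Perm (Fin r)) (S : Finset (Fin r)) :
    0 ≤ ∏ i, (if i ∈ S then P (a i) (b (σ i)) else 1 - P (a i) (b (σ i))) :=
  Finset.prod_nonneg fun i _ => by
    by_cases hi : i ∈ S
    · simpa [hi] using (hP (a i) (b (σ i))).1
    · simp only [hi, if_false]
      linarith [(hP (a i) (b (σ i))).2]

lemma Fval_mono {T m n : ℕ} (P : Fin m → Fin n → ℝ) (hP : ∀ i j, P i j ∈ Set.Icc (0:ℝ) 1)
    (U : ℕ → ℝ) (hU : ∀ t < T, U t ≤ U (t+1)) {r : ℕ}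
    (a : Fin r → Fin m) (b : Fin r → Fin n) (w : ℕ) (h : w + 1 + r ≤ T) :
    Fval P U r a b w ≤ Fval P U r a b (w+1) := by
  unfold Fval
  refine mul_le_mul_of_nonneg_left ?_ (inv_nonneg.2 (Nat.cast_nonneg _))
  refine Finset.sum_le_sum fun σ _ => Finset.sum_le_sum fun S _ => ?_
  refine mul_le_mul_of_nonneg_right ?_ (prod_ite_nonneg P hP a b σ S)
  have hcard : S.card ≤ r := by
    have := Finset.card_le_univ S
    simpa [Finset.card_fin] using this
  have h1 : w + 1 + S.card = (w + S.card) + 1 := by omega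
  rw [h1]
  exact hU _ (by omega)

lemma gval_eq_Fval {T m n : ℕ} (P : Fin m → Fin n → ℝ) (hP : ∀ i j, P i j ∈ Set.Icc (0:ℝ) 1)
    (U : ℕ → ℝ) (hU : ∀ t < T, U t ≤ U (t + 1))
    (hs1 : ∀ i j : Fin m, i ≤ j → ∀ l : Fin n, P j l ≤ P i l)
    (hs2 : ∀ i j : Fin n, i ≤ j → ∀ l : Fin m, P l i ≤ P l j) :
    ∀ (r : ℕ) (X : Finset (Fin m)) (Y : Finset (Fin n)) (w : ℕ),
      w + r ≤ T →
      ∀ (a : Fin r → Fin m) (b : Fin r → Fin n),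
        Function.Injective a → (∀ k, a k ∉ X) →
        (∀ x, x ∉ X → (∀ k, a k ≠ x) → ∀ k, a k ≤ x) →
        Function.Injective b → (∀ k, b k ∉ Y) →
        (∀ y, y ∉ Y → (∀ k, b k ≠ y) → ∀ k, b k ≤ y) →
        gval m n P U r X Y w = Fval P U r a b w := by
  intro r
  induction r with
  | zero =>
    intro X Y w _ a b _ _ _ _ _ _
    have h0 : ∀ S : Finset (Fin 0), S = ∅ := fun S => Finset.eq_empty_of_isEmpty S
    simp [gval, Fval, h0]
  | succ r ih =>
    intro X Y w hw a b hainj haX hamin hbinj hbY hbmin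
    -- child-state identification via the induction hypothesis
    have Hchild : ∀ (w' : ℕ), w' + r ≤ T →
        ∀ (i : Fin m) (k : Fin (r+1)), i ∉ X →
          (a k = i ∨ ((∀ k', a k' ≠ i) ∧ ∀ k', a k' ≤ a k)) →
        ∀ (j : Fin n) (j₀ : Fin (r+1)), j ∉ Y →
          (b j₀ = j ∨ ((∀ k', b k' ≠ j) ∧ ∀ k', b k' ≤ b j₀)) →
        gval m n P U r (insert i X) (insert j Y) w' =
          Fval P U r (a ∘ k.succAbove) (b ∘ j₀.succAbove) w' := by
      intro w' hw' i k hiX hcase j j₀ hjY hcaseb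
      refine ih (insert i X) (insert j Y) w' hw' _ _
        (hainj.comp Fin.succAbove_right_injective) ?_ ?_
        (hbinj.comp Fin.succAbove_right_injective) ?_ ?_
      · -- a-values avoid insert i X
        intro l hl
        rcases Finset.mem_insert.1 hl with he | hX'
        · rcases hcase with hak | ⟨hne, _⟩
          · exact Fin.succAbove_ne k l (hainj (he.trans hak.symm))
          · exact hne _ he
        · exact haX _ hX'
      · -- minimality for a-side
        intro x hx hxn l
        have hxX : x ∉ X := fun h => hx (Finset.mem_insert_of_mem h)
        have hxi : x ≠ i := fun h => hx (h ▸ Finset.mem_insert_self i X)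
        by_cases hex : ∃ k', a k' = x
        · obtain ⟨k', hk'⟩ := hex
          have hkk : k' = k := by
            by_contra hne
            obtain ⟨l', hl'⟩ := Fin.exists_succAbove_eq hne
            exact hxn l' (by simpa [hl'] using hk')
          subst hkk
          rcases hcase with hak | ⟨_, hle⟩
          · exact absurd hk' (hak ▸ fun h => hxi h.symm)
          · exact hk' ▸ hle _
        · push_neg at hex
          exact hamin x hxX hex _
      · -- b-values avoid insert j Y
        intro l hl
        rcases Finset.mem_insert.1 hl with he | hY'
        · rcases hcaseb with hbj | ⟨hne, _⟩
          · exact Fin.succAbove_ne j₀ l (hbinj (he.trans hbj.symm))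
          · exact hne _ he
        · exact hbY _ hY'
      · -- minimality for b-side
        intro y hy hyn l
        have hyY : y ∉ Y := fun h => hy (Finset.mem_insert_of_mem h)
        have hyj : y ≠ j := fun h => hy (h ▸ Finset.mem_insert_self j Y)
        by_cases hex : ∃ k', b k' = y
        · obtain ⟨k', hk'⟩ := hex
          have hkk : k' = j₀ := by
            by_contra hne
            obtain ⟨l', hl'⟩ := Fin.exists_succAbove_eq hne
            exact hyn l' (by simpa [hl'] using hk')
          subst hkk
          rcases hcaseb with hbj | ⟨_, hle⟩
          · exact absurd hk' (hbj ▸ fun h => hyj h.symm)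
          · exact hk' ▸ hle _
        · push_neg at hex
          exact hbmin y hyY hex _

    -- notation
    have hcpos : (0:ℝ) < (r:ℝ) + 1 := by positivity
    have hcne : ((r:ℝ) + 1) ≠ 0 := ne_of_gt hcpos
    obtain ⟨c, hcdef⟩ : ∃ c : ℝ, c = ((r:ℝ) + 1)⁻¹ := ⟨_, rfl⟩
    have hcnn : 0 ≤ c := by rw [hcdef]; positivity
    obtain ⟨f, hfdef⟩ : ∃ f : ℝ, f = Fval P U (r+1) a b w := ⟨_, rfl⟩
    obtain ⟨punif, hpunif⟩ : ∃ p : Fin m → ℝ,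
        p = fun i => c * ∑ k, (if a k = i then (1:ℝ) else 0) := ⟨_, rfl⟩
    have hpsum : ∀ G : Fin m → ℝ, (∑ i, punif i * G i) = c * ∑ k, G (a k) := by
      intro G
      have h1 : ∀ i, punif i * G i = c * ∑ k, (if a k = i then (1:ℝ) else 0) * G i := by
        intro i
        rw [hpunif]
        simp only [Finset.sum_mul, mul_assoc]
      rw [Finset.sum_congr rfl fun i _ => h1 i, ← Finset.mul_sum, Finset.sum_comm]
      congr 1
      refine Finset.sum_congr rfl fun k _ => ?_
      simp [ite_mul, Finset.sum_ite_eq]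
    have hp0 : ∀ i, 0 ≤ punif i := by
      intro i
      rw [hpunif]
      refine mul_nonneg hcnn (Finset.sum_nonneg fun k _ => ?_)
      by_cases h : a k = i <;> simp [h]
    have hpX : ∀ i ∈ X, punif i = 0 := by
      intro i hi
      rw [hpunif]
      have : ∀ k ∈ Finset.univ, (if a k = i then (1:ℝ) else 0) = 0 := by
        intro k _
        have : a k ≠ i := fun h => haX k (h ▸ hi)
        simp [this]
      simp [Finset.sum_congr rfl this]
    have hp1 : (∑ i, punif i) = 1 := by
      have := hpsum (fun _ => 1)
      simp only [mul_one] at this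
      rw [this, Finset.sum_const, Finset.card_univ, Fintype.card_fin, nsmul_eq_mul, hcdef]
      push_cast
      field_simp
    -- per-pair identity for "both play from the top"
    have Hpair : ∀ (k j₀ : Fin (r+1)),
        P (a k) (b j₀) * gval m n P U r (insert (a k) X) (insert (b j₀) Y) (w + 1) +
          (1 - P (a k) (b j₀)) * gval m n P U r (insert (a k) X) (insert (b j₀) Y) w
        = P (a k) (b j₀) * Fval P U r (a ∘ k.succAbove) (b ∘ j₀.succAbove) (w+1) +
          (1 - P (a k) (b j₀)) * Fval P U r (a ∘ k.succAbove) (b ∘ j₀.succAbove) w := by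
      intro k j₀
      rw [Hchild (w+1) (by omega) (a k) k (haX k) (Or.inl rfl) (b j₀) j₀ (hbY j₀) (Or.inl rfl),
          Hchild w (by omega) (a k) k (haX k) (Or.inl rfl) (b j₀) j₀ (hbY j₀) (Or.inl rfl)]
    have hmono : ∀ (k j₀ : Fin (r+1)),
        Fval P U r (a ∘ k.succAbove) (b ∘ j₀.succAbove) w ≤
          Fval P U r (a ∘ k.succAbove) (b ∘ j₀.succAbove) (w+1) :=
      fun k j₀ => Fval_mono P hP U hU _ _ w (by omega)
    -- E1 : uniform play attains f against any top opponent
    have E1 : ∀ j₀ : Fin (r+1),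
        (∑ i, punif i *
          (P i (b j₀) * gval m n P U r (insert i X) (insert (b j₀) Y) (w + 1) +
           (1 - P i (b j₀)) * gval m n P U r (insert i X) (insert (b j₀) Y) w)) = f := by
      intro j₀
      rw [show (∑ i, punif i *
          (P i (b j₀) * gval m n P U r (insert i X) (insert (b j₀) Y) (w + 1) +
           (1 - P i (b j₀)) * gval m n P U r (insert i X) (insert (b j₀) Y) w))
        = c * ∑ k, (P (a k) (b j₀) * gval m n P U r (insert (a k) X) (insert (b j₀) Y) (w + 1) +
           (1 - P (a k) (b j₀)) * gval m n P U r (insert (a k) X) (insert (b j₀) Y) w)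
        from hpsum _]
      rw [Finset.sum_congr rfl fun k _ => Hpair k j₀]
      rw [hfdef, Fval_rec1 P U a b w j₀, hcdef]
    -- lower bound : uniform play guarantees at least f against any opponent
    have lb_all : ∀ j, j ∉ Y →
        f ≤ ∑ i, punif i *
          (P i j * gval m n P U r (insert i X) (insert j Y) (w + 1) +
           (1 - P i j) * gval m n P U r (insert i X) (insert j Y) w) := by
      intro j hjY
      by_cases hjb : ∃ j₀, b j₀ = j
      · obtain ⟨j₀, rfl⟩ := hjb
        exact le_of_eq (E1 j₀).symm
      · push_neg at hjb
        have hble : ∀ j₀, b j₀ ≤ j := hbmin j hjY hjb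
        obtain ⟨kb, hkb⟩ := Finite.exists_max b
        rw [show (∑ i, punif i *
            (P i j * gval m n P U r (insert i X) (insert j Y) (w + 1) +
             (1 - P i j) * gval m n P U r (insert i X) (insert j Y) w))
          = c * ∑ k, (P (a k) j * gval m n P U r (insert (a k) X) (insert j Y) (w + 1) +
             (1 - P (a k) j) * gval m n P U r (insert (a k) X) (insert j Y) w)
          from hpsum _]
        have hterm : ∀ k : Fin (r+1),
            P (a k) (b kb) * Fval P U r (a ∘ k.succAbove) (b ∘ kb.succAbove) (w+1) +
              (1 - P (a k) (b kb)) * Fval P U r (a ∘ k.succAbove) (b ∘ kb.succAbove) w ≤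
            P (a k) j * gval m n P U r (insert (a k) X) (insert j Y) (w + 1) +
              (1 - P (a k) j) * gval m n P U r (insert (a k) X) (insert j Y) w := by
          intro k
          rw [Hchild (w+1) (by omega) (a k) k (haX k) (Or.inl rfl) j kb hjY
                (Or.inr ⟨hjb, hkb⟩),
              Hchild w (by omega) (a k) k (haX k) (Or.inl rfl) j kb hjY
                (Or.inr ⟨hjb, hkb⟩)]
          have hPle : P (a k) (b kb) ≤ P (a k) j := hs2 (b kb) j (hble kb) (a k)
          have hF := hmono k kb
          nlinarith [mul_nonneg (sub_nonneg.2 hPle) (sub_nonneg.2 hF)]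
        have hsum_le := Finset.sum_le_sum fun k (_ : k ∈ Finset.univ) => hterm k
        have hlhs : f = c * ∑ k, (P (a k) (b kb) *
            Fval P U r (a ∘ k.succAbove) (b ∘ kb.succAbove) (w+1) +
            (1 - P (a k) (b kb)) * Fval P U r (a ∘ k.succAbove) (b ∘ kb.succAbove) w) := by
          rw [hfdef, Fval_rec1 P U a b w kb, hcdef]
        rw [hlhs]
        exact mul_le_mul_of_nonneg_left hsum_le hcnn
    -- upper bound : whatever p plays, some top opponent keeps the value at most f
    have main_ub : ∀ p : Fin m → ℝ, (∀ i, 0 ≤ p i) → (∀ i ∈ X, p i = 0) → (∑ i, p i) = 1 →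
        ∃ j₀ : Fin (r+1),
          (∑ i, p i *
            (P i (b j₀) * gval m n P U r (insert i X) (insert (b j₀) Y) (w + 1) +
             (1 - P i (b j₀)) * gval m n P U r (insert i X) (insert (b j₀) Y) w)) ≤ f := by
      intro p hq0 hqX hq1
      have psi_bound : ∀ i : Fin m, i ∉ X →
          (∑ j₀ : Fin (r+1),
            (P i (b j₀) * gval m n P U r (insert i X) (insert (b j₀) Y) (w + 1) +
             (1 - P i (b j₀)) * gval m n P U r (insert i X) (insert (b j₀) Y) w))
          ≤ ((r:ℝ) + 1) * f := by
        intro i hiX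
        by_cases hex : ∃ k, a k = i
        · obtain ⟨k, rfl⟩ := hex
          rw [Finset.sum_congr rfl fun j₀ _ => Hpair k j₀]
          rw [hfdef, Fval_rec2 P U a b w k, ← mul_assoc, mul_inv_cancel₀ hcne, one_mul]
        · push_neg at hex
          have hile : ∀ k, a k ≤ i := hamin i hiX hex
          obtain ⟨ka, hka⟩ := Finite.exists_max a
          have hterm : ∀ j₀ : Fin (r+1),
              P i (b j₀) * gval m n P U r (insert i X) (insert (b j₀) Y) (w + 1) +
                (1 - P i (b j₀)) * gval m n P U r (insert i X) (insert (b j₀) Y) w ≤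
              P (a ka) (b j₀) * Fval P U r (a ∘ ka.succAbove) (b ∘ j₀.succAbove) (w+1) +
                (1 - P (a ka) (b j₀)) * Fval P U r (a ∘ ka.succAbove) (b ∘ j₀.succAbove) w := by
            intro j₀
            rw [Hchild (w+1) (by omega) i ka hiX (Or.inr ⟨hex, hka⟩) (b j₀) j₀ (hbY j₀)
                  (Or.inl rfl),
                Hchild w (by omega) i ka hiX (Or.inr ⟨hex, hka⟩) (b j₀) j₀ (hbY j₀)
                  (Or.inl rfl)]
            have hPle : P i (b j₀) ≤ P (a ka) (b j₀) := hs1 (a ka) i (hile ka) (b j₀)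
            have hF := hmono ka j₀
            nlinarith [mul_nonneg (sub_nonneg.2 hPle) (sub_nonneg.2 hF)]
          refine le_trans (Finset.sum_le_sum fun j₀ (_ : j₀ ∈ Finset.univ) => hterm j₀) ?_
          rw [hfdef, Fval_rec2 P U a b w ka, ← mul_assoc, mul_inv_cancel₀ hcne, one_mul]
        -- end psi_bound
      have hswap : (∑ j₀ : Fin (r+1), ∑ i, p i *
            (P i (b j₀) * gval m n P U r (insert i X) (insert (b j₀) Y) (w + 1) +
             (1 - P i (b j₀)) * gval m n P U r (insert i X) (insert (b j₀) Y) w))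
          = ∑ i, p i * (∑ j₀ : Fin (r+1),
            (P i (b j₀) * gval m n P U r (insert i X) (insert (b j₀) Y) (w + 1) +
             (1 - P i (b j₀)) * gval m n P U r (insert i X) (insert (b j₀) Y) w)) := by
        rw [Finset.sum_comm]
        exact Finset.sum_congr rfl fun i _ => (Finset.mul_sum _ _ _).symm
      have htot : (∑ j₀ : Fin (r+1), ∑ i, p i *
            (P i (b j₀) * gval m n P U r (insert i X) (insert (b j₀) Y) (w + 1) +
             (1 - P i (b j₀)) * gval m n P U r (insert i X) (insert (b j₀) Y) w))
          ≤ ((r:ℝ) + 1) * f := by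
        rw [hswap]
        have hbound : ∀ i : Fin m, p i * (∑ j₀ : Fin (r+1),
            (P i (b j₀) * gval m n P U r (insert i X) (insert (b j₀) Y) (w + 1) +
             (1 - P i (b j₀)) * gval m n P U r (insert i X) (insert (b j₀) Y) w))
            ≤ p i * (((r:ℝ) + 1) * f) := by
          intro i
          by_cases hiX : i ∈ X
          · rw [hqX i hiX]
            simp
          · exact mul_le_mul_of_nonneg_left (psi_bound i hiX) (hq0 i)
        calc (∑ i, p i * (∑ j₀ : Fin (r+1),
            (P i (b j₀) * gval m n P U r (insert i X) (insert (b j₀) Y) (w + 1) +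
             (1 - P i (b j₀)) * gval m n P U r (insert i X) (insert (b j₀) Y) w)))
            ≤ ∑ i, p i * (((r:ℝ) + 1) * f) :=
              Finset.sum_le_sum fun i _ => hbound i
          _ = ((r:ℝ) + 1) * f := by rw [← Finset.sum_mul, hq1, one_mul]
      by_contra hcon
      push_neg at hcon
      have hlt := Finset.sum_lt_sum_of_nonempty (Finset.univ_nonempty) fun j₀ (_ : j₀ ∈ Finset.univ) => hcon j₀
      rw [Finset.sum_const, Finset.card_univ, Fintype.card_fin, nsmul_eq_mul] at hlt
      push_cast at hlt
      linarith
    -- assemble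
    show gval m n P U (r+1) X Y w = Fval P U (r+1) a b w
    rw [gval, ← hfdef]
    have hmemf : f ∈ {v : ℝ | ∃ p : Fin m → ℝ,
        (∀ i, 0 ≤ p i) ∧ (∀ i ∈ X, p i = 0) ∧ (∑ i, p i) = 1 ∧
        v = sInf {u : ℝ | ∃ j, j ∉ Y ∧
          u = ∑ i, p i *
            (P i j * gval m n P U r (insert i X) (insert j Y) (w + 1) +
             (1 - P i j) * gval m n P U r (insert i X) (insert j Y) w)}} := by
      refine ⟨punif, hp0, hpX, hp1, ?_⟩
      have hne : (b 0) ∉ Y := hbY 0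
      refine le_antisymm ?_ ?_
      · refine le_csInf ⟨_, ⟨b 0, hne, rfl⟩⟩ ?_
        rintro u ⟨j, hj, rfl⟩
        exact lb_all j hj
      · refine csInf_le ⟨f, ?_⟩ ⟨b 0, hne, (E1 0).symm⟩
        rintro u ⟨j, hj, rfl⟩
        exact lb_all j hj
    have hub : ∀ v ∈ {v : ℝ | ∃ p : Fin m → ℝ,
        (∀ i, 0 ≤ p i) ∧ (∀ i ∈ X, p i = 0) ∧ (∑ i, p i) = 1 ∧
        v = sInf {u : ℝ | ∃ j, j ∉ Y ∧
          u = ∑ i, p i *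
            (P i j * gval m n P U r (insert i X) (insert j Y) (w + 1) +
             (1 - P i j) * gval m n P U r (insert i X) (insert j Y) w)}}, v ≤ f := by
      rintro v ⟨p, hq0, hqX, hq1, rfl⟩
      obtain ⟨j₀, hj₀⟩ := main_ub p hq0 hqX hq1
      refine le_trans (csInf_le ?_ ⟨b j₀, hbY j₀, rfl⟩) hj₀
      have hsub : {u : ℝ | ∃ j, j ∉ Y ∧
          u = ∑ i, p i *
            (P i j * gval m n P U r (insert i X) (insert j Y) (w + 1) +
             (1 - P i j) * gval m n P U r (insert i X) (insert j Y) w)} ⊆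
          Set.range (fun j : Fin n => ∑ i, p i *
            (P i j * gval m n P U r (insert i X) (insert j Y) (w + 1) +
             (1 - P i j) * gval m n P U r (insert i X) (insert j Y) w)) := by
        rintro u ⟨j, _, rfl⟩
        exact ⟨j, rfl⟩
      exact ((Set.finite_range _).subset hsub).bddBelow
    exact le_antisymm (csSup_le ⟨f, hmemf⟩ hub) (le_csSup ⟨f, hub⟩ hmemf)


end AuxTeamComp

/-- If the utility function is monotone and both teams' players are
sorted by strength, then the value of the game equals the value of the competition
among the top `T` players of each team with both teams playing uniformly at random:
the uniform average, over all matchings `σ` of the top `T` players, of the expected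
utility. -/
theorem transitive_value_uniform (T m n : ℕ) (hT : 1 ≤ T) (hm : T ≤ m) (hn : T ≤ n)
    (P : Fin m → Fin n → ℝ) (hP : ∀ i j, P i j ∈ Set.Icc (0 : ℝ) 1)
    (U : ℕ → ℝ) (hU : ∀ t < T, U t ≤ U (t + 1))
    (hsorted1 : ∀ i j : Fin m, i ≤ j → ∀ l : Fin n, P j l ≤ P i l)
    (hsorted2 : ∀ i j : Fin n, i ≤ j → ∀ l : Fin m, P l i ≤ P l j) :
    gval m n P U T ∅ ∅ 0 =
      (T.factorial : ℝ)⁻¹ * ∑ σ : Equiv.Perm (Fin T), ∑ S : Finset (Fin T),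
        U S.card * (∏ i ∈ S, P (Fin.castLE hm i) (Fin.castLE hn (σ i))) *
          ∏ i ∈ Sᶜ, (1 - P (Fin.castLE hm i) (Fin.castLE hn (σ i))) := by
  have hinjm : Function.Injective (Fin.castLE hm) := fun i j h =>
    Fin.ext (by simpa using congrArg Fin.val h)
  have hinjn : Function.Injective (Fin.castLE hn) := fun i j h =>
    Fin.ext (by simpa using congrArg Fin.val h)
  have hminm : ∀ x : Fin m, x ∉ (∅ : Finset (Fin m)) →
      (∀ k : Fin T, Fin.castLE hm k ≠ x) → ∀ k : Fin T, Fin.castLE hm k ≤ x := by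
    intro x _ hne k
    have hTx : T ≤ x.val := by
      by_contra h
      push_neg at h
      exact hne ⟨x.val, h⟩ (Fin.ext rfl)
    have : (Fin.castLE hm k).val ≤ x.val := le_trans (le_of_lt k.isLt) hTx
    exact this
  have hminn : ∀ x : Fin n, x ∉ (∅ : Finset (Fin n)) →
      (∀ k : Fin T, Fin.castLE hn k ≠ x) → ∀ k : Fin T, Fin.castLE hn k ≤ x := by
    intro x _ hne k
    have hTx : T ≤ x.val := by
      by_contra h
      push_neg at h
      exact hne ⟨x.val, h⟩ (Fin.ext rfl)
    have : (Fin.castLE hn k).val ≤ x.val := le_trans (le_of_lt k.isLt) hTx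
    exact this
  have hmain := gval_eq_Fval P hP U hU hsorted1 hsorted2 T ∅ ∅ 0 (by omega)
    (Fin.castLE hm) (Fin.castLE hn) hinjm (fun k => Finset.notMem_empty _) hminm
    hinjn (fun k => Finset.notMem_empty _) hminn
  rw [hmain]
  unfold Fval
  refine congrArg _ (Finset.sum_congr rfl fun σ _ => Finset.sum_congr rfl fun S _ => ?_)
  rw [zero_add]
  rw [← Finset.prod_mul_prod_compl S (fun i => if i ∈ S then
      P (Fin.castLE hm i) (Fin.castLE hn (σ i)) else 1 - P (Fin.castLE hm i) (Fin.castLE hn (σ i)))]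
  rw [Finset.prod_congr rfl (fun i (hi : i ∈ S) => if_pos hi),
      Finset.prod_congr rfl (fun i (hi : i ∈ Sᶜ) => if_neg (Finset.mem_compl.1 hi))]
  ring
end

section
/- Assume U is monotone and the rows of P are sorted by strength: P i l ≥ P j l for all 1 ≤ i ≤ j ≤ m and all 1 ≤ l ≤ n. Let 0 ≤ k ≤ T, let X_1, X_2 ⊆ {1,…,m} and Y ⊆ {1,…,n} with |X_1| = |X_2| = |Y| = k, and let w_1 ≥ w_2 be integers in {0,…,k}. If the set of the T−k smallest elements of {1,…,m}∖X_1 equals the set of the T−k smallest elements of {1,…,m}∖X_2, then V(X_1,Y,w_1) ≥ V(X_2,Y,w_2). -/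
private lemma list_sort_erase {m : ℕ} (A : Finset (Fin m)) (x : Fin m) :
    Finset.sort (A.erase x) (· ≤ ·) = (Finset.sort A (· ≤ ·)).erase x := by
  have h1 : List.Perm (Finset.sort (A.erase x) (· ≤ ·)) ((Finset.sort A (· ≤ ·)).erase x) := by
    rw [← Multiset.coe_eq_coe, ← Multiset.coe_erase, Finset.sort_eq, Finset.sort_eq,
      Finset.erase_val]
  have h2 : List.Pairwise (· ≤ ·) ((Finset.sort A (· ≤ ·)).erase x) :=
    (Finset.pairwise_sort A (· ≤ ·)).sublist List.erase_sublist
  exact List.Perm.eq_of_pairwise' (Finset.pairwise_sort _ _) h2 h1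

def Dom {m : ℕ} (r : ℕ) (A B : Finset (Fin m)) : Prop :=
  r ≤ A.card ∧ r ≤ B.card ∧
    ∀ s, s < r → ∀ (hA : s < (Finset.sort A (· ≤ ·)).length)
      (hB : s < (Finset.sort B (· ≤ ·)).length),
      (Finset.sort A (· ≤ ·))[s] ≤ (Finset.sort B (· ≤ ·))[s]

lemma dom_refl {m : ℕ} {r : ℕ} {A : Finset (Fin m)} (h : r ≤ A.card) : Dom r A A :=
  ⟨h, h, fun _ _ _ _ => le_refl _⟩

lemma dom_erase {m r : ℕ} {A B : Finset (Fin m)} (h : Dom (r+1) A B) {i : Fin m} (hi : i ∈ B) :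
    ∃ x, x ∈ A ∧ x ≤ i ∧ Dom r (A.erase x) (B.erase i) := by
  obtain ⟨hA, hB, hle⟩ := h
  have hla : (Finset.sort A (· ≤ ·)).length = A.card := Finset.length_sort _
  have hlb : (Finset.sort B (· ≤ ·)).length = B.card := Finset.length_sort _
  set a := Finset.sort A (· ≤ ·) with ha
  set b := Finset.sort B (· ≤ ·) with hb
  have hsortb : List.Pairwise (· ≤ ·) b := Finset.pairwise_sort _ _
  have hnda : a.Nodup := Finset.sort_nodup _ _
  have hndb : b.Nodup := Finset.sort_nodup _ _
  have hib : i ∈ b := (Finset.mem_sort _).2 hi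
  have hsl : b.idxOf i < b.length := List.idxOf_lt_length_iff.2 hib
  set s := b.idxOf i with hs
  have hbs : b[s]'hsl = i := List.getElem_idxOf hsl
  have hs'l : min s r < a.length := by omega
  have hmema : a[min s r]'hs'l ∈ A := (Finset.mem_sort _).1 (List.getElem_mem hs'l)
  refine ⟨a[min s r]'hs'l, hmema, ?_, ?_⟩
  · have h1 : a[min s r]'hs'l ≤ b[min s r]'(by omega) :=
      hle (min s r) (by omega) _ _
    have h2 : b[min s r]'(by omega) ≤ b[s]'hsl := by
      have := List.Pairwise.rel_get_of_le hsortb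
        (a := ⟨min s r, by omega⟩) (b := ⟨s, hsl⟩) (by simp [Fin.mk_le_mk])
      simpa using this
    exact le_trans h1 (le_of_le_of_eq h2 hbs)
  · have hae : Finset.sort (A.erase (a[min s r]'hs'l)) (· ≤ ·) = a.eraseIdx (min s r) := by
      rw [list_sort_erase, ← ha, hnda.erase_getElem]
    have hbe : Finset.sort (B.erase i) (· ≤ ·) = b.eraseIdx s := by
      have e : B.erase i = B.erase (b[s]'hsl) := by rw [hbs]
      rw [e, list_sort_erase, ← hb, hndb.erase_getElem]
    have hlae : (a.eraseIdx (min s r)).length = a.length - 1 :=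
      List.length_eraseIdx_of_lt (by omega)
    have hlbe : (b.eraseIdx s).length = b.length - 1 :=
      List.length_eraseIdx_of_lt hsl
    refine ⟨?_, ?_, ?_⟩
    · rw [Finset.card_erase_of_mem hmema]; omega
    · rw [Finset.card_erase_of_mem hi]; omega
    · intro t ht hA' hB'
      have hA'' := hA'
      have hB'' := hB'
      rw [Finset.length_sort, Finset.card_erase_of_mem hmema] at hA''
      rw [Finset.length_sort, Finset.card_erase_of_mem hi] at hB''
      rw [List.getElem_of_eq hae hA', List.getElem_of_eq hbe hB']
      rw [List.getElem_eraseIdx, List.getElem_eraseIdx]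
      by_cases h2 : t < s
      · rw [dif_pos (by omega : t < s ⊓ r), dif_pos h2]
        exact hle t (by omega) (by omega) (by omega)
      · rw [dif_neg (by omega : ¬ t < s ⊓ r), dif_neg h2]
        exact hle (t+1) (by omega) (by omega) (by omega)


private lemma wsum_le {m : ℕ} (p c : Fin m → ℝ) (M : ℝ) (hp0 : ∀ i, 0 ≤ p i)
    (hps : ∑ i, p i = 1) (hc : ∀ i, c i ≤ M) : ∑ i, p i * c i ≤ M := by
  calc ∑ i, p i * c i ≤ ∑ i, p i * M :=
        Finset.sum_le_sum (fun i _ => mul_le_mul_of_nonneg_left (hc i) (hp0 i))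
    _ = M := by rw [← Finset.sum_mul, hps, one_mul]

private lemma le_wsum {m : ℕ} (p c : Fin m → ℝ) (L : ℝ) (hp0 : ∀ i, 0 ≤ p i)
    (hps : ∑ i, p i = 1) (hc : ∀ i, L ≤ c i) : L ≤ ∑ i, p i * c i := by
  calc L = ∑ i, p i * L := by rw [← Finset.sum_mul, hps, one_mul]
    _ ≤ ∑ i, p i * c i :=
        Finset.sum_le_sum (fun i _ => mul_le_mul_of_nonneg_left (hc i) (hp0 i))

private lemma gval_bounds {m n : ℕ} (P : Fin m → Fin n → ℝ)
    (hP : ∀ i j, P i j ∈ Set.Icc (0:ℝ) 1) (U : ℕ → ℝ) (L M : ℝ) :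
    ∀ (r : ℕ) (X : Finset (Fin m)) (Y : Finset (Fin n)) (w : ℕ),
      X.card + r ≤ m → Y.card + r ≤ n →
      (∀ t, w ≤ t → t ≤ w + r → L ≤ U t ∧ U t ≤ M) →
      L ≤ gval m n P U r X Y w ∧ gval m n P U r X Y w ≤ M := by
  intro r
  induction r with
  | zero =>
    intro X Y w _ _ hLM
    exact hLM w le_rfl (by omega)
  | succ r ih =>
    intro X Y w hX hY hLM
    have hXc : Xᶜ.Nonempty := by
      rw [← Finset.card_pos, Finset.card_compl, Fintype.card_fin]
      have := Finset.card_le_univ X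
      simp [Fintype.card_fin] at this
      omega
    have hYc : Yᶜ.Nonempty := by
      rw [← Finset.card_pos, Finset.card_compl, Fintype.card_fin]
      have := Finset.card_le_univ Y
      simp [Fintype.card_fin] at this
      omega
    obtain ⟨i₀, hi₀⟩ := hXc
    obtain ⟨j₀, hj₀⟩ := hYc
    rw [Finset.mem_compl] at hi₀ hj₀
    have hins : ∀ (i : Fin m) (j : Fin n) (w' : ℕ), w ≤ w' → w' ≤ w + 1 →
        L ≤ gval m n P U r (insert i X) (insert j Y) w' ∧
        gval m n P U r (insert i X) (insert j Y) w' ≤ M := by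
      intro i j w' h1 h2
      refine ih (insert i X) (insert j Y) w' ?_ ?_ (fun t ht1 ht2 => hLM t (by omega) (by omega))
      · have := Finset.card_insert_le i X; omega
      · have := Finset.card_insert_le j Y; omega
    have key : ∀ (p : Fin m → ℝ), (∀ i, 0 ≤ p i) → (∑ i, p i) = 1 → ∀ (j : Fin n),
        L ≤ (∑ i, p i * (P i j * gval m n P U r (insert i X) (insert j Y) (w + 1) +
             (1 - P i j) * gval m n P U r (insert i X) (insert j Y) w)) ∧
        (∑ i, p i * (P i j * gval m n P U r (insert i X) (insert j Y) (w + 1) +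
             (1 - P i j) * gval m n P U r (insert i X) (insert j Y) w)) ≤ M := by
      intro p hp0 hps j
      constructor
      · refine le_wsum p _ L hp0 hps (fun i => ?_)
        obtain ⟨hq0, hq1⟩ := hP i j
        obtain ⟨g1L, g1M⟩ := hins i j (w+1) (by omega) (by omega)
        obtain ⟨g0L, g0M⟩ := hins i j w (by omega) (by omega)
        nlinarith
      · refine wsum_le p _ M hp0 hps (fun i => ?_)
        obtain ⟨hq0, hq1⟩ := hP i j
        obtain ⟨g1L, g1M⟩ := hins i j (w+1) (by omega) (by omega)
        obtain ⟨g0L, g0M⟩ := hins i j w (by omega) (by omega)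
        nlinarith
    show L ≤ sSup _ ∧ sSup _ ≤ M
    set S := {v : ℝ | ∃ p : Fin m → ℝ,
        (∀ i, 0 ≤ p i) ∧ (∀ i ∈ X, p i = 0) ∧ (∑ i, p i) = 1 ∧
        v = sInf {u : ℝ | ∃ j, j ∉ Y ∧
          u = ∑ i, p i *
            (P i j * gval m n P U r (insert i X) (insert j Y) (w + 1) +
             (1 - P i j) * gval m n P U r (insert i X) (insert j Y) w)}} with hS
    have hSbdd : ∀ v ∈ S, L ≤ v ∧ v ≤ M := by
      rintro v ⟨p, hp0, hpX, hps, rfl⟩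
      have hne : {u : ℝ | ∃ j, j ∉ Y ∧
          u = ∑ i, p i *
            (P i j * gval m n P U r (insert i X) (insert j Y) (w + 1) +
             (1 - P i j) * gval m n P U r (insert i X) (insert j Y) w)}.Nonempty :=
        ⟨_, j₀, hj₀, rfl⟩
      have hbdd : BddBelow {u : ℝ | ∃ j, j ∉ Y ∧
          u = ∑ i, p i *
            (P i j * gval m n P U r (insert i X) (insert j Y) (w + 1) +
             (1 - P i j) * gval m n P U r (insert i X) (insert j Y) w)} := by
        refine ⟨L, ?_⟩
        rintro u ⟨j, hj, rfl⟩
        exact (key p hp0 hps j).1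
      constructor
      · exact le_csInf hne (by rintro u ⟨j, hj, rfl⟩; exact (key p hp0 hps j).1)
      · exact le_trans (csInf_le hbdd ⟨j₀, hj₀, rfl⟩) (key p hp0 hps j₀).2
    have hmem : sInf {u : ℝ | ∃ j, j ∉ Y ∧
          u = ∑ i, (fun i => if i = i₀ then (1:ℝ) else 0) i *
            (P i j * gval m n P U r (insert i X) (insert j Y) (w + 1) +
             (1 - P i j) * gval m n P U r (insert i X) (insert j Y) w)} ∈ S := by
      refine ⟨fun i => if i = i₀ then (1:ℝ) else 0, ?_, ?_, ?_, rfl⟩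
      · intro i; by_cases h : i = i₀ <;> simp [h]
      · intro i hiX
        have : i ≠ i₀ := fun e => hi₀ (e ▸ hiX)
        simp [this]
      · simp
    constructor
    · exact le_trans (hSbdd _ hmem).1
        (le_csSup ⟨M, fun v hv => (hSbdd v hv).2⟩ hmem)
    · exact csSup_le ⟨_, hmem⟩ (fun v hv => (hSbdd v hv).2)

private lemma U_mono {T : ℕ} {U : ℕ → ℝ} (hU : ∀ t < T, U t ≤ U (t + 1)) :
    ∀ b, b ≤ T → ∀ a, a ≤ b → U a ≤ U b := by
  intro b
  induction b with
  | zero =>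
    intro _ a ha
    have h0 : a = 0 := Nat.le_zero.mp ha
    subst h0
    exact le_refl _
  | succ b ih =>
    intro hbT a ha
    rcases Nat.lt_or_ge a (b+1) with h | h
    · exact le_trans (ih (by omega) a (by omega)) (hU b (by omega))
    · have h0 : a = b+1 := by omega
      subst h0
      exact le_refl _

private lemma gval_main {T m n : ℕ} (P : Fin m → Fin n → ℝ)
    (hP : ∀ i j, P i j ∈ Set.Icc (0:ℝ) 1)
    (U : ℕ → ℝ) (hU : ∀ t < T, U t ≤ U (t + 1))
    (hsorted : ∀ i j : Fin m, i ≤ j → ∀ l : Fin n, P j l ≤ P i l) :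
    ∀ (r : ℕ) (X₁ X₂ : Finset (Fin m)) (Y : Finset (Fin n)) (w₁ w₂ : ℕ),
      w₁ + r ≤ T → w₂ ≤ w₁ → Dom r X₁ᶜ X₂ᶜ → Y.card + r ≤ n →
      gval m n P U r X₂ Y w₂ ≤ gval m n P U r X₁ Y w₁ := by
  have hne : (Finset.range (T+1)).Nonempty := ⟨0, by simp⟩
  set L := (Finset.range (T+1)).inf' hne U with hL
  set M := (Finset.range (T+1)).sup' hne U with hM
  have hLM : ∀ t, t ≤ T → L ≤ U t ∧ U t ≤ M := fun t ht =>
    ⟨Finset.inf'_le U (Finset.mem_range.2 (by omega)),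
     Finset.le_sup' U (Finset.mem_range.2 (by omega))⟩
  intro r
  induction r with
  | zero =>
    intro X₁ X₂ Y w₁ w₂ hwT hw _ _
    show U w₂ ≤ U w₁
    exact U_mono hU w₁ (by omega) w₂ hw
  | succ r ih =>
    intro X₁ X₂ Y w₁ w₂ hwT hw hdom hY
    have hc1 : r + 1 ≤ X₁ᶜ.card := hdom.1
    have hc2 : r + 1 ≤ X₂ᶜ.card := hdom.2.1
    have hcc1 : X₁ᶜ.card = m - X₁.card := by
      rw [Finset.card_compl, Fintype.card_fin]
    have hcc2 : X₂ᶜ.card = m - X₂.card := by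
      rw [Finset.card_compl, Fintype.card_fin]
    have hX₁m : X₁.card + (r+1) ≤ m := by omega
    have hX₂m : X₂.card + (r+1) ≤ m := by omega
    have hYc : Yᶜ.Nonempty := by
      rw [← Finset.card_pos, Finset.card_compl, Fintype.card_fin]
      have := Finset.card_le_univ Y
      simp [Fintype.card_fin] at this
      omega
    obtain ⟨j₀, hj₀⟩ := hYc
    rw [Finset.mem_compl] at hj₀
    have hA2ne : X₂ᶜ.Nonempty := Finset.card_pos.1 (by omega)
    have hA1ne : X₁ᶜ.Nonempty := Finset.card_pos.1 (by omega)
    -- bounds for inner states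
    have hbnd : ∀ (X : Finset (Fin m)), X.card + (r+1) ≤ m →
        ∀ (i : Fin m) (j : Fin n) (w' : ℕ), w' + r ≤ T →
        L ≤ gval m n P U r (insert i X) (insert j Y) w' ∧
        gval m n P U r (insert i X) (insert j Y) w' ≤ M := by
      intro X hX i j w' hw'
      refine gval_bounds P hP U L M r (insert i X) (insert j Y) w' ?_ ?_
        (fun t h1 h2 => hLM t (by omega))
      · have := Finset.card_insert_le i X; omega
      · have := Finset.card_insert_le j Y; omega
    show sSup _ ≤ sSup _
    -- abbreviations
    set c₁ : Fin m → Fin n → ℝ := fun x j =>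
      P x j * gval m n P U r (insert x X₁) (insert j Y) (w₁ + 1) +
      (1 - P x j) * gval m n P U r (insert x X₁) (insert j Y) w₁ with hc₁
    set c₂ : Fin m → Fin n → ℝ := fun x j =>
      P x j * gval m n P U r (insert x X₂) (insert j Y) (w₂ + 1) +
      (1 - P x j) * gval m n P U r (insert x X₂) (insert j Y) w₂ with hc₂
    set S₁ := {v : ℝ | ∃ p : Fin m → ℝ,
        (∀ i, 0 ≤ p i) ∧ (∀ i ∈ X₁, p i = 0) ∧ (∑ i, p i) = 1 ∧
        v = sInf {u : ℝ | ∃ j, j ∉ Y ∧ u = ∑ i, p i * c₁ i j}} with hS₁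
    set S₂ := {v : ℝ | ∃ p : Fin m → ℝ,
        (∀ i, 0 ≤ p i) ∧ (∀ i ∈ X₂, p i = 0) ∧ (∑ i, p i) = 1 ∧
        v = sInf {u : ℝ | ∃ j, j ∉ Y ∧ u = ∑ i, p i * c₂ i j}} with hS₂
    have hc₁bnd : ∀ i j, L ≤ c₁ i j ∧ c₁ i j ≤ M := by
      intro i j
      obtain ⟨hq0, hq1⟩ := hP i j
      obtain ⟨g1L, g1M⟩ := hbnd X₁ hX₁m i j (w₁+1) (by omega)
      obtain ⟨g0L, g0M⟩ := hbnd X₁ hX₁m i j w₁ (by omega)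
      constructor <;> · rw [hc₁]; dsimp only; nlinarith
    have hc₂bnd : ∀ i j, L ≤ c₂ i j ∧ c₂ i j ≤ M := by
      intro i j
      obtain ⟨hq0, hq1⟩ := hP i j
      obtain ⟨g1L, g1M⟩ := hbnd X₂ hX₂m i j (w₂+1) (by omega)
      obtain ⟨g0L, g0M⟩ := hbnd X₂ hX₂m i j w₂ (by omega)
      constructor <;> · rw [hc₂]; dsimp only; nlinarith
    -- S₂ nonempty via point mass
    obtain ⟨i₂, hi₂⟩ := hA2ne
    rw [Finset.mem_compl] at hi₂
    have hS₂ne : S₂.Nonempty := by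
      refine ⟨_, fun i => if i = i₂ then (1:ℝ) else 0, ?_, ?_, ?_, rfl⟩
      · intro i; by_cases h : i = i₂ <;> simp [h]
      · intro i hiX
        have : i ≠ i₂ := fun e => hi₂ (e ▸ hiX)
        simp [this]
      · simp
    -- BddAbove S₁
    have hS₁bdd : BddAbove S₁ := by
      refine ⟨M, ?_⟩
      rintro v ⟨p, hp0, hpX, hps, rfl⟩
      have hbddb : BddBelow {u : ℝ | ∃ j, j ∉ Y ∧ u = ∑ i, p i * c₁ i j} :=
        ⟨L, by rintro u ⟨j, hj, rfl⟩
               exact le_wsum p (fun i => c₁ i j) L hp0 hps (fun i => (hc₁bnd i j).1)⟩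
      refine le_trans (csInf_le hbddb ⟨j₀, hj₀, rfl⟩) ?_
      exact wsum_le p (fun i => c₁ i j₀) M hp0 hps (fun i => (hc₁bnd i j₀).2)
    refine csSup_le hS₂ne ?_
    rintro v₂ ⟨p₂, hp₂0, hp₂X, hp₂s, rfl⟩
    -- construct the transported strategy
    have hch : ∀ i ∈ X₂ᶜ, ∃ x, x ∈ X₁ᶜ ∧ x ≤ i ∧ Dom r (X₁ᶜ.erase x) (X₂ᶜ.erase i) :=
      fun i hi => dom_erase hdom hi
    classical
    set φ : Fin m → Fin m := fun i =>
      if h : i ∈ X₂ᶜ then (hch i h).choose else hA1ne.choose with hφdef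
    have hφ1 : ∀ i, φ i ∈ X₁ᶜ := by
      intro i
      rw [hφdef]
      dsimp only
      split
      · exact (hch i ‹_›).choose_spec.1
      · exact hA1ne.choose_spec
    have hφ2 : ∀ i, i ∈ X₂ᶜ → φ i ≤ i ∧ Dom r (X₁ᶜ.erase (φ i)) (X₂ᶜ.erase i) := by
      intro i hi
      rw [hφdef]
      dsimp only
      rw [dif_pos hi]
      exact ⟨(hch i hi).choose_spec.2.1, (hch i hi).choose_spec.2.2⟩
    set p₁ : Fin m → ℝ := fun x => ∑ i, if φ i = x then p₂ i else 0 with hp₁def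
    have hp₁0 : ∀ x, 0 ≤ p₁ x := by
      intro x
      refine Finset.sum_nonneg (fun i _ => ?_)
      by_cases h : φ i = x <;> simp [h, hp₂0 i]
    have hp₁X : ∀ x ∈ X₁, p₁ x = 0 := by
      intro x hx
      refine Finset.sum_eq_zero (fun i _ => ?_)
      have : φ i ≠ x := by
        intro e
        exact (Finset.mem_compl.1 (hφ1 i)) (e ▸ hx)
      simp [this]
    have hp₁s : ∑ x, p₁ x = 1 := by
      rw [hp₁def]
      dsimp only
      rw [Finset.sum_comm]
      calc ∑ i : Fin m, ∑ x : Fin m, (if φ i = x then p₂ i else 0)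
          = ∑ i : Fin m, p₂ i := by
            refine Finset.sum_congr rfl (fun i _ => ?_)
            rw [Finset.sum_ite_eq Finset.univ (φ i) (fun _ => p₂ i)]
            simp
        _ = 1 := hp₂s
    -- key pointwise inequality
    have hkey : ∀ j, ∑ i, p₂ i * c₂ i j ≤ ∑ i, p₁ i * c₁ i j := by
      intro j
      have hrw : ∑ x, p₁ x * c₁ x j = ∑ i, p₂ i * c₁ (φ i) j := by
        rw [hp₁def]
        dsimp only
        calc ∑ x, (∑ i, if φ i = x then p₂ i else 0) * c₁ x j
            = ∑ x, ∑ i, (if φ i = x then p₂ i * c₁ x j else 0) := by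
              refine Finset.sum_congr rfl (fun x _ => ?_)
              rw [Finset.sum_mul]
              refine Finset.sum_congr rfl (fun i _ => ?_)
              by_cases h : φ i = x <;> simp [h]
          _ = ∑ i, ∑ x, (if φ i = x then p₂ i * c₁ x j else 0) := Finset.sum_comm
          _ = ∑ i, p₂ i * c₁ (φ i) j := by
              refine Finset.sum_congr rfl (fun i _ => ?_)
              rw [Finset.sum_ite_eq Finset.univ (φ i) (fun x => p₂ i * c₁ x j)]
              simp
      rw [hrw]
      refine Finset.sum_le_sum (fun i _ => ?_)
      by_cases hp : p₂ i = 0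
      · simp [hp]
      · have hiX₂ : i ∈ X₂ᶜ := by
          rw [Finset.mem_compl]
          intro hmem
          exact hp (hp₂X i hmem)
        obtain ⟨hle_i, hdom'⟩ := hφ2 i hiX₂
        have hxc : φ i ∈ X₁ᶜ := hφ1 i
        have hφcard : r ≤ ((insert (φ i) X₁)ᶜ).card := by
          rw [Finset.compl_insert, Finset.card_erase_of_mem hxc]
          omega
        have hYins : (insert j Y).card + r ≤ n := by
          have := Finset.card_insert_le j Y; omega
        have hgle : ∀ w₁' w₂', w₁' + r ≤ T → w₂' ≤ w₁' →
            gval m n P U r (insert i X₂) (insert j Y) w₂' ≤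
            gval m n P U r (insert (φ i) X₁) (insert j Y) w₁' := by
          intro w₁' w₂' h1 h2
          refine ih (insert (φ i) X₁) (insert i X₂) (insert j Y) w₁' w₂' h1 h2 ?_ hYins
          rw [Finset.compl_insert, Finset.compl_insert]
          exact hdom'
        have hgw : gval m n P U r (insert (φ i) X₁) (insert j Y) w₁ ≤
            gval m n P U r (insert (φ i) X₁) (insert j Y) (w₁ + 1) :=
          ih (insert (φ i) X₁) (insert (φ i) X₁) (insert j Y) (w₁+1) w₁
            (by omega) (by omega) (dom_refl hφcard) hYins
        have hB1 := hgle (w₁+1) (w₂+1) (by omega) (by omega)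
        have hB0 := hgle w₁ w₂ (by omega) hw
        have hq := hP i j
        have hq' := hP (φ i) j
        have hqq' : P i j ≤ P (φ i) j := hsorted (φ i) i hle_i j
        rw [hc₁, hc₂]
        dsimp only
        have h1 : P i j * gval m n P U r (insert i X₂) (insert j Y) (w₂ + 1) +
            (1 - P i j) * gval m n P U r (insert i X₂) (insert j Y) w₂ ≤
            P i j * gval m n P U r (insert (φ i) X₁) (insert j Y) (w₁ + 1) +
            (1 - P i j) * gval m n P U r (insert (φ i) X₁) (insert j Y) w₁ := by
          have e1 : 0 ≤ P i j := hq.1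
          have e2 : P i j ≤ 1 := hq.2
          nlinarith [mul_le_mul_of_nonneg_left hB1 e1,
            mul_le_mul_of_nonneg_left hB0 (by linarith : (0:ℝ) ≤ 1 - P i j)]
        have h2 : P i j * gval m n P U r (insert (φ i) X₁) (insert j Y) (w₁ + 1) +
            (1 - P i j) * gval m n P U r (insert (φ i) X₁) (insert j Y) w₁ ≤
            P (φ i) j * gval m n P U r (insert (φ i) X₁) (insert j Y) (w₁ + 1) +
            (1 - P (φ i) j) * gval m n P U r (insert (φ i) X₁) (insert j Y) w₁ := by
          nlinarith [mul_le_mul_of_nonneg_left hgw (by linarith [hqq'] : (0:ℝ) ≤ P (φ i) j - P i j)]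
        exact mul_le_mul_of_nonneg_left (le_trans h1 h2) (hp₂0 i)
    -- put it together
    have hSp₂bdd : BddBelow {u : ℝ | ∃ j, j ∉ Y ∧ u = ∑ i, p₂ i * c₂ i j} :=
      ⟨L, by rintro u ⟨j, hj, rfl⟩
             exact le_wsum p₂ (fun i => c₂ i j) L hp₂0 hp₂s (fun i => (hc₂bnd i j).1)⟩
    have hmem₁ : sInf {u : ℝ | ∃ j, j ∉ Y ∧ u = ∑ i, p₁ i * c₁ i j} ∈ S₁ :=
      ⟨p₁, hp₁0, hp₁X, hp₁s, rfl⟩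
    refine le_trans ?_ (le_csSup hS₁bdd hmem₁)
    refine le_csInf ⟨_, j₀, hj₀, rfl⟩ ?_
    rintro u ⟨j, hj, rfl⟩
    exact le_trans (csInf_le hSp₂bdd ⟨j, hj, rfl⟩) (hkey j)

/-- Assume `U` is monotone and the rows of `P` are sorted by strength.
If two states `(X₁, Y, w₁)` and `(X₂, Y, w₂)` after `k` rounds are such that the sets
of the `T - k` smallest (i.e. strongest) remaining players of Team 1 coincide and
`w₁ ≥ w₂`, then `V(X₁,Y,w₁) ≥ V(X₂,Y,w₂)`. -/
theorem value_monotone_in_state (T m n : ℕ) (hT : 1 ≤ T) (hm : T ≤ m) (hn : T ≤ n)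
    (P : Fin m → Fin n → ℝ) (hP : ∀ i j, P i j ∈ Set.Icc (0 : ℝ) 1)
    (U : ℕ → ℝ) (hU : ∀ t < T, U t ≤ U (t + 1))
    (hsorted : ∀ i j : Fin m, i ≤ j → ∀ l : Fin n, P j l ≤ P i l)
    (k : ℕ) (hk : k ≤ T)
    (X₁ X₂ : Finset (Fin m)) (Y : Finset (Fin n))
    (hX₁ : X₁.card = k) (hX₂ : X₂.card = k) (hY : Y.card = k)
    (w₁ w₂ : ℕ) (hw₁ : w₁ ≤ k) (hw₂ : w₂ ≤ k) (hw : w₂ ≤ w₁)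
    (htop : (Finset.sort X₁ᶜ (· ≤ ·)).take (T - k) =
            (Finset.sort X₂ᶜ (· ≤ ·)).take (T - k)) :
    gval m n P U (T - k) X₂ Y w₂ ≤ gval m n P U (T - k) X₁ Y w₁ := by
  apply gval_main P hP U hU hsorted (T - k) X₁ X₂ Y w₁ w₂ (by omega) hw ?_ (by omega)
  refine ⟨?_, ?_, ?_⟩
  · rw [Finset.card_compl, Fintype.card_fin, hX₁]; omega
  · rw [Finset.card_compl, Fintype.card_fin, hX₂]; omega
  · intro s hs hA hB
    have hA' : s < ((Finset.sort X₁ᶜ (· ≤ ·)).take (T - k)).length := by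
      rw [List.length_take]
      exact lt_min hs hA
    refine le_of_eq ?_
    calc (Finset.sort X₁ᶜ (· ≤ ·))[s]'hA
        = ((Finset.sort X₁ᶜ (· ≤ ·)).take (T - k))[s]'hA' := List.getElem_take.symm
      _ = ((Finset.sort X₂ᶜ (· ≤ ·)).take (T - k))[s]'(htop ▸ hA') :=
          List.getElem_of_eq htop hA'
      _ = (Finset.sort X₂ᶜ (· ≤ ·))[s]'hB := List.getElem_take
end

section
/- Assume U is monotone and the rows of P are sorted by strength: P i l ≥ P j l for all 1 ≤ i ≤ j ≤ m and all 1 ≤ l ≤ n. Let (X,Y,w) be a state with |X| = |Y| = k < T, let u be the (T−k)-th smallest element of {1,…,m}∖X, and let v ∈ {1,…,m}∖X with v > u (so v is not among the T−k smallest elements of {1,…,m}∖X). Then for every j ∈ {1,…,n}∖Y: P u j·V(X∪{u},Y∪{j},w+1) + (1−P u j)·V(X∪{u},Y∪{j},w) ≥ P v j·V(X∪{v},Y∪{j},w+1) + (1−P v j)·V(X∪{v},Y∪{j},w). In other words, in the one-round matrix game at state (X,Y,w), the row of the rank-(T−k) remaining player of Team 1 dominates the row of any remaining player that is not among the top T−k.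 -/
namespace RankDom

open Finset

variable {m n : ℕ}

/-! ### Counting, `kth` smallest element, and the top-`r` domination relation -/

/-- number of elements of `Z` that are `≤ i` -/
def cnt (Z : Finset (Fin m)) (i : Fin m) : ℕ := (Z.filter (fun x => x ≤ i)).card

lemma cnt_le_card (Z : Finset (Fin m)) (i : Fin m) : cnt Z i ≤ Z.card :=
  Finset.card_le_card (Finset.filter_subset _ _)

lemma cnt_mono (Z : Finset (Fin m)) {i j : Fin m} (h : i ≤ j) : cnt Z i ≤ cnt Z j := by
  apply Finset.card_le_card
  apply Finset.monotone_filter_right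
  intro x _ hx
  exact le_trans hx h

lemma cnt_erase {Z : Finset (Fin m)} {a : Fin m} (ha : a ∈ Z) (i : Fin m) :
    cnt (Z.erase a) i = if a ≤ i then cnt Z i - 1 else cnt Z i := by
  unfold cnt
  rw [Finset.filter_erase, Finset.card_erase_eq_ite]
  by_cases h : a ≤ i
  · simp [Finset.mem_filter, ha, h]
  · simp [Finset.mem_filter, h]

/-- Top-`r` domination: for every threshold, `Z` has at least as many elements below it
as `Z'` does (capped at `r`).  Equivalently, the `l`-th smallest element of `Z` is `≤`
the `l`-th smallest element of `Z'` for every `l < r`. -/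
def Cond (r : ℕ) (Z Z' : Finset (Fin m)) : Prop := ∀ i, min r (cnt Z' i) ≤ cnt Z i

lemma cond_refl (r : ℕ) (Z : Finset (Fin m)) : Cond r Z Z := fun _ => min_le_right _ _

lemma cond_trans {r : ℕ} {Z1 Z2 Z3 : Finset (Fin m)} (h12 : Cond r Z1 Z2)
    (h23 : Cond r Z2 Z3) : Cond r Z1 Z3 := by
  intro i
  have := h12 i
  have := h23 i
  omega

/-- the `(l+1)`-th smallest element of `Z` (`0`-based). -/
def kth (Z : Finset (Fin m)) (l : ℕ) (h : l < Z.card) : Fin m :=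
  Z.orderEmbOfFin rfl ⟨l, h⟩

lemma kth_mem (Z : Finset (Fin m)) (l : ℕ) (h : l < Z.card) : kth Z l h ∈ Z :=
  Finset.orderEmbOfFin_mem Z rfl _

lemma kth_congr {Z : Finset (Fin m)} {l l' : ℕ} (h : l = l') {hl : l < Z.card}
    {hl' : l' < Z.card} : kth Z l hl = kth Z l' hl' := by subst h; rfl

lemma cnt_kth (Z : Finset (Fin m)) (l : ℕ) (h : l < Z.card) :
    cnt Z (kth Z l h) = l + 1 := by
  have himg : Z.filter (fun x => x ≤ kth Z l h)
      = (Finset.univ.filter (fun i : Fin Z.card => (i : ℕ) ≤ l)).image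
          (Z.orderEmbOfFin rfl) := by
    ext x
    simp only [Finset.mem_filter, Finset.mem_image, Finset.mem_univ, true_and]
    constructor
    · rintro ⟨hxZ, hxle⟩
      have hx : x ∈ Set.range (Z.orderEmbOfFin rfl) := by
        rw [Finset.range_orderEmbOfFin]; exact hxZ
      obtain ⟨i, hi⟩ := hx
      refine ⟨i, ?_, hi⟩
      have h2 : Z.orderEmbOfFin rfl i ≤ Z.orderEmbOfFin rfl ⟨l, h⟩ := by
        rw [hi]; exact hxle
      have h3 : i ≤ (⟨l, h⟩ : Fin Z.card) := (Z.orderEmbOfFin rfl).le_iff_le.mp h2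
      exact h3
    · rintro ⟨i, hil, rfl⟩
      refine ⟨Finset.orderEmbOfFin_mem Z rfl i, ?_⟩
      exact (Z.orderEmbOfFin rfl).le_iff_le.mpr (show i ≤ ⟨l, h⟩ from hil)
  unfold cnt
  rw [himg, Finset.card_image_of_injective _ (Z.orderEmbOfFin rfl).injective]
  have h2 : Finset.univ.filter (fun i : Fin Z.card => (i : ℕ) ≤ l)
      = Finset.Iic (⟨l, h⟩ : Fin Z.card) := by
    ext i; simp [Fin.le_def]
  rw [h2, Fin.card_Iic]

lemma kth_le_of_card {Z : Finset (Fin m)} {l : ℕ} {h : l < Z.card} {x : Fin m}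
    (h' : l < cnt Z x) : kth Z l h ≤ x := by
  by_contra hc
  push_neg at hc
  have hsub : Z.filter (fun y => y ≤ x)
      ⊆ (Z.filter (fun y => y ≤ kth Z l h)).erase (kth Z l h) := by
    intro y hy
    rw [Finset.mem_filter] at hy
    rw [Finset.mem_erase, Finset.mem_filter]
    have hylt : y < kth Z l h := lt_of_le_of_lt hy.2 hc
    exact ⟨ne_of_lt hylt, hy.1, le_of_lt hylt⟩
  have hcard := Finset.card_le_card hsub
  have hmem : kth Z l h ∈ Z.filter (fun y => y ≤ kth Z l h) :=
    Finset.mem_filter.mpr ⟨kth_mem Z l h, le_refl _⟩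
  rw [Finset.card_erase_of_mem hmem] at hcard
  have h2 : (Z.filter (fun y => y ≤ kth Z l h)).card = l + 1 := cnt_kth Z l h
  unfold cnt at h'
  omega

lemma le_kth_of_card {Z : Finset (Fin m)} {l : ℕ} {h : l < Z.card} {x : Fin m}
    (hx : x ∈ Z) (h' : cnt Z x ≤ l + 1) : x ≤ kth Z l h := by
  by_contra hc
  push_neg at hc
  have hsub : Z.filter (fun y => y ≤ kth Z l h)
      ⊆ (Z.filter (fun y => y ≤ x)).erase x := by
    intro y hy
    rw [Finset.mem_filter] at hy
    rw [Finset.mem_erase, Finset.mem_filter]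
    have hylt : y < x := lt_of_le_of_lt hy.2 hc
    exact ⟨ne_of_lt hylt, hy.1, le_of_lt hylt⟩
  have hcard := Finset.card_le_card hsub
  have hmem : x ∈ Z.filter (fun y => y ≤ x) := Finset.mem_filter.mpr ⟨hx, le_refl _⟩
  rw [Finset.card_erase_of_mem hmem] at hcard
  have h2 : (Z.filter (fun y => y ≤ kth Z l h)).card = l + 1 := cnt_kth Z l h
  unfold cnt at h'
  omega

lemma cond_kth_le {r l : ℕ} {Z Z' : Finset (Fin m)} (hc : Cond (r + 1) Z Z')
    (hl : l ≤ r) (hZ : l < Z.card) (hZ' : l < Z'.card) :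
    kth Z l hZ ≤ kth Z' l hZ' := by
  apply kth_le_of_card
  have h1 := hc (kth Z' l hZ')
  rw [cnt_kth] at h1
  omega

lemma cond_erase {r l : ℕ} {Z Z' : Finset (Fin m)} (hc : Cond (r + 1) Z Z')
    (hl : l ≤ r) (hZ : l < Z.card) (hZ' : l < Z'.card) :
    Cond r (Z.erase (kth Z l hZ)) (Z'.erase (kth Z' l hZ')) := by
  intro i0
  have hkk := cond_kth_le hc hl hZ hZ'
  rw [cnt_erase (kth_mem Z l hZ), cnt_erase (kth_mem Z' l hZ')]
  have h4 := hc i0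
  have hck : cnt Z (kth Z l hZ) = l + 1 := cnt_kth Z l hZ
  have hck' : cnt Z' (kth Z' l hZ') = l + 1 := cnt_kth Z' l hZ'
  by_cases hb : kth Z' l hZ' ≤ i0
  · have ha : kth Z l hZ ≤ i0 := le_trans hkk hb
    have h1 : l + 1 ≤ cnt Z i0 := hck ▸ cnt_mono Z ha
    have h2 : l + 1 ≤ cnt Z' i0 := hck' ▸ cnt_mono Z' hb
    rw [if_pos ha, if_pos hb]
    omega
  · rw [if_neg hb]
    have h3 : cnt Z' i0 ≤ l := by
      by_contra h'
      push_neg at h'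
      exact hb (kth_le_of_card h')
    by_cases ha : kth Z l hZ ≤ i0
    · have h1 : l + 1 ≤ cnt Z i0 := hck ▸ cnt_mono Z ha
      rw [if_pos ha]
      omega
    · rw [if_neg ha]
      omega

lemma cond_erase_gt {r : ℕ} {Z' : Finset (Fin m)} (hZ' : r < Z'.card) {i : Fin m}
    (hi : i ∈ Z') (ht : kth Z' r hZ' ≤ i) :
    Cond r (Z'.erase (kth Z' r hZ')) (Z'.erase i) := by
  intro i0
  rw [cnt_erase (kth_mem Z' r hZ'), cnt_erase hi]
  have hck : cnt Z' (kth Z' r hZ') = r + 1 := cnt_kth Z' r hZ'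
  by_cases hii : i ≤ i0
  · have htt : kth Z' r hZ' ≤ i0 := le_trans ht hii
    have h1 : r + 1 ≤ cnt Z' i0 := hck ▸ cnt_mono Z' htt
    rw [if_pos htt, if_pos hii]
    omega
  · rw [if_neg hii]
    by_cases htt : kth Z' r hZ' ≤ i0
    · have h1 : r + 1 ≤ cnt Z' i0 := hck ▸ cnt_mono Z' htt
      rw [if_pos htt]
      omega
    · rw [if_neg htt]
      omega

lemma cnt_eq_rank_succ {Z' : Finset (Fin m)} {i : Fin m} (hi : i ∈ Z') :
    cnt Z' i = (Z'.filter (fun x => x < i)).card + 1 := by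
  have he : Z'.filter (fun x => x < i) = (Z'.filter (fun x => x ≤ i)).erase i := by
    ext y
    simp only [Finset.mem_erase, Finset.mem_filter]
    constructor
    · rintro ⟨hy, hlt⟩
      exact ⟨ne_of_lt hlt, hy, le_of_lt hlt⟩
    · rintro ⟨hne, hy, hle⟩
      exact ⟨hy, lt_of_le_of_ne hle hne⟩
  have hmem : i ∈ Z'.filter (fun x => x ≤ i) := Finset.mem_filter.mpr ⟨hi, le_refl i⟩
  have hpos : 0 < cnt Z' i := Finset.card_pos.mpr ⟨i, hmem⟩
  unfold cnt at *
  rw [he, Finset.card_erase_of_mem hmem]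
  omega

/-- transport map: sends `i` (of rank `ρ` in `Z'`) to the `min r ρ`-th smallest element
of `Z`. -/
noncomputable def phi (Z Z' : Finset (Fin m)) (r : ℕ) (h : r < Z.card) (i : Fin m) :
    Fin m :=
  kth Z (min r ((Z'.filter (fun x => x < i)).card))
    (Nat.lt_of_le_of_lt (Nat.min_le_left _ _) h)

lemma phi_mem (Z Z' : Finset (Fin m)) (r : ℕ) (h : r < Z.card) (i : Fin m) :
    phi Z Z' r h i ∈ Z := kth_mem _ _ _

lemma phi_spec {Z Z' : Finset (Fin m)} {r : ℕ} (h : r < Z.card)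
    (hZ' : r + 1 ≤ Z'.card) (hc : Cond (r + 1) Z Z') {i : Fin m} (hi : i ∈ Z') :
    phi Z Z' r h i ≤ i ∧ Cond r (Z.erase (phi Z Z' r h i)) (Z'.erase i) := by
  set ρ := (Z'.filter (fun x => x < i)).card with hρdef
  have hcnt : cnt Z' i = ρ + 1 := cnt_eq_rank_succ hi
  have hρcard : ρ < Z'.card := by
    have := cnt_le_card Z' i
    omega
  have hl : min r ρ ≤ r := min_le_left _ _
  have hlZ : min r ρ < Z.card := by omega
  have hlZ' : min r ρ < Z'.card := by omega
  have hk2 : kth Z' (min r ρ) hlZ' ≤ i := kth_le_of_card (by omega)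
  have hk1 : kth Z (min r ρ) hlZ ≤ kth Z' (min r ρ) hlZ' := cond_kth_le hc hl hlZ hlZ'
  constructor
  · exact le_trans hk1 hk2
  · by_cases hcase : ρ ≤ r
    · have hieq : kth Z' (min r ρ) hlZ' = i :=
        le_antisymm hk2 (le_kth_of_card hi (by omega))
      have hres := cond_erase hc hl hlZ hlZ'
      rw [hieq] at hres
      exact hres
    · have hmin : min r ρ = r := min_eq_left (by omega)
      have h1 := cond_erase hc hl hlZ hlZ'
      have hcongr : kth Z' (min r ρ) hlZ' = kth Z' r (by omega) :=
        kth_congr hmin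
      have h2 : Cond r (Z'.erase (kth Z' (min r ρ) hlZ')) (Z'.erase i) := by
        rw [hcongr]
        exact cond_erase_gt (by omega) hi (by rw [← hcongr]; exact hk2)
      exact cond_trans h1 h2

/-! ### Bounds on the utility over a window of rounds -/

/-- maximum utility achievable within `r` further rounds starting from `w` wins -/
noncomputable def Hi (U : ℕ → ℝ) (r w : ℕ) : ℝ :=
  (Finset.Icc w (w + r)).sup' (Finset.nonempty_Icc.mpr (Nat.le_add_right _ _)) U

/-- minimum utility achievable within `r` further rounds starting from `w` wins -/
noncomputable def Lo (U : ℕ → ℝ) (r w : ℕ) : ℝ :=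
  (Finset.Icc w (w + r)).inf' (Finset.nonempty_Icc.mpr (Nat.le_add_right _ _)) U

lemma Hi_zero (U : ℕ → ℝ) (w : ℕ) : Hi U 0 w = U w := by simp [Hi]

lemma Lo_zero (U : ℕ → ℝ) (w : ℕ) : Lo U 0 w = U w := by simp [Lo]

lemma Hi_succ₁ (U : ℕ → ℝ) (r w : ℕ) : Hi U r (w + 1) ≤ Hi U (r + 1) w := by
  apply Finset.sup'_le
  intro b hb
  apply Finset.le_sup'
  simp only [Finset.mem_Icc] at hb ⊢
  omega

lemma Hi_succ₀ (U : ℕ → ℝ) (r w : ℕ) : Hi U r w ≤ Hi U (r + 1) w := by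
  apply Finset.sup'_le
  intro b hb
  apply Finset.le_sup'
  simp only [Finset.mem_Icc] at hb ⊢
  omega

lemma Lo_succ₁ (U : ℕ → ℝ) (r w : ℕ) : Lo U (r + 1) w ≤ Lo U r (w + 1) := by
  apply Finset.le_inf'
  intro b hb
  apply Finset.inf'_le
  simp only [Finset.mem_Icc] at hb ⊢
  omega

lemma Lo_succ₀ (U : ℕ → ℝ) (r w : ℕ) : Lo U (r + 1) w ≤ Lo U r w := by
  apply Finset.le_inf'
  intro b hb
  apply Finset.inf'_le
  simp only [Finset.mem_Icc] at hb ⊢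
  omega

lemma U_mono {T : ℕ} {U : ℕ → ℝ} (hU : ∀ t < T, U t ≤ U (t + 1)) :
    ∀ a b : ℕ, a ≤ b → b ≤ T → U a ≤ U b := by
  intro a b
  induction b with
  | zero => intro hab _; interval_cases a; exact le_refl _
  | succ b ihb =>
    intro hab hbT
    rcases Nat.lt_or_ge a (b + 1) with h | h
    · exact le_trans (ihb (by omega) (by omega)) (hU b (by omega))
    · have : a = b + 1 := by omega
      subst this
      exact le_refl _

/-! ### Basic gval lemmas -/

section Game

variable (P : Fin m → Fin n → ℝ) (U : ℕ → ℝ)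

/-- the one-round payoff term when Team 1 plays `i` and Team 2 plays `j` -/
noncomputable def trm (r : ℕ) (X : Finset (Fin m)) (Y : Finset (Fin n)) (w : ℕ)
    (i : Fin m) (j : Fin n) : ℝ :=
  P i j * gval m n P U r (insert i X) (insert j Y) (w + 1) +
    (1 - P i j) * gval m n P U r (insert i X) (insert j Y) w

/-- expected one-round payoff of the mixed strategy `p` against `j` -/
noncomputable def inn (r : ℕ) (X : Finset (Fin m)) (Y : Finset (Fin n)) (w : ℕ)
    (p : Fin m → ℝ) (j : Fin n) : ℝ :=
  ∑ i, p i * trm P U r X Y w i j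

lemma gval_zero (X : Finset (Fin m)) (Y : Finset (Fin n)) (w : ℕ) :
    gval m n P U 0 X Y w = U w := rfl

lemma gval_succ (r : ℕ) (X : Finset (Fin m)) (Y : Finset (Fin n)) (w : ℕ) :
    gval m n P U (r + 1) X Y w
      = sSup {v : ℝ | ∃ p : Fin m → ℝ,
          (∀ i, 0 ≤ p i) ∧ (∀ i ∈ X, p i = 0) ∧ (∑ i, p i) = 1 ∧
          v = sInf {u : ℝ | ∃ j, j ∉ Y ∧ u = inn P U r X Y w p j}} := rfl

lemma exists_strat (X : Finset (Fin m)) (hX : (Xᶜ : Finset (Fin m)).Nonempty) :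
    ∃ p : Fin m → ℝ, (∀ i, 0 ≤ p i) ∧ (∀ i ∈ X, p i = 0) ∧ (∑ i, p i) = 1 := by
  refine ⟨fun i => if i ∈ Xᶜ then ((Xᶜ.card : ℝ))⁻¹ else 0, ?_, ?_, ?_⟩
  · intro i
    by_cases h : i ∈ Xᶜ
    · simp only [h, if_true]
      positivity
    · simp [h]
  · intro i hi
    simp [Finset.mem_compl, hi]
  · rw [Finset.sum_ite_mem, Finset.univ_inter, Finset.sum_const, nsmul_eq_mul]
    rw [mul_inv_cancel₀]
    exact_mod_cast Finset.card_ne_zero.mpr hX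

lemma inn_bounds (hP : ∀ i j, P i j ∈ Set.Icc (0 : ℝ) 1) {r : ℕ}
    (hind : ∀ X Y w, r ≤ (Xᶜ : Finset (Fin m)).card → r ≤ (Yᶜ : Finset (Fin n)).card →
      Lo U r w ≤ gval m n P U r X Y w ∧ gval m n P U r X Y w ≤ Hi U r w)
    {X : Finset (Fin m)} {Y : Finset (Fin n)} {w : ℕ}
    (hX : r < Xᶜ.card) (hY : r < Yᶜ.card)
    {p : Fin m → ℝ} (h0 : ∀ i, 0 ≤ p i) (hpX : ∀ i ∈ X, p i = 0)
    (hs : (∑ i, p i) = 1) {j : Fin n} (hj : j ∉ Y) :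
    Lo U (r + 1) w ≤ inn P U r X Y w p j ∧ inn P U r X Y w p j ≤ Hi U (r + 1) w := by
  have hterm : ∀ i ∈ (Xᶜ : Finset (Fin m)),
      Lo U (r + 1) w ≤ trm P U r X Y w i j ∧ trm P U r X Y w i j ≤ Hi U (r + 1) w := by
    intro i hi
    have hcard1 : r ≤ ((insert i X)ᶜ : Finset (Fin m)).card := by
      rw [Finset.compl_insert, Finset.card_erase_of_mem hi]; omega
    have hcard2 : r ≤ ((insert j Y)ᶜ : Finset (Fin n)).card := by
      rw [Finset.compl_insert, Finset.card_erase_of_mem (Finset.mem_compl.mpr hj)]; omega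
    obtain ⟨hA1, hA2⟩ := hind (insert i X) (insert j Y) (w + 1) hcard1 hcard2
    obtain ⟨hB1, hB2⟩ := hind (insert i X) (insert j Y) w hcard1 hcard2
    obtain ⟨hq0, hq1⟩ := hP i j
    have l1 := Lo_succ₁ U r w
    have l0 := Lo_succ₀ U r w
    have u1 := Hi_succ₁ U r w
    have u0 := Hi_succ₀ U r w
    unfold trm
    constructor
    · nlinarith [mul_le_mul_of_nonneg_left (le_trans l1 hA1) hq0,
        mul_le_mul_of_nonneg_left (le_trans l0 hB1) (by linarith : (0:ℝ) ≤ 1 - P i j)]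
    · nlinarith [mul_le_mul_of_nonneg_left (le_trans hA2 u1) hq0,
        mul_le_mul_of_nonneg_left (le_trans hB2 u0) (by linarith : (0:ℝ) ≤ 1 - P i j)]
  have hsum0 : ∀ g : Fin m → ℝ,
      ∑ i ∈ (Xᶜ : Finset (Fin m)), p i * g i = ∑ i, p i * g i := by
    intro g
    apply Finset.sum_subset (Finset.subset_univ _)
    intro x _ hx
    rw [hpX x (by simpa using hx), zero_mul]
  have hps : ∑ i ∈ (Xᶜ : Finset (Fin m)), p i = 1 := by
    rw [← hs]
    apply Finset.sum_subset (Finset.subset_univ _)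
    intro x _ hx
    exact hpX x (by simpa using hx)
  unfold inn
  rw [← hsum0 (fun i => trm P U r X Y w i j)]
  constructor
  · calc Lo U (r + 1) w = ∑ i ∈ (Xᶜ : Finset (Fin m)), p i * Lo U (r + 1) w := by
          rw [← Finset.sum_mul, hps, one_mul]
      _ ≤ ∑ i ∈ (Xᶜ : Finset (Fin m)), p i * trm P U r X Y w i j :=
          Finset.sum_le_sum (fun i hi => mul_le_mul_of_nonneg_left (hterm i hi).1 (h0 i))
  · calc ∑ i ∈ (Xᶜ : Finset (Fin m)), p i * trm P U r X Y w i j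
        ≤ ∑ i ∈ (Xᶜ : Finset (Fin m)), p i * Hi U (r + 1) w :=
          Finset.sum_le_sum (fun i hi => mul_le_mul_of_nonneg_left (hterm i hi).2 (h0 i))
      _ = Hi U (r + 1) w := by rw [← Finset.sum_mul, hps, one_mul]

lemma gval_bounds (hP : ∀ i j, P i j ∈ Set.Icc (0 : ℝ) 1) :
    ∀ r : ℕ, ∀ X : Finset (Fin m), ∀ Y : Finset (Fin n), ∀ w : ℕ,
      r ≤ Xᶜ.card → r ≤ Yᶜ.card →
      Lo U r w ≤ gval m n P U r X Y w ∧ gval m n P U r X Y w ≤ Hi U r w := by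
  intro r
  induction r with
  | zero =>
    intro X Y w _ _
    rw [gval_zero, Lo_zero, Hi_zero]
    exact ⟨le_refl _, le_refl _⟩
  | succ r ih =>
    intro X Y w hX hY
    have hX' : r < (Xᶜ : Finset (Fin m)).card := hX
    have hY' : r < (Yᶜ : Finset (Fin n)).card := hY
    obtain ⟨j0, hj0⟩ : ∃ j, j ∉ Y := by
      obtain ⟨j, hj⟩ := Finset.card_pos.mp
        (show 0 < (Yᶜ : Finset (Fin n)).card by omega)
      exact ⟨j, Finset.mem_compl.mp hj⟩
    obtain ⟨p0, hp00, hp0X, hp0s⟩ := exists_strat X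
      (Finset.card_pos.mp (show 0 < (Xᶜ : Finset (Fin m)).card by omega))
    rw [gval_succ]
    have hub : ∀ x ∈ {v : ℝ | ∃ p : Fin m → ℝ,
        (∀ i, 0 ≤ p i) ∧ (∀ i ∈ X, p i = 0) ∧ (∑ i, p i) = 1 ∧
        v = sInf {u : ℝ | ∃ j, j ∉ Y ∧ u = inn P U r X Y w p j}},
        x ≤ Hi U (r + 1) w := by
      rintro x ⟨p, h0, hpX, hs, rfl⟩
      have hbdd : BddBelow {u : ℝ | ∃ j, j ∉ Y ∧ u = inn P U r X Y w p j} := by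
        refine ⟨Lo U (r + 1) w, ?_⟩
        rintro b ⟨j, hj, rfl⟩
        exact (inn_bounds P U hP ih hX' hY' h0 hpX hs hj).1
      exact csInf_le_of_le hbdd ⟨j0, hj0, rfl⟩
        (inn_bounds P U hP ih hX' hY' h0 hpX hs hj0).2
    have hmem : sInf {u : ℝ | ∃ j, j ∉ Y ∧ u = inn P U r X Y w p0 j}
        ∈ {v : ℝ | ∃ p : Fin m → ℝ,
        (∀ i, 0 ≤ p i) ∧ (∀ i ∈ X, p i = 0) ∧ (∑ i, p i) = 1 ∧
        v = sInf {u : ℝ | ∃ j, j ∉ Y ∧ u = inn P U r X Y w p j}} :=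
      ⟨p0, hp00, hp0X, hp0s, rfl⟩
    constructor
    · refine le_trans ?_ (le_csSup ⟨Hi U (r + 1) w, hub⟩ hmem)
      refine le_csInf ⟨inn P U r X Y w p0 j0, j0, hj0, rfl⟩ ?_
      rintro b ⟨j, hj, rfl⟩
      exact (inn_bounds P U hP ih hX' hY' hp00 hp0X hp0s hj).1
    · exact csSup_le ⟨_, hmem⟩ hub

lemma gval_mono (hP : ∀ i j, P i j ∈ Set.Icc (0 : ℝ) 1)
    (hsorted : ∀ i j : Fin m, i ≤ j → ∀ l : Fin n, P j l ≤ P i l)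
    {T : ℕ} (hU : ∀ t < T, U t ≤ U (t + 1)) :
    ∀ r : ℕ, ∀ X X' : Finset (Fin m), ∀ Y : Finset (Fin n), ∀ w w' : ℕ,
      w' ≤ w → w + r ≤ T → r ≤ Xᶜ.card → r ≤ X'ᶜ.card → r ≤ Yᶜ.card →
      Cond r Xᶜ X'ᶜ →
      gval m n P U r X' Y w' ≤ gval m n P U r X Y w := by
  intro r
  induction r with
  | zero =>
    intro X X' Y w w' hww hwT _ _ _ _
    rw [gval_zero, gval_zero]
    exact U_mono hU w' w hww hwT
  | succ r ih =>
    intro X X' Y w w' hww hwT hXc hX'c hYc hc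
    have hZr : r < (Xᶜ : Finset (Fin m)).card := hXc
    have hbnd := gval_bounds P U hP r
    obtain ⟨j0, hj0⟩ : ∃ j, j ∉ Y := by
      obtain ⟨j, hj⟩ := Finset.card_pos.mp
        (show 0 < (Yᶜ : Finset (Fin n)).card by omega)
      exact ⟨j, Finset.mem_compl.mp hj⟩
    rw [gval_succ, gval_succ]
    have hbddS : ∀ x ∈ {v : ℝ | ∃ q : Fin m → ℝ,
        (∀ i, 0 ≤ q i) ∧ (∀ i ∈ X, q i = 0) ∧ (∑ i, q i) = 1 ∧
        v = sInf {u : ℝ | ∃ j, j ∉ Y ∧ u = inn P U r X Y w q j}},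
        x ≤ Hi U (r + 1) w := by
      rintro x ⟨q, hq0, hqX, hqs, rfl⟩
      have hbdd : BddBelow {u : ℝ | ∃ j, j ∉ Y ∧ u = inn P U r X Y w q j} := by
        refine ⟨Lo U (r + 1) w, ?_⟩
        rintro b ⟨j, hj, rfl⟩
        exact (inn_bounds P U hP hbnd hXc hYc hq0 hqX hqs hj).1
      exact csInf_le_of_le hbdd ⟨j0, hj0, rfl⟩
        (inn_bounds P U hP hbnd hXc hYc hq0 hqX hqs hj0).2
    have hne' : ∃ q : Fin m → ℝ, (∀ i, 0 ≤ q i) ∧ (∀ i ∈ X', q i = 0) ∧ (∑ i, q i) = 1 :=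
      exists_strat X' (Finset.card_pos.mp (show 0 < (X'ᶜ : Finset (Fin m)).card by omega))
    obtain ⟨q0, hq01, hq02, hq03⟩ := hne'
    refine csSup_le ⟨sInf {u : ℝ | ∃ j, j ∉ Y ∧ u = inn P U r X' Y w' q0 j},
      q0, hq01, hq02, hq03, rfl⟩ ?_
    rintro val ⟨p', h0', hpX', hs', rfl⟩
    set φ := phi Xᶜ X'ᶜ r hZr with hφ
    set p : Fin m → ℝ :=
      (fun x => ∑ i ∈ (X'ᶜ : Finset (Fin m)), if φ i = x then p' i else 0) with hp
    have hp0 : ∀ x, 0 ≤ p x := by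
      intro x
      rw [hp]
      apply Finset.sum_nonneg
      intro i _
      split_ifs
      · exact h0' i
      · exact le_refl 0
    have hpX : ∀ x ∈ X, p x = 0 := by
      intro x hx
      rw [hp]
      apply Finset.sum_eq_zero
      intro i _
      rw [if_neg]
      intro he
      have hm2 : φ i ∈ (Xᶜ : Finset (Fin m)) := phi_mem _ _ _ _ i
      rw [he] at hm2
      exact (Finset.mem_compl.mp hm2) hx
    have hsump' : ∑ i ∈ (X'ᶜ : Finset (Fin m)), p' i = 1 := by
      rw [← hs']
      apply Finset.sum_subset (Finset.subset_univ _)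
      intro x _ hx
      exact hpX' x (by simpa using hx)
    have hps : (∑ x, p x) = 1 := by
      rw [hp]
      calc ∑ x, ∑ i ∈ (X'ᶜ : Finset (Fin m)), (if φ i = x then p' i else 0)
          = ∑ i ∈ (X'ᶜ : Finset (Fin m)), ∑ x, (if φ i = x then p' i else 0) :=
            Finset.sum_comm
        _ = ∑ i ∈ (X'ᶜ : Finset (Fin m)), p' i := by
            apply Finset.sum_congr rfl
            intro i _
            rw [Finset.sum_ite_eq]
            simp
        _ = 1 := hsump'
    have hreg : ∀ j, inn P U r X Y w p j
        = ∑ i ∈ (X'ᶜ : Finset (Fin m)), p' i * trm P U r X Y w (φ i) j := by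
      intro j
      unfold inn
      rw [hp]
      calc ∑ x, (∑ i ∈ (X'ᶜ : Finset (Fin m)), if φ i = x then p' i else 0)
            * trm P U r X Y w x j
          = ∑ x, ∑ i ∈ (X'ᶜ : Finset (Fin m)),
              (if φ i = x then p' i * trm P U r X Y w x j else 0) := by
            apply Finset.sum_congr rfl
            intro x _
            rw [Finset.sum_mul]
            apply Finset.sum_congr rfl
            intro i _
            rw [ite_mul, zero_mul]
        _ = ∑ i ∈ (X'ᶜ : Finset (Fin m)), ∑ x,
              (if φ i = x then p' i * trm P U r X Y w x j else 0) := Finset.sum_comm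
        _ = ∑ i ∈ (X'ᶜ : Finset (Fin m)), p' i * trm P U r X Y w (φ i) j := by
            apply Finset.sum_congr rfl
            intro i _
            rw [Finset.sum_ite_eq]
            simp
    have htrm : ∀ i ∈ (X'ᶜ : Finset (Fin m)), ∀ j, j ∉ Y →
        trm P U r X' Y w' i j ≤ trm P U r X Y w (φ i) j := by
      intro i hi j hj
      obtain ⟨hφle, hcond⟩ := phi_spec hZr hX'c hc hi
      have hφZ : φ i ∈ (Xᶜ : Finset (Fin m)) := phi_mem _ _ _ _ i
      have hcX : r ≤ ((insert (φ i) X)ᶜ : Finset (Fin m)).card := by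
        rw [Finset.compl_insert, Finset.card_erase_of_mem hφZ]; omega
      have hcX' : r ≤ ((insert i X')ᶜ : Finset (Fin m)).card := by
        rw [Finset.compl_insert, Finset.card_erase_of_mem hi]; omega
      have hcY : r ≤ ((insert j Y)ᶜ : Finset (Fin n)).card := by
        rw [Finset.compl_insert, Finset.card_erase_of_mem (Finset.mem_compl.mpr hj)]; omega
      have hcond' : Cond r ((insert (φ i) X)ᶜ) ((insert i X')ᶜ) := by
        rw [Finset.compl_insert, Finset.compl_insert]
        exact hcond
      have hA := ih (insert (φ i) X) (insert i X') (insert j Y) (w + 1) (w' + 1)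
        (by omega) (by omega) hcX hcX' hcY hcond'
      have hB := ih (insert (φ i) X) (insert i X') (insert j Y) w w'
        hww (by omega) hcX hcX' hcY hcond'
      have hAB := ih (insert (φ i) X) (insert (φ i) X) (insert j Y) (w + 1) w
        (by omega) (by omega) hcX hcX hcY (cond_refl _ _)
      have hPle : P i j ≤ P (φ i) j := hsorted (φ i) i hφle j
      obtain ⟨ha0, ha1⟩ := hP i j
      obtain ⟨hb0, hb1⟩ := hP (φ i) j
      unfold trm
      nlinarith [mul_nonneg (sub_nonneg.mpr hPle) (sub_nonneg.mpr hAB),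
        mul_nonneg ha0 (sub_nonneg.mpr hA),
        mul_nonneg (by linarith : (0:ℝ) ≤ 1 - P i j) (sub_nonneg.mpr hB)]
    have hinnp' : ∀ j, j ∉ Y → inn P U r X' Y w' p' j ≤ inn P U r X Y w p j := by
      intro j hj
      rw [hreg j]
      have he : inn P U r X' Y w' p' j
          = ∑ i ∈ (X'ᶜ : Finset (Fin m)), p' i * trm P U r X' Y w' i j := by
        unfold inn
        symm
        apply Finset.sum_subset (Finset.subset_univ _)
        intro x _ hx
        rw [hpX' x (by simpa using hx), zero_mul]
      rw [he]
      apply Finset.sum_le_sum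
      intro i hi
      exact mul_le_mul_of_nonneg_left (htrm i hi j hj) (h0' i)
    have hbddP' : BddBelow {u : ℝ | ∃ j, j ∉ Y ∧ u = inn P U r X' Y w' p' j} := by
      refine ⟨Lo U (r + 1) w', ?_⟩
      rintro b ⟨j, hj, rfl⟩
      exact (inn_bounds P U hP hbnd hX'c hYc h0' hpX' hs' hj).1
    calc sInf {u : ℝ | ∃ j, j ∉ Y ∧ u = inn P U r X' Y w' p' j}
        ≤ sInf {u : ℝ | ∃ j, j ∉ Y ∧ u = inn P U r X Y w p j} := by
          refine le_csInf ⟨inn P U r X Y w p j0, j0, hj0, rfl⟩ ?_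
          rintro b ⟨j, hj, rfl⟩
          exact csInf_le_of_le hbddP' ⟨j, hj, rfl⟩ (hinnp' j hj)
      _ ≤ _ := le_csSup ⟨Hi U (r + 1) w, hbddS⟩ ⟨p, hp0, hpX, hps, rfl⟩


end Game

end RankDom

/-- Assume `U` is monotone and the rows of `P` are sorted by strength.
At a non-terminal state `(X, Y, w)` after `k < T` rounds, let `u` be the rank-`(T-k)`
remaining player of Team 1 (i.e. the `(T-k)`-th smallest element of `Xᶜ`) and let
`v ∈ Xᶜ` with `v > u` (so `v` is not among the top `T-k` remaining players).  Then in
the one-round matrix game at this state, the row of `u` dominates the row of `v`: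
for every remaining opponent `j`, the expected value of playing `u` against `j` is at
least that of playing `v` against `j`. -/
theorem rank_player_dominates (T m n : ℕ) (hT : 1 ≤ T) (hm : T ≤ m) (hn : T ≤ n)
    (P : Fin m → Fin n → ℝ) (hP : ∀ i j, P i j ∈ Set.Icc (0 : ℝ) 1)
    (U : ℕ → ℝ) (hU : ∀ t < T, U t ≤ U (t + 1))
    (hsorted : ∀ i j : Fin m, i ≤ j → ∀ l : Fin n, P j l ≤ P i l)
    (k : ℕ) (hk : k < T)
    (X : Finset (Fin m)) (Y : Finset (Fin n))
    (hX : X.card = k) (hY : Y.card = k)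
    (w : ℕ) (hw : w ≤ k)
    (u v : Fin m) (hu : u ∉ X)
    (huRank : (Xᶜ.filter (fun x => x ≤ u)).card = T - k)
    (hv : v ∉ X) (huv : u < v) :
    ∀ j : Fin n, j ∉ Y →
      P v j * gval m n P U (T - (k + 1)) (insert v X) (insert j Y) (w + 1) +
        (1 - P v j) * gval m n P U (T - (k + 1)) (insert v X) (insert j Y) w ≤
      P u j * gval m n P U (T - (k + 1)) (insert u X) (insert j Y) (w + 1) +
        (1 - P u j) * gval m n P U (T - (k + 1)) (insert u X) (insert j Y) w := by
  intro j hj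
  set r := T - (k + 1) with hr
  have hrk : k + 1 + r = T := by omega
  have hcm : (Xᶜ : Finset (Fin m)).card = m - k := by
    rw [Finset.card_compl, hX, Fintype.card_fin]
  have hcn : (Yᶜ : Finset (Fin n)).card = n - k := by
    rw [Finset.card_compl, hY, Fintype.card_fin]
  have huc : u ∈ (Xᶜ : Finset (Fin m)) := Finset.mem_compl.mpr hu
  have hvc : v ∈ (Xᶜ : Finset (Fin m)) := Finset.mem_compl.mpr hv
  have hcu : ((insert u X)ᶜ : Finset (Fin m)).card = m - k - 1 := by
    rw [Finset.compl_insert, Finset.card_erase_of_mem huc, hcm]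
  have hcv : ((insert v X)ᶜ : Finset (Fin m)).card = m - k - 1 := by
    rw [Finset.compl_insert, Finset.card_erase_of_mem hvc, hcm]
  have hcj : ((insert j Y)ᶜ : Finset (Fin n)).card = n - k - 1 := by
    rw [Finset.compl_insert, Finset.card_erase_of_mem (Finset.mem_compl.mpr hj), hcn]
  have hr1 : RankDom.cnt Xᶜ u = r + 1 := by
    show (Xᶜ.filter (fun x => x ≤ u)).card = r + 1
    rw [huRank]
    omega
  have hcond : RankDom.Cond r ((insert u X)ᶜ) ((insert v X)ᶜ) := by
    rw [Finset.compl_insert, Finset.compl_insert]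
    intro i0
    rw [RankDom.cnt_erase huc, RankDom.cnt_erase hvc]
    have hmono : u ≤ i0 → r + 1 ≤ RankDom.cnt Xᶜ i0 :=
      fun h => hr1 ▸ RankDom.cnt_mono _ h
    by_cases h2 : v ≤ i0
    · have h1 : u ≤ i0 := le_trans (le_of_lt huv) h2
      rw [if_pos h1, if_pos h2]
      have := hmono h1
      omega
    · rw [if_neg h2]
      by_cases h1 : u ≤ i0
      · rw [if_pos h1]
        have := hmono h1
        omega
      · rw [if_neg h1]
        omega
  have hmono := RankDom.gval_mono P U hP hsorted hU r
  have hAB : gval m n P U r (insert v X) (insert j Y) w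
      ≤ gval m n P U r (insert v X) (insert j Y) (w + 1) :=
    hmono (insert v X) (insert v X) (insert j Y) (w + 1) w (by omega) (by omega)
      (by rw [hcv]; omega) (by rw [hcv]; omega) (by rw [hcj]; omega)
      (RankDom.cond_refl _ _)
  have hA : gval m n P U r (insert v X) (insert j Y) (w + 1)
      ≤ gval m n P U r (insert u X) (insert j Y) (w + 1) :=
    hmono (insert u X) (insert v X) (insert j Y) (w + 1) (w + 1) le_rfl (by omega)
      (by rw [hcu]; omega) (by rw [hcv]; omega) (by rw [hcj]; omega) hcond
  have hB : gval m n P U r (insert v X) (insert j Y) w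
      ≤ gval m n P U r (insert u X) (insert j Y) w :=
    hmono (insert u X) (insert v X) (insert j Y) w w le_rfl (by omega)
      (by rw [hcu]; omega) (by rw [hcv]; omega) (by rw [hcj]; omega) hcond
  have hPle : P v j ≤ P u j := hsorted u v (le_of_lt huv) j
  obtain ⟨hu0, hu1⟩ := hP u j
  obtain ⟨hv0, hv1⟩ := hP v j
  nlinarith [mul_nonneg (sub_nonneg.mpr hPle) (sub_nonneg.mpr hAB),
    mul_nonneg hu0 (sub_nonneg.mpr hA),
    mul_nonneg (by linarith : (0:ℝ) ≤ 1 - P u j) (sub_nonneg.mpr hB)]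
end
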